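/- arXiv:1606.09382 — 8 statements merged into one kernel-verified Lean document; each statement's English description precedes it below -/
import Mathlib

section
/- Let a > 0 and let f : ℝ → ℝ be (n+1) times continuously differentiable on the interval [0, a] (with sup_{x∈[0,a]} |f^{(n+1)}(x)| < ∞). Then for every n = 0, 1, 2, …, the limit as ε → 0⁺ of [ ∫_ε^a f(x)/x^{n+1} dx − Σ_{k=0}^{n−1} (f^{(k)}(0)/(k! (n−k))) ε^{−(n−k)} + (f^{(n)}(0)/n!) · ln ε ] exists and is finite; that is, the Hadamard finite part of the divergent integral ∫_0^a f(x)/x^{n+1} dx is well defined. -/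
open MeasureTheory Filter Set

/-- For `a > 0` and `f` that is `(n+1)` times continuously differentiable on
`[0, a]` with bounded `(n+1)`-th derivative, the Hadamard finite part of the divergent
integral `∫_0^a f(x)/x^{n+1} dx` is well defined, i.e. the limit as `ε → 0⁺` of
`∫_ε^a f(x)/x^{n+1} dx − Σ_{k<n} f^{(k)}(0)/(k!(n−k)) ε^{k−n} + (f^{(n)}(0)/n!) ln ε`
exists and is finite. -/
theorem finite_part_pole_exists (a : ℝ) (ha : 0 < a) (n : ℕ) (f : ℝ → ℝ)
    (hf : ContDiffOn ℝ (n + 1) f (Icc 0 a))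
    (M : ℝ)
    (hM : ∀ x ∈ Icc 0 a, |iteratedDerivWithin (n + 1) f (Icc 0 a) x| ≤ M) :
    ∃ L : ℝ, Tendsto (fun ε : ℝ =>
        (∫ x in ε..a, f x / x ^ (n + 1))
        - (∑ k ∈ Finset.range n,
            iteratedDerivWithin k f (Icc 0 a) 0 /
              ((k.factorial : ℝ) * ((n : ℝ) - k) * ε ^ (n - k)))
        + iteratedDerivWithin n f (Icc 0 a) 0 / (n.factorial : ℝ) * Real.log ε)
      (nhdsWithin 0 (Ioi 0)) (nhds L) := by
  set s : Set ℝ := Icc 0 a with hs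
  set d : ℕ → ℝ := fun k => iteratedDerivWithin k f s 0 with hd
  set h : ℝ → ℝ := fun x => (f x - taylorWithinEval f n s 0 x) / x ^ (n + 1) with hh
  -- Taylor bound
  have htb : ∀ x ∈ Ioc (0:ℝ) a, |h x| ≤ M / n.factorial := by
    intro x hx
    have hxs : x ∈ s := Ioc_subset_Icc_self hx
    have hb := taylor_mean_remainder_bound ha.le hf hxs (fun y hy => hM y hy)
    rw [Real.norm_eq_abs] at hb
    have hxp : (0:ℝ) < x ^ (n+1) := pow_pos hx.1 _
    rw [hh, abs_div, abs_of_pos hxp, div_le_iff₀ hxp]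
    calc |f x - taylorWithinEval f n s 0 x| ≤ M * (x - 0) ^ (n+1) / n.factorial := hb
      _ = M / n.factorial * x ^ (n+1) := by ring
  -- continuity of h on Ioc 0 a
  have hT : Continuous fun x => taylorWithinEval f n s 0 x := by
    simp_rw [taylor_within_apply]
    exact continuous_finset_sum _ fun k _ => (continuous_const.mul ((continuous_id.sub
      continuous_const).pow k)).smul continuous_const
  have hIoc : Ioc (0:ℝ) a ⊆ s := Ioc_subset_Icc_self
  have hhc : ContinuousOn h (Ioc 0 a) := by
    apply ContinuousOn.div ((hf.continuousOn.mono hIoc).sub hT.continuousOn)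
      (continuousOn_pow _)
    exact fun x hx => pow_ne_zero _ (ne_of_gt hx.1)
  -- integrability of h on Ioc 0 a
  have hhi : IntegrableOn h (Ioc 0 a) volume := by
    refine ⟨(hhc.aestronglyMeasurable measurableSet_Ioc), ?_⟩
    apply HasFiniteIntegral.restrict_of_bounded (C := M / n.factorial)
      (measure_Ioc_lt_top)
    exact (ae_restrict_iff' measurableSet_Ioc).2 (ae_of_all _ fun x hx => htb x hx)
  -- the tail integral tends to 0
  have htail : Tendsto (fun ε : ℝ => ∫ x in Ioc 0 ε, h x) (nhdsWithin 0 (Ioi 0)) (nhds 0) := by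
    have hg : Tendsto (fun ε : ℝ => M / n.factorial * ε) (nhdsWithin 0 (Ioi 0)) (nhds 0) := by
      have h1 : Tendsto (fun ε : ℝ => M / n.factorial * ε) (nhds 0) (nhds (M / n.factorial * 0)) :=
        (continuous_const.mul continuous_id).tendsto 0
      rw [mul_zero] at h1
      exact h1.mono_left nhdsWithin_le_nhds
    apply squeeze_zero_norm' _ hg
    filter_upwards [Ioo_mem_nhdsGT_of_mem (by exact ⟨le_refl 0, ha⟩ : (0:ℝ) ∈ Ico 0 a)]
      with ε hε
    have hb : ‖∫ x in Ioc 0 ε, h x‖ ≤ (M / n.factorial) * (volume (Ioc (0:ℝ) ε)).toReal := by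
      apply norm_setIntegral_le_of_norm_le_const measure_Ioc_lt_top
      intro x hx
      rw [Real.norm_eq_abs]
      exact htb x ⟨hx.1, hx.2.trans hε.2.le⟩
    rwa [Real.volume_Ioc, sub_zero, ENNReal.toReal_ofReal hε.1.le] at hb
  -- the candidate limit
  refine ⟨(∫ x in Ioc 0 a, h x)
    + ∑ k ∈ Finset.range n, d k / k.factorial * a ^ ((k:ℤ) - n) / ((k:ℝ) - n)
    + d n / n.factorial * Real.log a, ?_⟩
  have key : ∀ ε ∈ Ioo (0:ℝ) a,
      ((∫ x in ε..a, f x / x ^ (n + 1))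
        - (∑ k ∈ Finset.range n,
            iteratedDerivWithin k f (Icc 0 a) 0 /
              ((k.factorial : ℝ) * ((n : ℝ) - k) * ε ^ (n - k)))
        + iteratedDerivWithin n f (Icc 0 a) 0 / (n.factorial : ℝ) * Real.log ε)
      = ((∫ x in Ioc 0 a, h x)
        + ∑ k ∈ Finset.range n, d k / k.factorial * a ^ ((k:ℤ) - n) / ((k:ℝ) - n)
        + d n / n.factorial * Real.log a) - ∫ x in Ioc 0 ε, h x := by
    rintro ε ⟨hε0, hεa⟩
    have hIccsub : Icc ε a ⊆ Ioc 0 a := fun x hx => ⟨lt_of_lt_of_le hε0 hx.1, hx.2⟩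
    have huIcc : uIcc ε a = Icc ε a := uIcc_of_le hεa.le
    have h0uIcc : (0:ℝ) ∉ uIcc ε a := notMem_uIcc_of_lt hε0 ha
    -- interval integrabilities
    have hI1 : IntervalIntegrable h volume ε a := by
      apply ContinuousOn.intervalIntegrable
      rw [huIcc]; exact hhc.mono hIccsub
    have hI2 : ∀ k : ℕ, IntervalIntegrable (fun x => x ^ ((k:ℤ) - (n+1))) volume ε a :=
      fun k => intervalIntegral.intervalIntegrable_zpow (Or.inr h0uIcc)
    -- the integrand decomposition
    have hA : (∫ x in ε..a, f x / x ^ (n+1))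
        = (∫ x in ε..a, h x)
          + ∑ k ∈ Finset.range (n+1), d k / k.factorial * ∫ x in ε..a, x ^ ((k:ℤ) - (n+1)) := by
      simp_rw [← intervalIntegral.integral_const_mul]
      rw [← intervalIntegral.integral_finset_sum (μ := volume)
        (f := fun k x => d k / k.factorial * x ^ ((k:ℤ) - (n+1)))
        (fun k _ => (hI2 k).const_mul _)]
      have hIsum : IntervalIntegrable
          (fun x => ∑ k ∈ Finset.range (n+1), d k / k.factorial * x ^ ((k:ℤ) - (n+1)))
          volume ε a := by
        apply ContinuousOn.intervalIntegrable
        apply continuousOn_finset_sum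
        intro k _
        exact continuousOn_const.mul (continuousOn_id.zpow₀ _
          (fun x hx => Or.inl (ne_of_mem_of_not_mem hx h0uIcc)))
      rw [← intervalIntegral.integral_add hI1 hIsum]
      apply intervalIntegral.integral_congr
      intro x hx
      rw [huIcc] at hx
      have hx0 : (0:ℝ) < x := lt_of_lt_of_le hε0 hx.1
      have hxne : x ≠ 0 := hx0.ne'
      have hz : ∀ k : ℕ, x ^ ((k:ℤ) - (n+1)) = x ^ k / x ^ (n+1) := by
        intro k
        rw [← zpow_natCast x k, ← zpow_natCast x (n+1), ← zpow_sub₀ hxne]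
        norm_num
      simp only [hh, taylor_within_apply, smul_eq_mul, sub_zero, hz]
      rw [sub_div, Finset.sum_div]
      have hterm : ∀ k ∈ Finset.range (n+1),
          d k / k.factorial * (x ^ k / x ^ (n+1))
            = ((k.factorial : ℝ)⁻¹ * x ^ k * iteratedDerivWithin k f s 0) / x ^ (n+1) := by
        intro k _
        rw [hd]; ring
      rw [Finset.sum_congr rfl hterm]
      ring
    -- evaluate the elementary integrals
    have hEn : ∫ x in ε..a, x ^ ((n:ℤ) - (n+1)) = Real.log a - Real.log ε := by
      have h1 : ((n:ℤ) - (n+1)) = -1 := by ring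
      rw [h1]
      simp_rw [zpow_neg_one]
      rw [integral_inv_of_pos hε0 ha, Real.log_div ha.ne' hε0.ne']
    have hEk : ∀ k, k < n → (∫ x in ε..a, x ^ ((k:ℤ) - (n+1)))
        = (a ^ ((k:ℤ) - n) - ε ^ ((k:ℤ) - n)) / ((k:ℝ) - n) := by
      intro k hk
      rw [integral_zpow (Or.inr ⟨by omega, h0uIcc⟩)]
      have h1 : (k:ℤ) - (n+1) + 1 = (k:ℤ) - n := by ring
      rw [h1]
      push_cast
      ring
    -- split the integral of h
    have hhsplit : (∫ x in ε..a, h x) = (∫ x in Ioc 0 a, h x) - ∫ x in Ioc 0 ε, h x := by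
      rw [intervalIntegral.integral_of_le hεa.le, eq_sub_iff_add_eq, add_comm,
        ← setIntegral_union (Ioc_disjoint_Ioc_of_le le_rfl) measurableSet_Ioc
          (hhi.mono_set (Ioc_subset_Ioc_right hεa.le))
          (hhi.mono_set (Ioc_subset_Ioc_left hε0.le)),
        Ioc_union_Ioc_eq_Ioc hε0.le hεa.le]
    rw [hA, Finset.sum_range_succ, hEn, hhsplit,
      Finset.sum_congr rfl (fun k hk => by rw [hEk k (Finset.mem_range.1 hk)])]
    simp only [hd, hs]
    have hS : (∑ k ∈ Finset.range n, iteratedDerivWithin k f (Icc 0 a) 0 / k.factorial *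
          ((a ^ ((k:ℤ) - n) - ε ^ ((k:ℤ) - n)) / ((k:ℝ) - n)))
        - (∑ k ∈ Finset.range n, iteratedDerivWithin k f (Icc 0 a) 0 /
            ((k.factorial : ℝ) * ((n : ℝ) - k) * ε ^ (n - k)))
        = ∑ k ∈ Finset.range n,
            iteratedDerivWithin k f (Icc 0 a) 0 / k.factorial * a ^ ((k:ℤ) - n) / ((k:ℝ) - n) := by
      rw [← Finset.sum_sub_distrib]
      apply Finset.sum_congr rfl
      intro k hk
      have hk' : k < n := Finset.mem_range.1 hk
      have hz : ε ^ ((k:ℤ) - n) = (ε ^ (n - k))⁻¹ := by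
        rw [← zpow_natCast ε (n - k), ← zpow_neg]
        congr 1
        have : ((n - k : ℕ) : ℤ) = (n : ℤ) - k := by omega
        rw [this]; ring
      have hnk : ((n:ℝ) - k) ≠ 0 := sub_ne_zero.2 (by exact_mod_cast hk'.ne')
      have hkn : ((k:ℝ) - n) ≠ 0 := sub_ne_zero.2 (by exact_mod_cast hk'.ne)
      have hεp : ε ^ (n - k) ≠ 0 := pow_ne_zero _ hε0.ne'
      have hfac : (k.factorial : ℝ) ≠ 0 := Nat.cast_ne_zero.2 k.factorial_ne_zero
      rw [hz]
      field_simp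
      ring
    linear_combination hS
  have : Tendsto (fun ε : ℝ => ((∫ x in Ioc 0 a, h x)
      + ∑ k ∈ Finset.range n, d k / k.factorial * a ^ ((k:ℤ) - n) / ((k:ℝ) - n)
      + d n / n.factorial * Real.log a) - ∫ x in Ioc 0 ε, h x)
      (nhdsWithin 0 (Ioi 0)) (nhds (((∫ x in Ioc 0 a, h x)
      + ∑ k ∈ Finset.range n, d k / k.factorial * a ^ ((k:ℤ) - n) / ((k:ℝ) - n)
      + d n / n.factorial * Real.log a) - 0)) := tendsto_const_nhds.sub htail
  rw [sub_zero] at this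
  refine this.congr' ?_
  filter_upwards [Ioo_mem_nhdsGT_of_mem (by exact ⟨le_refl 0, ha⟩ : (0:ℝ) ∈ Ico 0 a)]
    with ε hε
  exact (key ε hε).symm
end

section
/- Let a > 0, m ≥ 1 an integer, 0 < ν < 1, and let f : ℝ → ℝ be m times continuously differentiable on [0, a] (with sup_{x∈[0,a]} |f^{(m)}(x)| < ∞). Then the limit as ε → 0⁺ of [ ∫_ε^a f(x)/x^{m+ν} dx − Σ_{j=0}^{m−1} (f^{(j)}(0)/(j! (m+ν−j−1))) ε^{−(m+ν−j−1)} ] exists and is finite; that is, the Hadamard finite part of the divergent integral ∫_0^a f(x)/x^{m+ν} dx is well defined. -/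
set_option maxHeartbeats 1000000

open MeasureTheory Filter Set

/-- For `a > 0`, an integer `m ≥ 1`, `0 < ν < 1`, and `f` that is `m` times
continuously differentiable on `[0, a]` with bounded `m`-th derivative, the Hadamard finite
part of the divergent integral `∫_0^a f(x)/x^{m+ν} dx` is well defined, i.e. the limit as
`ε → 0⁺` of `∫_ε^a f(x)/x^{m+ν} dx − Σ_{j<m} f^{(j)}(0)/(j!(m+ν−j−1)) ε^{−(m+ν−j−1)}`
exists and is finite. -/
theorem finite_part_branch_exists (a : ℝ) (ha : 0 < a) (m : ℕ) (hm : 1 ≤ m)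
    (ν : ℝ) (hν0 : 0 < ν) (hν1 : ν < 1) (f : ℝ → ℝ)
    (hf : ContDiffOn ℝ m f (Icc 0 a))
    (M : ℝ)
    (hM : ∀ x ∈ Icc 0 a, |iteratedDerivWithin m f (Icc 0 a) x| ≤ M) :
    ∃ L : ℝ, Tendsto (fun ε : ℝ =>
        (∫ x in ε..a, f x / x ^ ((m : ℝ) + ν))
        - (∑ j ∈ Finset.range m,
            iteratedDerivWithin j f (Icc 0 a) 0 /
                ((j.factorial : ℝ) * ((m : ℝ) + ν - j - 1)) *
              ε ^ (-((m : ℝ) + ν - j - 1))))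
      (nhdsWithin 0 (Ioi 0)) (nhds L) := by
  obtain ⟨n, rfl⟩ : ∃ n, m = n + 1 := ⟨m - 1, (Nat.succ_pred_eq_of_pos hm).symm⟩
  set ρ : ℝ := ((n + 1 : ℕ) : ℝ) + ν with hρ
  set c : ℕ → ℝ := fun j => iteratedDerivWithin j f (Icc 0 a) 0 with hc
  set P : ℝ → ℝ := fun x => ∑ j ∈ Finset.range (n+1), c j / (j.factorial : ℝ) * x ^ j with hP
  set g : ℝ → ℝ := fun x => (f x - P x) / x ^ ρ with hg
  have hρpos : 0 < ρ := by
    rw [hρ]; positivity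
  have hαpos : ∀ j ∈ Finset.range (n+1), 0 < ρ - j - 1 := by
    intro j hj
    rw [Finset.mem_range] at hj
    have h1 : (j : ℝ) + 1 ≤ ((n + 1 : ℕ) : ℝ) := by exact_mod_cast Nat.succ_le_of_lt hj
    rw [hρ]; linarith
  -- Taylor remainder bound
  have hTaylor : ∀ x ∈ Icc (0:ℝ) a, |f x - P x| ≤ M * x ^ (n+1) / n.factorial := by
    intro x hx
    have h2 := taylor_mean_remainder_bound (f := f) (n := n) ha.le hf hx
      (fun y hy => hM y hy)
    rw [taylor_within_apply] at h2
    have hPx : (∑ k ∈ Finset.range (n+1),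
        (((k.factorial : ℝ))⁻¹ * (x - 0) ^ k) • iteratedDerivWithin k f (Icc 0 a) 0) = P x := by
      rw [hP]
      refine Finset.sum_congr rfl fun j hj => ?_
      simp only [smul_eq_mul, sub_zero, hc]
      ring
    rw [hPx] at h2
    simpa using h2
  -- continuity of f - P on Icc 0 a
  have hfc : ContinuousOn f (Icc 0 a) := hf.continuousOn
  have hPc : Continuous P := by
    apply continuous_finset_sum
    intro j _
    exact continuous_const.mul (continuous_pow j)
  have hRc : ContinuousOn (fun x => f x - P x) (Icc 0 a) := hfc.sub hPc.continuousOn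
  -- integrability of g on Ioc 0 a
  have hgmeas : AEStronglyMeasurable g (volume.restrict (Ioc 0 a)) := by
    have : ContinuousOn g (Ioc 0 a) := by
      apply ContinuousOn.div (hRc.mono Ioc_subset_Icc_self)
      · exact fun x hx =>
          (Real.continuousAt_rpow_const x _ (Or.inl (ne_of_gt hx.1))).continuousWithinAt
      · intro x hx
        exact ne_of_gt (Real.rpow_pos_of_pos hx.1 _)
    exact this.aestronglyMeasurable measurableSet_Ioc
  have hdom : IntegrableOn (fun x : ℝ => M / n.factorial * x ^ (-ν)) (Ioc 0 a) := by
    have : IntervalIntegrable (fun x : ℝ => x ^ (-ν)) volume 0 a := by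
      apply intervalIntegral.intervalIntegrable_rpow'
      linarith
    rw [intervalIntegrable_iff_integrableOn_Ioc_of_le ha.le] at this
    exact this.const_mul _
  have hgint : IntegrableOn g (Ioc 0 a) := by
    refine Integrable.mono' hdom hgmeas ?_
    refine (ae_restrict_iff' measurableSet_Ioc).2 (Filter.Eventually.of_forall fun x hx => ?_)
    have hx0 : 0 < x := hx.1
    have hxpow : (0:ℝ) < x ^ ρ := Real.rpow_pos_of_pos hx0 _
    rw [hg, Real.norm_eq_abs, abs_div, abs_of_pos hxpow, div_le_iff₀ hxpow]
    have h1 : |f x - P x| ≤ M * x ^ (n+1) / n.factorial :=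
      hTaylor x ⟨hx0.le, hx.2⟩
    refine h1.trans (le_of_eq ?_)
    have hxρ : x ^ ρ = x ^ (n+1 : ℕ) * x ^ ν := by
      rw [hρ, ← Real.rpow_natCast x (n+1), ← Real.rpow_add hx0]
    rw [hxρ, Real.rpow_neg hx0.le]
    have hxν : x ^ ν ≠ 0 := ne_of_gt (Real.rpow_pos_of_pos hx0 _)
    field_simp
  -- the constant
  set C₀ : ℝ := -∑ j ∈ Finset.range (n+1),
      c j / ((j.factorial : ℝ) * (ρ - j - 1)) * a ^ (-(ρ - j - 1)) with hC₀
  refine ⟨C₀ + ∫ x in (0:ℝ)..a, g x, ?_⟩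
  -- limit of the remainder integral
  have hcont : Tendsto (fun ε => ∫ x in ε..a, g x) (nhdsWithin 0 (Ioi 0))
      (nhds (∫ x in (0:ℝ)..a, g x)) := by
    have huIcc : uIcc (0:ℝ) a = Icc 0 a := uIcc_of_le ha.le
    have h1 : ContinuousOn (fun ε => ∫ x in ε..a, g x) (Icc 0 a) := by
      have h0 : IntegrableOn g (uIcc 0 a) := by
        rw [huIcc]
        exact (integrableOn_Icc_iff_integrableOn_Ioc).2 hgint
      have := intervalIntegral.continuousOn_primitive_interval_left
        (f := g) (a := (0:ℝ)) (b := a) (μ := volume) h0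
      rwa [huIcc] at this
    have h2 := (h1 0 (left_mem_Icc.2 ha.le)).tendsto
    have h3 : nhdsWithin (0:ℝ) (Ioi 0) ≤ nhdsWithin 0 (Icc 0 a) := by
      rw [← nhdsWithin_Ioc_eq_nhdsGT ha]
      exact nhdsWithin_mono _ Ioc_subset_Icc_self
    exact h2.mono_left h3
  have hmain : Tendsto (fun ε => C₀ + ∫ x in ε..a, g x) (nhdsWithin 0 (Ioi 0))
      (nhds (C₀ + ∫ x in (0:ℝ)..a, g x)) := tendsto_const_nhds.add hcont
  refine Tendsto.congr' ?_ hmain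
  filter_upwards [Ioo_mem_nhdsGT ha] with ε hε
  -- now ε ∈ Ioo 0 a; compute
  have hε0 : 0 < ε := hε.1
  have hεa : ε ≤ a := hε.2.le
  have h0uIcc : (0:ℝ) ∉ uIcc ε a := by
    rw [uIcc_of_le hεa]
    intro h
    exact absurd h.1 (not_le.2 hε0)
  -- interval integrability pieces
  have hrint : ∀ j ∈ Finset.range (n+1), IntervalIntegrable
      (fun x : ℝ => c j / (j.factorial : ℝ) * x ^ ((j:ℝ) - ρ)) volume ε a := by
    intro j _
    exact (intervalIntegral.intervalIntegrable_rpow (Or.inr h0uIcc)).const_mul _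
  have hsumint : IntervalIntegrable
      (fun x : ℝ => ∑ j ∈ Finset.range (n+1),
        c j / (j.factorial : ℝ) * x ^ ((j:ℝ) - ρ)) volume ε a := by
    have h2 := IntervalIntegrable.sum (Finset.range (n+1))
      (f := fun j => fun x : ℝ => c j / (j.factorial : ℝ) * x ^ ((j:ℝ) - ρ)) hrint
    have h3 : (∑ j ∈ Finset.range (n+1),
        fun x : ℝ => c j / (j.factorial : ℝ) * x ^ ((j:ℝ) - ρ))
        = fun x : ℝ => ∑ j ∈ Finset.range (n+1),
            c j / (j.factorial : ℝ) * x ^ ((j:ℝ) - ρ) := by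
      ext x; simp [Finset.sum_apply]
    rwa [h3] at h2
  have hgint' : IntervalIntegrable g volume ε a := by
    rw [intervalIntegrable_iff_integrableOn_Ioc_of_le hεa]
    exact hgint.mono_set (Ioc_subset_Ioc hε0.le le_rfl)
  -- decompose the integrand
  have hsplit : (∫ x in ε..a, f x / x ^ ρ)
      = (∫ x in ε..a, (∑ j ∈ Finset.range (n+1),
          c j / (j.factorial : ℝ) * x ^ ((j:ℝ) - ρ)) + g x) := by
    apply intervalIntegral.integral_congr
    intro x hx
    rw [uIcc_of_le hεa] at hx
    have hx0 : 0 < x := lt_of_lt_of_le hε0 hx.1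
    dsimp only
    have hterm : ∀ j ∈ Finset.range (n+1),
        c j / (j.factorial : ℝ) * x ^ ((j:ℝ) - ρ)
        = (c j / (j.factorial : ℝ) * x ^ j) / x ^ ρ := by
      intro j _
      rw [Real.rpow_sub hx0, Real.rpow_natCast]
      ring
    rw [Finset.sum_congr rfl hterm, ← Finset.sum_div, hg]
    show f x / _ = _ / _ + _ / _
    rw [← add_div]
    congr 1
    simp [hP]
  rw [hsplit, intervalIntegral.integral_add hsumint hgint',
    intervalIntegral.integral_finset_sum hrint]
  -- compute each power integral
  have hpow : ∀ j ∈ Finset.range (n+1),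
      (∫ x in ε..a, c j / (j.factorial : ℝ) * x ^ ((j:ℝ) - ρ))
      = c j / (j.factorial : ℝ) *
        ((a ^ (-(ρ - j - 1)) - ε ^ (-(ρ - j - 1))) / (-(ρ - j - 1))) := by
    intro j hj
    rw [intervalIntegral.integral_const_mul]
    have hα := hαpos j hj
    have hne : (j:ℝ) - ρ ≠ -1 := by
      intro h
      have : ρ - (j:ℝ) - 1 = 0 := by linarith
      linarith
    rw [integral_rpow (Or.inr ⟨hne, h0uIcc⟩)]
    have he : (j:ℝ) - ρ + 1 = -(ρ - (j:ℝ) - 1) := by ring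
    rw [he]
  rw [Finset.sum_congr rfl hpow]
  -- final algebra
  have key : (∑ j ∈ Finset.range (n+1), c j / (j.factorial : ℝ) *
        ((a ^ (-(ρ - j - 1)) - ε ^ (-(ρ - j - 1))) / (-(ρ - j - 1))))
      - (∑ j ∈ Finset.range (n+1),
          iteratedDerivWithin j f (Icc 0 a) 0 / ((j.factorial : ℝ) * (ρ - j - 1))
            * ε ^ (-(ρ - j - 1))) = C₀ := by
    rw [hC₀, ← Finset.sum_sub_distrib, ← Finset.sum_neg_distrib]
    refine Finset.sum_congr rfl fun j hj => ?_
    have hcj : iteratedDerivWithin j f (Icc 0 a) 0 = c j := rfl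
    rw [hcj]
    have hα := hαpos j hj
    obtain ⟨α, hαeq⟩ : ∃ α : ℝ, α = ρ - (j:ℝ) - 1 := ⟨_, rfl⟩
    rw [← hαeq]
    have hαne : α ≠ 0 := hαeq ▸ ne_of_gt hα
    have hfac : ((j.factorial : ℝ)) ≠ 0 := Nat.cast_ne_zero.2 j.factorial_ne_zero
    field_simp
    ring
  linarith [key]
end

section
/- Let a > 0 and let f : ℂ → ℂ be analytic on an open set containing the closed disk {z : |z| ≤ a}. Then for every n = 0, 1, 2, …, the finite part integral satisfies ⨍_0^a f(x)/x^{n+1} dx = (1/(2πi)) ∫_0^{2π} f(a e^{iθ}) (ln a + iθ − iπ) (a e^{iθ})^{−(n+1)} · i a e^{iθ} dθ, i.e. the finite part equals the contour integral (1/(2πi)) ∫_C f(z) (log z − iπ) z^{−(n+1)} dz taken over the circle of radius a about the origin traversed counterclockwise from a back to a, with the branch of log z whose cut is the positive real axis (so log(a e^{iθ}) = ln a + iθ for 0 < θ < 2π). -/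
open MeasureTheory Filter Set

section FPaux
open Complex intervalIntegral

-- K for m ≠ 0
lemma FPaux_Km (a : ℝ) (m : ℤ) (hm : m ≠ 0) :
    (∫ θ in (0:ℝ)..(2*Real.pi), Complex.exp (m * θ * Complex.I) *
      ((Real.log a : ℂ) + θ * Complex.I - Real.pi * Complex.I))
      = 2 * Real.pi / m := by
  set d : ℂ := m * Complex.I with hd
  have hd0 : d ≠ 0 := by
    simp [hd, Complex.ext_iff]
    exact_mod_cast hm
  set L : ℝ → ℂ := fun θ => (Real.log a : ℂ) + θ * Complex.I - Real.pi * Complex.I with hL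
  have hderiv : ∀ θ : ℝ, HasDerivAt (fun θ : ℝ => Complex.exp (d * θ) * ((L θ - Complex.I / d) / d))
      (Complex.exp (d * θ) * L θ) θ := by
    intro θ
    have h1 : HasDerivAt (fun θ : ℝ => Complex.exp (d * θ)) (d * Complex.exp (d * θ)) θ := by
      simpa [mul_comm] using ((Complex.ofRealCLM.hasDerivAt (x := θ)).const_mul d).cexp
    have h2 : HasDerivAt (fun θ : ℝ => (L θ - Complex.I / d) / d) (Complex.I / d) θ := by
      have : HasDerivAt L Complex.I θ := by
        rw [hL]
        simpa using ((((hasDerivAt_id θ).ofReal_comp).mul_const Complex.I).const_add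
          (Real.log a : ℂ)).sub_const (Real.pi * Complex.I)
      simpa using (this.sub_const (Complex.I / d)).div_const d
    have := h1.mul h2
    refine this.congr_deriv ?_
    field_simp
    ring
  have hint : IntervalIntegrable (fun θ : ℝ => Complex.exp (d * θ) * L θ) volume 0 (2*Real.pi) := by
    apply Continuous.intervalIntegrable
    fun_prop
  have := integral_eq_sub_of_hasDerivAt (f := fun θ : ℝ => Complex.exp (d * θ) * ((L θ - Complex.I / d) / d))
    (f' := fun θ : ℝ => Complex.exp (d * θ) * L θ) (fun θ _ => hderiv θ) hint
  have hexp : Complex.exp (d * (2*Real.pi : ℝ)) = 1 := by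
    rw [hd]
    have := Complex.exp_int_mul_two_pi_mul_I m
    rw [← this]
    push_cast
    ring_nf
  rw [show (fun θ : ℝ => Complex.exp (m * θ * Complex.I) * L θ) = fun θ : ℝ => Complex.exp (d * θ) * L θ by
      funext θ; rw [hd]; ring_nf] at *
  rw [this]
  simp only [hexp, Complex.ofReal_zero, mul_zero, Complex.exp_zero, one_mul, hL]
  rw [hd]
  have hmC : (m:ℂ) ≠ 0 := Int.cast_ne_zero.mpr hm
  field_simp
  push_cast
  ring

lemma FPaux_K0 (a : ℝ) :
    (∫ θ in (0:ℝ)..(2*Real.pi),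
      ((Real.log a : ℂ) + θ * Complex.I - Real.pi * Complex.I))
      = 2 * Real.pi * Real.log a := by
  have hderiv : ∀ θ : ℝ, HasDerivAt (fun θ : ℝ => (Real.log a : ℂ) * θ + ((θ:ℂ)*(θ:ℂ))/2 * Complex.I - Real.pi * Complex.I * θ)
      ((Real.log a : ℂ) + θ * Complex.I - Real.pi * Complex.I) θ := by
    intro θ
    have h0 : HasDerivAt (fun t : ℝ => (t : ℂ)) 1 θ := by simpa using (hasDerivAt_id θ).ofReal_comp
    have h1 : HasDerivAt (fun θ : ℝ => ((θ:ℂ)*(θ:ℂ))/2 * Complex.I) ((θ:ℂ) * Complex.I) θ := by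
      have := ((h0.mul h0).div_const 2).mul_const Complex.I
      refine this.congr_deriv ?_
      push_cast
      ring
    have := ((h0.const_mul ((Real.log a : ℂ))).add h1).sub (h0.const_mul ((Real.pi : ℂ) * Complex.I))
    refine this.congr_deriv ?_
    ring
  have hint : IntervalIntegrable (fun θ : ℝ => (Real.log a : ℂ) + θ * Complex.I - Real.pi * Complex.I) volume 0 (2*Real.pi) := by
    apply Continuous.intervalIntegrable; fun_prop
  have := integral_eq_sub_of_hasDerivAt
    (f := fun θ : ℝ => (Real.log a : ℂ) * θ + ((θ:ℂ)*(θ:ℂ))/2 * Complex.I - Real.pi * Complex.I * θ)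
    (f' := fun θ : ℝ => (Real.log a : ℂ) + θ * Complex.I - Real.pi * Complex.I) (fun θ _ => hderiv θ) hint
  rw [this]
  push_cast
  ring

lemma FPaux_int_term {ε a : ℝ} (hε : 0 < ε) (hεa : ε ≤ a) (k n : ℕ) :
    (∫ x in ε..a, (x:ℂ)^k / (x:ℂ)^(n+1)) =
      if k = n then ((Real.log a - Real.log ε : ℝ):ℂ)
      else ((a:ℂ)^((k:ℤ)-n) - (ε:ℂ)^((k:ℤ)-n))/((k:ℂ)-(n:ℂ)) := by
  have ha : 0 < a := lt_of_lt_of_le hε hεa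
  have h0 : (0:ℝ) ∉ uIcc ε a := by
    rw [uIcc_of_le hεa]
    intro h
    exact absurd (mem_Icc.mp h).1 (by linarith)
  set m : ℤ := (k:ℤ) - (n+1) with hm
  have hcong : (∫ x in ε..a, (x:ℂ)^k / (x:ℂ)^(n+1)) = ∫ x in ε..a, ((x^m : ℝ):ℂ) := by
    apply intervalIntegral.integral_congr
    intro x hx
    have hx0 : x ≠ 0 := fun h => h0 (h ▸ hx)
    have hxC : (x:ℂ) ≠ 0 := Complex.ofReal_ne_zero.mpr hx0
    show (x:ℂ)^k / (x:ℂ)^(n+1) = ((x ^ m : ℝ):ℂ)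
    rw [Complex.ofReal_zpow, hm, zpow_sub₀ hxC]
    push_cast
    norm_cast
  rw [hcong, intervalIntegral.integral_ofReal]
  by_cases hk : k = n
  · subst hk
    have : m = -1 := by omega
    rw [this]
    simp only [zpow_neg_one]
    rw [integral_inv h0, Real.log_div (ne_of_gt ha) (ne_of_gt hε)]
    simp
  · rw [if_neg hk, integral_zpow (Or.inr ⟨by omega, h0⟩)]
    have hm1 : m + 1 = (k:ℤ) - n := by omega
    rw [hm1]
    rw [Complex.ofReal_div, Complex.ofReal_sub, Complex.ofReal_zpow, Complex.ofReal_zpow]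
    have h2 : ((m:ℝ) + 1 : ℝ) = ((((k:ℤ) - n : ℤ) : ℝ)) := by exact_mod_cast congrArg (Int.cast : ℤ → ℝ) hm1
    rw [h2]
    push_cast
    ring

end FPaux

open Complex intervalIntegral in
/-- For `a > 0` and `f : ℂ → ℂ` analytic on an open set containing the closed
disk of radius `a`, the finite part integral `⨍_0^a f(x)/x^{n+1} dx` equals the contour
integral `(1/(2πi)) ∫_C f(z)(log z − iπ) z^{−(n+1)} dz` over the circle of radius `a`
(parametrized by `z = a e^{iθ}`, `0 ≤ θ ≤ 2π`, with `log z = ln a + iθ`). -/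
theorem finite_part_pole_contour (a : ℝ) (ha : 0 < a) (n : ℕ) (f : ℂ → ℂ)
    (U : Set ℂ) (hU : IsOpen U) (hUa : Metric.closedBall 0 a ⊆ U)
    (hf : AnalyticOnNhd ℂ f U) :
    Tendsto (fun ε : ℝ =>
        (∫ x in ε..a, f x / (x : ℂ) ^ (n + 1))
        - (∑ k ∈ Finset.range n,
            iteratedDeriv k f 0 /
              ((k.factorial : ℂ) * ((n : ℂ) - k) * (ε : ℂ) ^ (n - k)))
        + iteratedDeriv n f 0 / (n.factorial : ℂ) * (Real.log ε : ℂ))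
      (nhdsWithin 0 (Ioi 0))
      (nhds ((1 / (2 * Real.pi * Complex.I)) *
        ∫ θ in (0:ℝ)..(2 * Real.pi),
          f (a * Complex.exp (θ * Complex.I)) *
            ((Real.log a : ℂ) + θ * Complex.I - Real.pi * Complex.I) *
            ((a : ℂ) * Complex.exp (θ * Complex.I))⁻¹ ^ (n + 1) *
            (Complex.I * a * Complex.exp (θ * Complex.I)))) := by
  -- setup
  obtain ⟨δ, hδ, hthick⟩ := (isCompact_closedBall (0:ℂ) a).exists_thickening_subset_open hU hUa
  have hball : Metric.ball (0:ℂ) (δ + a) ⊆ U := by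
    rw [← thickening_closedBall hδ ha.le]; exact hthick
  have hdiff : DifferentiableOn ℂ f (Metric.ball 0 (δ + a)) := fun z hz =>
    ((hf z (hball hz)).differentiableAt.differentiableWithinAt)
  set c : ℕ → ℂ := fun k => iteratedDeriv k f 0 / (k.factorial : ℂ) with hc
  have hsum : ∀ z : ℂ, ‖z‖ < δ + a → HasSum (fun k => c k * z ^ k) (f z) := by
    intro z hz
    have := Complex.hasSum_taylorSeries_on_ball hdiff (by simpa [Metric.mem_ball] using hz)
    convert this using 2 with k
    · rfl
    simp [hc, smul_eq_mul]
    ring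
  have hsuma : ∀ z : ℂ, ‖z‖ ≤ a → HasSum (fun k => c k * z ^ k) (f z) :=
    fun z hz => hsum z (by linarith)
  -- summability of norms
  have hMsum : Summable (fun k => ‖c k‖ * a ^ k) := by
    set b : ℝ := δ/2 + a with hb
    have hab : a < b := by simp [hb]; linarith
    have hb0 : 0 < b := lt_trans ha hab
    have hS : Summable (fun k => c k * ((b:ℝ):ℂ) ^ k) :=
      (hsum ((b:ℝ):ℂ) (by rw [Complex.norm_real, Real.norm_eq_abs, abs_of_pos hb0]; simp only [hb]; linarith)).summable
    have h0 : Tendsto (fun k => ‖c k‖ * b ^ k) atTop (nhds 0) := by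
      have := hS.tendsto_atTop_zero.norm
      simpa [norm_mul, norm_pow, Complex.norm_real, abs_of_pos hb0] using this
    obtain ⟨M, hM⟩ : ∃ M : ℝ, ∀ k, ‖c k‖ * b ^ k ≤ M := by
      obtain ⟨M, hM⟩ := h0.bddAbove_range
      exact ⟨M, fun k => hM (Set.mem_range_self k)⟩
    have hgeo : Summable (fun k : ℕ => M * (a/b) ^ k) :=
      (summable_geometric_of_lt_one (by positivity) (by rw [div_lt_one hb0]; exact hab)).mul_left M
    apply Summable.of_nonneg_of_le (fun k => by positivity) (fun k => ?_) hgeo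
    have hkey : ‖c k‖ * a ^ k = (‖c k‖ * b ^ k) * ((a/b) ^ k) := by
      rw [div_pow]
      field_simp
    rw [hkey]
    exact mul_le_mul_of_nonneg_right (hM k) (by positivity)
  -- E definition
  set E : ℝ → ℕ → ℂ := fun ε k =>
    if k = n then ((Real.log a - Real.log ε : ℝ):ℂ)
    else ((a:ℂ)^((k:ℤ)-n) - (ε:ℂ)^((k:ℤ)-n))/((k:ℂ)-(n:ℂ)) with hE
  have key1 : ∀ ε : ℝ, ε ∈ Ioo (0:ℝ) a →
      (∫ x in ε..a, f x / (x:ℂ)^(n+1)) = ∑' k, c k * E ε k := by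
    intro ε hε
    obtain ⟨hε0, hεa⟩ := hε
    rw [intervalIntegral.integral_of_le hεa.le]
    set F : ℕ → ℝ → ℂ := fun k x => c k * ((x:ℂ)^k / (x:ℂ)^(n+1)) with hF
    have hFc : ∀ k, ContinuousOn (F k) (Icc ε a) := by
      intro k
      apply ContinuousOn.mul continuousOn_const
      apply ContinuousOn.div
      · fun_prop
      · fun_prop
      · intro x hx
        have hx0 : (0:ℝ) < x := lt_of_lt_of_le hε0 hx.1
        exact pow_ne_zero _ (Complex.ofReal_ne_zero.mpr (ne_of_gt hx0))
    have hFint : ∀ k, IntegrableOn (F k) (Ioc ε a) volume := by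
      intro k
      exact ((hFc k).integrableOn_Icc).mono_set Ioc_subset_Icc_self
    have hptbd : ∀ k, ∀ x ∈ Ioc ε a, ‖F k x‖ ≤ ‖c k‖ * a ^ k * (ε^(n+1))⁻¹ := by
      intro k x hx
      have hx0 : (0:ℝ) < x := lt_trans hε0 hx.1
      have hxa : x ≤ a := hx.2
      rw [hF]
      simp only [norm_mul, norm_div, norm_pow, Complex.norm_real, Real.norm_eq_abs,
        abs_of_pos hx0]
      rw [mul_assoc, div_eq_mul_inv]
      have h1 : x ^ k ≤ a ^ k := pow_le_pow_left₀ hx0.le hxa k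
      have h2 : (x^(n+1))⁻¹ ≤ (ε^(n+1))⁻¹ := by
        gcongr
        exact hx.1.le
      exact mul_le_mul_of_nonneg_left
        (mul_le_mul h1 h2 (by positivity) (by positivity)) (norm_nonneg _)
    have hnormsum : Summable (fun k => ∫ x in Ioc ε a, ‖F k x‖) := by
      apply Summable.of_nonneg_of_le
        (fun k => integral_nonneg (fun x => norm_nonneg _))
        (fun k => ?_)
        ((hMsum.mul_right ((ε^(n+1))⁻¹)).mul_left (a - ε))
      calc (∫ x in Ioc ε a, ‖F k x‖)
          ≤ ∫ x in Ioc ε a, ‖c k‖ * a ^ k * (ε^(n+1))⁻¹ := by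
            apply setIntegral_mono_on (hFint k).norm
              (integrableOn_const measure_Ioc_lt_top.ne) measurableSet_Ioc
            exact hptbd k
        _ = (a - ε) * (‖c k‖ * a ^ k * (ε^(n+1))⁻¹) := by
            rw [setIntegral_const, Real.volume_real_Ioc_of_le hεa.le, smul_eq_mul]
    have hinter := MeasureTheory.integral_tsum_of_summable_integral_norm hFint hnormsum
    have hptsum : ∀ x ∈ Ioc ε a, (∑' k, F k x) = f x / (x:ℂ)^(n+1) := by
      intro x hx
      have hx0 : (0:ℝ) < x := lt_trans hε0 hx.1
      have hs := (hsuma ((x:ℝ):ℂ) (by rw [Complex.norm_real, Real.norm_eq_abs, abs_of_pos hx0]; exact hx.2)).div_const ((x:ℂ)^(n+1))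
      have heq : (fun k => c k * (x:ℂ)^k / (x:ℂ)^(n+1)) = fun k => F k x := by
        funext k; simp only [hF]; ring
      rw [heq] at hs
      exact hs.tsum_eq
    calc (∫ x in Ioc ε a, f x / (x:ℂ)^(n+1))
        = ∫ x in Ioc ε a, (∑' k, F k x) := by
          apply setIntegral_congr_fun measurableSet_Ioc
          intro x hx; exact (hptsum x hx).symm
      _ = ∑' k, ∫ x in Ioc ε a, F k x := hinter.symm
      _ = ∑' k, c k * E ε k := by
          apply tsum_congr
          intro k
          have hterm : (∫ x in ε..a, F k x) = c k * E ε k := by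
            simp only [hF]
            rw [intervalIntegral.integral_const_mul, FPaux_int_term hε0 hεa.le k n]
            try simp only [hE]
          rw [intervalIntegral.integral_of_le hεa.le] at hterm
          exact hterm
  set G : ℕ → ℂ := fun k => if k = n then ((Real.log a : ℝ):ℂ) else (a:ℂ)^((k:ℤ)-n) / ((k:ℂ) - n) with hG
  have habs : ∀ k : ℕ, k ≠ n → (1:ℝ) ≤ ‖(k:ℂ) - (n:ℂ)‖ := by
    intro k hk
    have h1 : ((k:ℤ) - n) ≠ 0 := by omega
    have h2 : (1:ℝ) ≤ |((k:ℝ) - n)| := by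
      have := Int.one_le_abs h1
      calc (1:ℝ) ≤ |(((k:ℤ) - n : ℤ) : ℝ)| := by exact_mod_cast this
        _ = |((k:ℝ) - n)| := by push_cast; ring_nf
    calc (1:ℝ) ≤ |((k:ℝ) - n)| := h2
      _ = |((k:ℂ) - n).re| := by simp
      _ ≤ ‖(k:ℂ) - n‖ := Complex.abs_re_le_norm _
  have hsG : Summable (fun k => c k * G k) := by
    apply Summable.of_norm_bounded_eventually (g := fun k => (a:ℝ)^(-(n:ℤ)) * (‖c k‖ * a^k)) (hMsum.mul_left _)
    filter_upwards [Filter.eventually_cofinite_ne n] with k hk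
    have hGk : G k = (a:ℂ)^((k:ℤ)-n) / ((k:ℂ) - n) := by
      simp only [hG]; rw [if_neg hk]
    have hnG : ‖G k‖ ≤ a^(-(n:ℤ)) * a^k := by
      rw [hGk, norm_div, norm_zpow, Complex.norm_real, Real.norm_eq_abs, abs_of_pos ha]
      refine le_trans (div_le_self (by positivity) (habs k hk)) (le_of_eq ?_)
      rw [← zpow_natCast a k, ← zpow_add₀ (ne_of_gt ha)]
      congr 1
      ring
    calc ‖c k * G k‖ = ‖c k‖ * ‖G k‖ := norm_mul _ _
      _ ≤ ‖c k‖ * (a^(-(n:ℤ)) * a^k) := mul_le_mul_of_nonneg_left hnG (norm_nonneg _)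
      _ = (a:ℝ)^(-(n:ℤ)) * (‖c k‖ * a^k) := by ring
  set Rr : ℝ → ℕ → ℂ := fun ε k => if n < k then c k * (ε:ℂ)^((k:ℤ)-n)/((k:ℂ)-n) else 0 with hRr
  have hRbd : ∀ ε : ℝ, ε ∈ Ioo (0:ℝ) a → ∀ k, ‖Rr ε k‖ ≤ ε * ((a:ℝ)^(-(n:ℤ)-1) * (‖c k‖ * a^k)) := by
    intro ε hε k
    simp only [hRr]
    by_cases hk : n < k
    · rw [if_pos hk]
      have hε0 := hε.1
      have hnorm : ‖c k * (ε:ℂ)^((k:ℤ)-n)/((k:ℂ)-n)‖ = ‖c k‖ * ε^((k:ℤ)-n) / ‖(k:ℂ)-(n:ℂ)‖ := by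
        rw [norm_div, norm_mul, norm_zpow, Complex.norm_real, Real.norm_eq_abs, abs_of_pos hε0]
      rw [hnorm]
      have h1 : ‖c k‖ * ε^((k:ℤ)-n) / ‖(k:ℂ)-(n:ℂ)‖ ≤ ‖c k‖ * ε^((k:ℤ)-n) :=
        div_le_self (by positivity) (habs k (by omega))
      refine le_trans h1 ?_
      have h2 : ε^((k:ℤ)-n) ≤ ε * a^((k:ℤ)-n-1) := by
        have hkn : (k:ℤ) - n = ((k - n : ℕ) : ℤ) := by omega
        have hkn1 : (k:ℤ) - n - 1 = ((k - n - 1 : ℕ) : ℤ) := by omega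
        rw [hkn1, hkn, zpow_natCast, zpow_natCast]
        have h3 : k - n = (k - n - 1) + 1 := by omega
        rw [h3, pow_succ, mul_comm]
        exact mul_le_mul_of_nonneg_left
          (by simpa using pow_le_pow_left₀ hε0.le hε.2.le (k-n-1)) hε0.le
      have h4 : a^((k:ℤ)-n-1) = a^(-(n:ℤ)-1) * a^(k:ℤ) := by
        rw [← zpow_add₀ (ne_of_gt ha)]
        congr 1
        ring
      calc ‖c k‖ * ε^((k:ℤ)-n) ≤ ‖c k‖ * (ε * a^((k:ℤ)-n-1)) :=
            mul_le_mul_of_nonneg_left h2 (norm_nonneg _)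
        _ = ε * ((a:ℝ)^(-(n:ℤ)-1) * (‖c k‖ * a^k)) := by
            rw [h4, zpow_natCast]; ring
    · rw [if_neg hk]
      simp only [norm_zero]
      have h5 := hε.1
      positivity
  have hsRr : ∀ ε : ℝ, ε ∈ Ioo (0:ℝ) a → Summable (Rr ε) := by
    intro ε hε
    exact Summable.of_norm_bounded (((hMsum.mul_left _).mul_left ε)) (hRbd ε hε)
  have hdecomp : ∀ ε : ℝ, ε ∈ Ioo (0:ℝ) a →
      (∑' k, c k * E ε k) = (∑' k, c k * G k)
        + ((∑ k ∈ Finset.range n, c k / (((n:ℂ)-k) * (ε:ℂ)^(n-k))) - c n * (Real.log ε : ℂ))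
        - ∑' k, Rr ε k := by
    intro ε hε
    set D : ℕ → ℂ := fun k => if k < n then c k / (((n:ℂ)-k) * (ε:ℂ)^(n-k))
      else if k = n then -(c n * (Real.log ε : ℂ)) else 0 with hD
    have hDsupp : ∀ k ∉ Finset.range (n+1), D k = 0 := by
      intro k hk
      simp only [Finset.mem_range, not_lt] at hk
      simp only [hD]
      rw [if_neg (by omega), if_neg (by omega)]
    have hDsum : Summable D := summable_of_ne_finset_zero hDsupp
    have hterm : ∀ k, c k * E ε k = c k * G k + D k - Rr ε k := by
      intro k
      rcases lt_trichotomy k n with hk | hk | hk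
      · simp only [hE, hG, hD, hRr, if_neg (Nat.ne_of_lt hk), if_pos hk,
          if_neg (by omega : ¬ n < k)]
        have hεC : ((ε:ℝ):ℂ) ≠ 0 := Complex.ofReal_ne_zero.mpr (ne_of_gt hε.1)
        have hzp : (ε:ℂ)^((k:ℤ)-n) = ((ε:ℂ)^((n-k:ℕ)))⁻¹ := by
          rw [← zpow_natCast ((ε:ℂ)) (n-k), ← zpow_neg]
          congr 1
          omega
        have hne : (k:ℂ) - (n:ℂ) ≠ 0 := by
          rw [sub_ne_zero]
          exact_mod_cast Nat.ne_of_lt hk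
        have hne2 : (n:ℂ) - (k:ℂ) ≠ 0 := by
          rw [sub_ne_zero]
          exact_mod_cast (Nat.ne_of_lt hk).symm
        rw [hzp, sub_zero]
        have hpw : ((ε:ℝ):ℂ)^(n-k:ℕ) ≠ 0 := pow_ne_zero _ hεC
        field_simp
        ring
      · subst hk
        simp only [hE, hG, hD, hRr, if_pos rfl, lt_irrefl, if_neg (lt_irrefl k), if_false]
        push_cast
        ring
      · simp only [hE, hG, hD, hRr, if_neg (by omega : ¬ k = n), if_pos hk,
          if_neg (by omega : ¬ k < n)]
        rw [sub_div]
        ring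
    have hDval : (∑' k, D k) = (∑ k ∈ Finset.range n, c k / (((n:ℂ)-k) * (ε:ℂ)^(n-k)))
        - c n * (Real.log ε : ℂ) := by
      rw [tsum_eq_sum hDsupp, Finset.sum_range_succ]
      have h1 : ∀ k ∈ Finset.range n, D k = c k / (((n:ℂ)-k) * (ε:ℂ)^(n-k)) := by
        intro k hk
        simp only [hD]
        rw [if_pos (Finset.mem_range.mp hk)]
      rw [Finset.sum_congr rfl h1]
      have h2 : D n = -(c n * (Real.log ε : ℂ)) := by
        simp [hD]
      rw [h2]
      ring
    calc (∑' k, c k * E ε k) = ∑' k, (c k * G k + D k - Rr ε k) := tsum_congr hterm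
      _ = (∑' k, (c k * G k + D k)) - ∑' k, Rr ε k := Summable.tsum_sub (hsG.add hDsum) (hsRr ε hε)
      _ = ((∑' k, c k * G k) + ∑' k, D k) - ∑' k, Rr ε k := by rw [Summable.tsum_add hsG hDsum]
      _ = _ := by rw [hDval]
  set T : ℂ := ∑' k, c k * G k with hT
  have hπ2 : (0:ℝ) < 2 * Real.pi := by positivity
  set L : ℝ → ℂ := fun θ => (Real.log a : ℂ) + θ * Complex.I - Real.pi * Complex.I with hL
  set X : ℝ → ℂ := fun θ => (a:ℂ) * Complex.exp (θ * Complex.I) with hX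
  have hXne : ∀ θ : ℝ, X θ ≠ 0 := fun θ =>
    mul_ne_zero (Complex.ofReal_ne_zero.mpr (ne_of_gt ha)) (Complex.exp_ne_zero _)
  have hXnorm : ∀ θ : ℝ, ‖X θ‖ = a := by
    intro θ
    simp only [hX]
    rw [norm_mul, Complex.norm_real, Real.norm_eq_abs, abs_of_pos ha,
      Complex.norm_exp]
    simp
  set CL : ℝ := |Real.log a| + 2*Real.pi + Real.pi with hCL
  have hLbd : ∀ θ ∈ Ioc (0:ℝ) (2*Real.pi), ‖L θ‖ ≤ CL := by
    intro θ hθ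
    simp only [hL, hCL]
    calc ‖(Real.log a:ℂ) + θ*Complex.I - (Real.pi:ℂ)*Complex.I‖
        ≤ ‖(Real.log a:ℂ) + θ*Complex.I‖ + ‖(Real.pi:ℂ)*Complex.I‖ := norm_sub_le _ _
      _ ≤ (‖(Real.log a:ℂ)‖ + ‖(θ:ℂ)*Complex.I‖) + ‖(Real.pi:ℂ)*Complex.I‖ := by
          gcongr
          exact norm_add_le _ _
      _ ≤ |Real.log a| + 2*Real.pi + Real.pi := by
          rw [norm_mul, norm_mul, Complex.norm_I, mul_one, mul_one, Complex.norm_real,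
            Complex.norm_real, Complex.norm_real, Real.norm_eq_abs, Real.norm_eq_abs,
            Real.norm_eq_abs, abs_of_pos Real.pi_pos]
          gcongr
          rw [abs_of_pos hθ.1]
          exact hθ.2
  set F2 : ℕ → ℝ → ℂ := fun k θ =>
    c k * X θ^k * L θ * (X θ)⁻¹^(n+1) * (Complex.I * a * Complex.exp (θ*Complex.I)) with hF2
  have hXcont : Continuous X := by
    apply continuous_const.mul
    apply Complex.continuous_exp.comp
    fun_prop
  have hLcont : Continuous L := by
    simp only [hL]
    fun_prop
  have hF2cont : ∀ k, Continuous (F2 k) := by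
    intro k
    simp only [hF2]
    apply Continuous.mul
    apply Continuous.mul
    apply Continuous.mul
    · exact continuous_const.mul (hXcont.pow k)
    · exact hLcont
    · exact (hXcont.inv₀ hXne).pow (n+1)
    · apply continuous_const.mul
      apply Complex.continuous_exp.comp
      fun_prop
  have hF2int : ∀ k, IntegrableOn (F2 k) (Ioc (0:ℝ) (2*Real.pi)) volume :=
    fun k => ((hF2cont k).continuousOn).integrableOn_Icc.mono_set Ioc_subset_Icc_self
  have hF2bd : ∀ k, ∀ θ ∈ Ioc (0:ℝ) (2*Real.pi),
      ‖F2 k θ‖ ≤ (CL * ((a⁻¹)^(n+1) * a)) * (‖c k‖ * a^k) := by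
    intro k θ hθ
    have h1 : ‖F2 k θ‖ = ‖c k‖ * a^k * ‖L θ‖ * (a⁻¹)^(n+1) * a := by
      simp only [hF2]
      rw [norm_mul, norm_mul, norm_mul, norm_mul, norm_pow, norm_pow, norm_inv, hXnorm,
        norm_mul, norm_mul, Complex.norm_I, one_mul, Complex.norm_real, Real.norm_eq_abs,
        abs_of_pos ha]
      simp [Complex.norm_exp]
    rw [h1]
    have h2 := hLbd θ hθ
    have h3 : ‖c k‖ * a^k * ‖L θ‖ * (a⁻¹)^(n+1) * a ≤ ‖c k‖ * a^k * CL * (a⁻¹)^(n+1) * a := by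
      gcongr
    refine le_trans h3 (le_of_eq ?_)
    ring
  have hnormsum2 : Summable (fun k => ∫ θ in Ioc (0:ℝ) (2*Real.pi), ‖F2 k θ‖) := by
    apply Summable.of_nonneg_of_le
      (fun k => integral_nonneg (fun θ => norm_nonneg _))
      (fun k => ?_)
      ((hMsum.mul_left ((CL * ((a⁻¹)^(n+1) * a)))).mul_left (2*Real.pi))
    calc (∫ θ in Ioc (0:ℝ) (2*Real.pi), ‖F2 k θ‖)
        ≤ ∫ _θ in Ioc (0:ℝ) (2*Real.pi), (CL * ((a⁻¹)^(n+1) * a)) * (‖c k‖ * a^k) := by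
          apply setIntegral_mono_on (hF2int k).norm
            (integrableOn_const measure_Ioc_lt_top.ne) measurableSet_Ioc
          exact hF2bd k
      _ = 2*Real.pi * ((CL * ((a⁻¹)^(n+1) * a)) * (‖c k‖ * a^k)) := by
          rw [setIntegral_const, Real.volume_real_Ioc_of_le hπ2.le, smul_eq_mul]
          ring_nf
  have hterm2 : ∀ k, (∫ θ in (0:ℝ)..(2*Real.pi), F2 k θ) = c k * (2*Real.pi*Complex.I) * G k := by
    intro k
    set Z : ℤ := (k:ℤ) - n with hZ
    have hptw : ∀ θ : ℝ, F2 k θ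
        = (c k * (a:ℂ)^Z * Complex.I) * (Complex.exp ((Z:ℂ) * θ * Complex.I) * L θ) := by
      intro θ
      have hpow : X θ^(k:ℤ) * X θ^(-((n+1:ℕ)):ℤ) * (Complex.I * X θ)
          = Complex.I * X θ^Z := by
        rw [← zpow_add₀ (hXne θ)]
        have h5 : X θ ^ ((k:ℤ) + -((n+1:ℕ):ℤ)) * X θ = X θ ^ Z := by
          rw [← zpow_add_one₀ (hXne θ)]
          congr 1
          rw [hZ]
          push_cast
          ring
        calc X θ ^ ((k:ℤ) + -((n+1:ℕ):ℤ)) * (Complex.I * X θ)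
            = Complex.I * (X θ ^ ((k:ℤ) + -((n+1:ℕ):ℤ)) * X θ) := by ring
          _ = Complex.I * X θ^Z := by rw [h5]
      have h6 : X θ^Z = (a:ℂ)^Z * Complex.exp (θ*Complex.I)^Z := by
        rw [hX]
        exact mul_zpow _ _ _
      have h7 : Complex.exp (θ*Complex.I)^Z = Complex.exp ((Z:ℂ) * θ * Complex.I) := by
        rw [← Complex.exp_int_mul]
        congr 1
        ring
      have h8 : X θ^k = X θ^(k:ℤ) := (zpow_natCast _ k).symm
      have h9 : (X θ)⁻¹^(n+1) = X θ^(-((n+1:ℕ)):ℤ) := by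
        rw [inv_pow, ← zpow_natCast, ← zpow_neg]
      have h10 : (Complex.I * (a:ℂ)) * Complex.exp (θ*Complex.I) = Complex.I * X θ := by
        rw [hX]; ring
      calc F2 k θ = c k * L θ * (X θ^(k:ℤ) * X θ^(-((n+1:ℕ)):ℤ) * (Complex.I * X θ)) := by
            simp only [hF2]
            rw [← h8, ← h9, ← h10]
            ring
        _ = c k * L θ * (Complex.I * ((a:ℂ)^Z * Complex.exp ((Z:ℂ) * θ * Complex.I))) := by
            rw [hpow, h6, h7]
        _ = (c k * (a:ℂ)^Z * Complex.I) * (Complex.exp ((Z:ℂ) * θ * Complex.I) * L θ) := by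
            ring
    rw [intervalIntegral.integral_congr (g := fun θ =>
      (c k * (a:ℂ)^Z * Complex.I) * (Complex.exp ((Z:ℂ) * θ * Complex.I) * L θ))
      (fun θ _ => hptw θ)]
    rw [intervalIntegral.integral_const_mul]
    by_cases hk : k = n
    · have hZ0 : Z = 0 := by rw [hZ, hk]; ring
      simp only [hZ0, Int.cast_zero, zero_mul, Complex.exp_zero, one_mul, zpow_zero, mul_one]
      simp only [hL]
      rw [FPaux_K0 a]
      simp only [hG, if_pos hk]
      ring
    · have hzne : Z ≠ 0 := by
        rw [hZ]
        have : (k:ℤ) ≠ (n:ℤ) := by exact_mod_cast hk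
        omega
      simp only [hL]
      rw [FPaux_Km a Z hzne]
      simp only [hG, if_neg hk]
      have hcast : ((Z : ℤ):ℂ) = (k:ℂ) - n := by rw [hZ]; push_cast; ring
      rw [hcast, hZ]
      have hne : (k:ℂ) - (n:ℂ) ≠ 0 := sub_ne_zero.mpr (by exact_mod_cast hk)
      field_simp
  have key2 : (1 / (2 * Real.pi * Complex.I)) *
      (∫ θ in (0:ℝ)..(2 * Real.pi),
        f (a * Complex.exp (θ * Complex.I)) * L θ *
          ((a : ℂ) * Complex.exp (θ * Complex.I))⁻¹ ^ (n + 1) *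
          (Complex.I * a * Complex.exp (θ * Complex.I))) = T := by
    have hptsum2 : ∀ θ : ℝ, (∑' k, F2 k θ)
        = f ((a:ℂ) * Complex.exp (θ * Complex.I)) * L θ *
            ((a:ℂ) * Complex.exp (θ * Complex.I))⁻¹ ^ (n + 1) *
            (Complex.I * a * Complex.exp (θ * Complex.I)) := by
      intro θ
      have hs := (((hsuma (X θ) (le_of_eq (hXnorm θ))).mul_right (L θ)).mul_right
        ((X θ)⁻¹^(n+1))).mul_right (Complex.I * a * Complex.exp (θ*Complex.I))
      exact hs.tsum_eq
    have hinter2 := MeasureTheory.integral_tsum_of_summable_integral_norm hF2int hnormsum2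
    have hIoc : (∫ θ in (0:ℝ)..(2*Real.pi),
          f ((a:ℂ) * Complex.exp (θ * Complex.I)) * L θ *
            ((a:ℂ) * Complex.exp (θ*Complex.I))⁻¹^(n+1) *
            (Complex.I * a * Complex.exp (θ*Complex.I)))
        = ∑' k, ∫ θ in Ioc (0:ℝ) (2*Real.pi), F2 k θ := by
      rw [intervalIntegral.integral_of_le hπ2.le, hinter2]
      apply setIntegral_congr_fun measurableSet_Ioc
      intro θ _
      exact (hptsum2 θ).symm
    rw [hIoc]
    have hteq : ∀ k, (∫ θ in Ioc (0:ℝ) (2*Real.pi), F2 k θ)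
        = (2*(Real.pi:ℂ)*Complex.I) * (c k * G k) := by
      intro k
      rw [← intervalIntegral.integral_of_le hπ2.le, hterm2 k]
      ring
    rw [tsum_congr hteq, tsum_mul_left, ← hT]
    have h1 : ((2:ℂ)*(Real.pi:ℂ)*Complex.I) ≠ 0 :=
      mul_ne_zero (mul_ne_zero two_ne_zero (Complex.ofReal_ne_zero.mpr Real.pi_ne_zero))
        Complex.I_ne_zero
    rw [one_div, inv_mul_cancel_left₀]
    push_cast
    exact h1
  rw [key2]
  have hR0 : Tendsto (fun ε : ℝ => ∑' k, Rr ε k) (nhdsWithin 0 (Ioi 0)) (nhds 0) := by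
    set M : ℝ := ∑' k, ‖c k‖ * a^k with hM
    apply squeeze_zero_norm' (a := fun ε : ℝ => ε * ((a:ℝ)^(-(n:ℤ)-1) * M))
    · filter_upwards [Ioo_mem_nhdsGT_of_mem (show (0:ℝ) ∈ Ico 0 a from ⟨le_refl _, ha⟩)]
        with ε hε
      have hsn : Summable (fun k => ‖Rr ε k‖) :=
        Summable.of_nonneg_of_le (fun k => norm_nonneg _) (hRbd ε hε)
          ((hMsum.mul_left _).mul_left ε)
      calc ‖∑' k, Rr ε k‖ ≤ ∑' k, ‖Rr ε k‖ := norm_tsum_le_tsum_norm hsn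
        _ ≤ ∑' k, ε * ((a:ℝ)^(-(n:ℤ)-1) * (‖c k‖ * a^k)) :=
            Summable.tsum_le_tsum (hRbd ε hε) hsn ((hMsum.mul_left _).mul_left ε)
        _ = ε * ((a:ℝ)^(-(n:ℤ)-1) * M) := by
            rw [tsum_mul_left, tsum_mul_left, hM]
    · have : Tendsto (fun ε : ℝ => ε * ((a:ℝ)^(-(n:ℤ)-1) * M)) (nhds 0)
          (nhds (0 * ((a:ℝ)^(-(n:ℤ)-1) * M))) :=
        (continuous_id.mul continuous_const).tendsto 0
      rw [zero_mul] at this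
      exact this.mono_left nhdsWithin_le_nhds
  have heq : ∀ᶠ ε in nhdsWithin (0:ℝ) (Ioi 0),
      ((∫ x in ε..a, f x / (x : ℂ) ^ (n + 1))
        - (∑ k ∈ Finset.range n,
            iteratedDeriv k f 0 /
              ((k.factorial : ℂ) * ((n : ℂ) - k) * (ε : ℂ) ^ (n - k)))
        + iteratedDeriv n f 0 / (n.factorial : ℂ) * (Real.log ε : ℂ))
      = T - ∑' k, Rr ε k := by
    filter_upwards [Ioo_mem_nhdsGT_of_mem (show (0:ℝ) ∈ Ico 0 a from ⟨le_refl _, ha⟩)]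
      with ε hε
    rw [key1 ε hε, hdecomp ε hε]
    have hsub : (∑ k ∈ Finset.range n,
          iteratedDeriv k f 0 / ((k.factorial:ℂ) * ((n:ℂ)-k) * (ε:ℂ)^(n-k)))
        = ∑ k ∈ Finset.range n, c k / (((n:ℂ)-k) * (ε:ℂ)^(n-k)) := by
      apply Finset.sum_congr rfl
      intro k _
      simp only [hc]
      rw [div_div, mul_assoc]
    rw [hsub]
    have hn : iteratedDeriv n f 0 / (n.factorial:ℂ) = c n := by simp only [hc]
    rw [hn]
    ring
  have hfinal : Tendsto (fun ε : ℝ => T - ∑' k, Rr ε k) (nhdsWithin 0 (Ioi 0)) (nhds T) := by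
    have := tendsto_const_nhds (x := T) (f := nhdsWithin (0:ℝ) (Ioi 0))
    have h2 := this.sub hR0
    rw [sub_zero] at h2
    exact h2
  exact hfinal.congr' (heq.mono fun ε h => h.symm)
end

section
/- Let a > 0, m ≥ 1 an integer, 0 < ν < 1, and let f : ℂ → ℂ be analytic on an open set containing the closed disk {z : |z| ≤ a}. Then the finite part integral satisfies ⨍_0^a f(x)/x^{m+ν} dx = (1/(e^{−2πiν} − 1)) ∫_0^{2π} f(a e^{iθ}) e^{−(m+ν)(ln a + iθ)} · i a e^{iθ} dθ, i.e. the finite part equals (1/(e^{−2πiν} − 1)) ∫_C f(z) z^{−(m+ν)} dz over the circle of radius a about the origin traversed counterclockwise from a back to a, where the branch of z^{−(m+ν)} is positive on top of the positive real axis (so z^{−(m+ν)} = e^{−(m+ν)(ln a + iθ)} at z = a e^{iθ}, 0 < θ < 2π). -/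
set_option maxHeartbeats 2000000

open MeasureTheory Filter Set

/-- For `a > 0`, an integer `m ≥ 1`, `0 < ν < 1`, and `f : ℂ → ℂ` analytic on
an open set containing the closed disk of radius `a`, the finite part integral
`⨍_0^a f(x)/x^{m+ν} dx` equals `(1/(e^{−2πiν} − 1)) ∫_C f(z) z^{−(m+ν)} dz` over the circle
of radius `a` (parametrized by `z = a e^{iθ}`, with `z^{−(m+ν)} = e^{−(m+ν)(ln a + iθ)}`). -/
theorem finite_part_branch_contour (a : ℝ) (ha : 0 < a) (m : ℕ) (hm : 1 ≤ m)
    (ν : ℝ) (hν0 : 0 < ν) (hν1 : ν < 1) (f : ℂ → ℂ)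
    (U : Set ℂ) (hU : IsOpen U) (hUa : Metric.closedBall 0 a ⊆ U)
    (hf : AnalyticOnNhd ℂ f U) :
    Tendsto (fun ε : ℝ =>
        (∫ x in ε..a, f x / ((x ^ ((m : ℝ) + ν) : ℝ) : ℂ))
        - (∑ j ∈ Finset.range m,
            iteratedDeriv j f 0 /
                ((j.factorial : ℂ) * (((m : ℝ) + ν - j - 1 : ℝ) : ℂ)) *
              ((ε ^ (-((m : ℝ) + ν - j - 1)) : ℝ) : ℂ)))
      (nhdsWithin 0 (Ioi 0))
      (nhds ((1 / (Complex.exp (-2 * Real.pi * ν * Complex.I) - 1)) *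
        ∫ θ in (0:ℝ)..(2 * Real.pi),
          f (a * Complex.exp (θ * Complex.I)) *
            Complex.exp (-((m : ℂ) + ν) * ((Real.log a : ℂ) + θ * Complex.I)) *
            (Complex.I * a * Complex.exp (θ * Complex.I)))) := by
  classical
  obtain ⟨δ, hδ0, hδU⟩ := (isCompact_closedBall (0:ℂ) a).exists_cthickening_subset_open hU hUa
  set R : NNReal := (a + δ).toNNReal with hRdef
  have hRa : a < (R : ℝ) := by
    rw [hRdef, Real.coe_toNNReal _ (by positivity)]; linarith
  have hRU : Metric.closedBall (0:ℂ) R ⊆ U := by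
    rw [hRdef, Real.coe_toNNReal _ (by positivity)]
    refine subset_trans ?_ hδU
    rw [cthickening_closedBall hδ0.le ha.le]
    intro z hz; simpa [add_comm] using hz
  have hR0 : 0 < R := by
    have : (0:ℝ) < (R:ℝ) := lt_trans ha hRa
    exact_mod_cast this
  have hd : DifferentiableOn ℂ f (Metric.closedBall 0 R) :=
    (hf.mono hRU).differentiableOn
  have hp := hd.hasFPowerSeriesOnBall hR0
  set p := cauchyPowerSeries f 0 R with hpdef
  set c : ℕ → ℂ := fun n => p.coeff n with hcdef
  -- summability
  have hsum : Summable (fun n => ‖c n‖ * a ^ n) := by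
    have h1 : (a.toNNReal : ENNReal) < p.radius := by
      refine lt_of_lt_of_le ?_ hp.r_le
      rw [ENNReal.coe_lt_coe]
      exact_mod_cast (by rwa [Real.coe_toNNReal _ ha.le] : (a.toNNReal:ℝ) < (R:ℝ))
    have := p.summable_norm_mul_pow h1
    simpa [FormalMultilinearSeries.norm_apply_eq_norm_coef,
      Real.coe_toNNReal _ ha.le] using this
  -- pointwise sum
  have hfs : ∀ z : ℂ, ‖z‖ ≤ a → HasSum (fun n => c n * z ^ n) (f z) := by
    intro z hz
    have hmem : z ∈ EMetric.ball (0:ℂ) R := by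
      show z ∈ Metric.eball (0:ℂ) R
      rw [mem_emetric_ball_zero_iff]
      exact_mod_cast lt_of_le_of_lt hz hRa
    have := hp.hasSum (y := z) hmem
    simp only [FormalMultilinearSeries.apply_eq_pow_smul_coeff, smul_eq_mul, zero_add] at this
    simpa [mul_comm] using this
  -- derivatives
  have hc : ∀ j, iteratedDeriv j f 0 = (j.factorial : ℂ) * c j := by
    intro j
    have h1 := hp.factorial_smul (1:ℂ) j
    rw [iteratedDeriv, ← h1, nsmul_eq_mul]
    rfl
  set e : ℕ → ℝ := fun n => (n:ℝ) + 1 - ((m:ℝ) + ν) with hedef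
  set δ0 : ℝ := min ν (1 - ν) with hδ0def
  have hδ0pos : 0 < δ0 := lt_min hν0 (by linarith)
  have heδ : ∀ n, δ0 ≤ |e n| := by
    intro n
    rcases le_or_gt (n+1) m with h | h
    · have h' : (n:ℝ) + 1 ≤ (m:ℝ) := by exact_mod_cast h
      have : e n ≤ -ν := by simp only [hedef]; linarith
      rw [abs_of_nonpos (by linarith)]
      have : ν ≤ -e n := by linarith
      exact le_trans (min_le_left _ _) this
    · have h' : (m:ℝ) + 1 ≤ (n:ℝ) + 1 := by exact_mod_cast h
      have : 1 - ν ≤ e n := by simp only [hedef]; linarith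
      rw [abs_of_nonneg (by linarith)]
      exact le_trans (min_le_right _ _) this
  have he0 : ∀ n, e n ≠ 0 := by
    intro n h
    have := heδ n
    rw [h, abs_zero] at this
    linarith
  -- the rpow integral
  have hIrpow : ∀ n : ℕ, ∀ ε : ℝ, 0 < ε → ε ≤ a →
      ∫ x in ε..a, x ^ ((n:ℝ) - ((m:ℝ) + ν)) = (a ^ (e n) - ε ^ (e n)) / e n := by
    intro n ε hε hεa
    have h0 : (0:ℝ) ∉ uIcc ε a := by
      rw [uIcc_of_le hεa]; intro h; exact absurd h.1 (by linarith)
    rw [integral_rpow (Or.inr ⟨by intro h; exact he0 n (by simp only [hedef]; linarith [h]), h0⟩)]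
    have : (n:ℝ) - ((m:ℝ) + ν) + 1 = e n := by simp [hedef]; ring
    rw [this]
  have hedef : ∀ n : ℕ, e n = (n:ℝ) + 1 - ((m:ℝ) + ν) := fun n => rfl
  have S1 : ∀ ε : ℝ, 0 < ε → ε ≤ a →
      HasSum (fun n => c n * (((a ^ (e n) - ε ^ (e n)) / e n : ℝ) : ℂ))
        (∫ x in ε..a, f x / ((x ^ ((m:ℝ) + ν) : ℝ) : ℂ)) := by
    intro ε hε hεa
    set r : ℕ → ℝ := fun n => (n:ℝ) - ((m:ℝ) + ν) with hrdef
    set F : ℕ → ℝ → ℂ := fun n x => c n * ((x ^ (r n) : ℝ) : ℂ) with hFdef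
    -- integrability
    have hFcont : ∀ n, ContinuousOn (F n) (Icc ε a) := by
      intro n
      apply ContinuousOn.mul continuousOn_const
      apply Complex.continuous_ofReal.comp_continuousOn
      apply ContinuousOn.rpow_const continuousOn_id
      intro x hx
      exact Or.inl (by dsimp; nlinarith [hx.1])
    have hFint : ∀ n, IntegrableOn (F n) (Ioc ε a) volume := fun n =>
      ((hFcont n).integrableOn_Icc).mono_set Ioc_subset_Icc_self
    -- pointwise bound
    have hFle : ∀ n, ∀ x ∈ Ioc ε a, ‖F n x‖ ≤ ‖c n‖ * (a ^ n * ε ^ (-((m:ℝ) + ν))) := by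
      intro n x hx
      have hx0 : 0 < x := lt_of_lt_of_le hε hx.1.le
      have h1 : ‖F n x‖ = ‖c n‖ * x ^ (r n) := by
        rw [hFdef]; simp [norm_mul, Complex.norm_real, abs_of_nonneg (Real.rpow_nonneg hx0.le _)]
      rw [h1]
      apply mul_le_mul_of_nonneg_left _ (norm_nonneg _)
      have hsplit : x ^ (r n) = x ^ (n:ℕ) * x ^ (-((m:ℝ) + ν)) := by
        rw [hrdef, ← Real.rpow_natCast x n, ← Real.rpow_add hx0]; ring_nf
      rw [hsplit]
      apply mul_le_mul (pow_le_pow_left₀ hx0.le hx.2 n)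
        (Real.rpow_le_rpow_of_nonpos hε hx.1.le (neg_nonpos.mpr (by positivity)))
        (Real.rpow_nonneg hx0.le _) (by positivity)
    -- integral norm bound and summability
    have hFnormint : ∀ n, ∫ x in Ioc ε a, ‖F n x‖ ≤ (a * ε ^ (-((m:ℝ) + ν))) * (‖c n‖ * a ^ n) := by
      intro n
      calc ∫ x in Ioc ε a, ‖F n x‖
          ≤ ∫ _x in Ioc ε a, ‖c n‖ * (a ^ n * ε ^ (-((m:ℝ) + ν))) := by
            apply setIntegral_mono_on (hFint n).norm (integrableOn_const (by simp))
              measurableSet_Ioc (hFle n)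
        _ = (a - ε) * (‖c n‖ * (a ^ n * ε ^ (-((m:ℝ) + ν)))) := by
            rw [setIntegral_const, Real.volume_real_Ioc_of_le (by linarith), smul_eq_mul]
        _ ≤ (a * ε ^ (-((m:ℝ) + ν))) * (‖c n‖ * a ^ n) := by
            have h2 : (0:ℝ) ≤ ‖c n‖ * (a ^ n * ε ^ (-((m:ℝ) + ν))) := by positivity
            nlinarith [h2, mul_nonneg (norm_nonneg (c n)) (pow_nonneg ha.le n), hε]
    have hFsummable : Summable (fun n => ∫ x in Ioc ε a, ‖F n x‖) := by
      apply Summable.of_nonneg_of_le (fun n => integral_nonneg (fun x => norm_nonneg _)) hFnormint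
      exact hsum.mul_left _
    have key := hasSum_integral_of_summable_integral_norm hFint hFsummable
    -- identify the sum integrand
    have htsum : ∀ x ∈ Ioc ε a, ∑' n, F n x = f x / ((x ^ ((m:ℝ) + ν) : ℝ) : ℂ) := by
      intro x hx
      have hx0 : 0 < x := lt_of_lt_of_le hε hx.1.le
      have hnx : ‖(x:ℂ)‖ ≤ a := by
        rw [Complex.norm_real, Real.norm_eq_abs, abs_of_pos hx0]; exact hx.2
      have h1 := (hfs x hnx).div_const ((x ^ ((m:ℝ) + ν) : ℝ) : ℂ)
      have h2 : ∀ n, c n * (x:ℂ) ^ n / ((x ^ ((m:ℝ) + ν) : ℝ) : ℂ) = F n x := by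
        intro n
        simp only [hFdef]
        have : x ^ (r n) = x ^ (n:ℕ) / x ^ ((m:ℝ) + ν) := by
          rw [hrdef, ← Real.rpow_natCast x n, ← Real.rpow_sub hx0]
        rw [this]
        push_cast
        rw [mul_div_assoc]
      rw [← funext h2]
      exact h1.tsum_eq
    -- value of each term integral
    have hterm : ∀ n, ∫ x in Ioc ε a, F n x = c n * (((a ^ (e n) - ε ^ (e n)) / e n : ℝ) : ℂ) := by
      intro n
      rw [← intervalIntegral.integral_of_le hεa]
      simp only [hFdef]
      rw [intervalIntegral.integral_const_mul, intervalIntegral.integral_ofReal, hIrpow n ε hε hεa]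
    have S1inner : HasSum (fun n => c n * (((a ^ (e n) - ε ^ (e n)) / e n : ℝ) : ℂ))
        (∫ x in ε..a, f x / ((x ^ ((m:ℝ) + ν) : ℝ) : ℂ)) := by
      rw [intervalIntegral.integral_of_le hεa]
      have := key
      rw [setIntegral_congr_fun measurableSet_Ioc htsum] at this
      simpa only [hterm] using this
    exact S1inner
  clear hp hd
  set g : ℕ → ℝ → ℂ := fun n t => c n * ((t ^ (e n) / e n : ℝ) : ℂ) with hgdef
  have hgnorm1 : ∀ t : ℝ, 0 < t → ∀ n, ‖g n t‖ = ‖c n‖ * (t ^ (e n) / |e n|) := by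
    intro t ht n
    simp only [hgdef, norm_mul, Complex.norm_real, Real.norm_eq_abs, abs_div,
      abs_of_nonneg (Real.rpow_nonneg ht.le _)]
  have hgbound : ∀ t : ℝ, 0 < t → t ≤ a → ∀ n,
      ‖g n t‖ ≤ t ^ (1 - ((m:ℝ) + ν)) / δ0 * (‖c n‖ * a ^ n) := by
    intro t ht hta n
    have h2 : t ^ (e n) = t ^ (n : ℕ) * t ^ (1 - ((m:ℝ) + ν)) := by
      rw [← Real.rpow_natCast t n, ← Real.rpow_add ht, hedef]; ring_nf
    calc ‖g n t‖ = ‖c n‖ * (t ^ (e n) / |e n|) := hgnorm1 t ht n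
      _ ≤ ‖c n‖ * (t ^ (e n) / δ0) := by gcongr; exact heδ n
      _ = ‖c n‖ * ((t ^ (n:ℕ) * t ^ (1 - ((m:ℝ) + ν))) / δ0) := by rw [h2]
      _ ≤ ‖c n‖ * ((a ^ (n:ℕ) * t ^ (1 - ((m:ℝ) + ν))) / δ0) := by
          gcongr <;> first | exact ht.le | exact hta
      _ = t ^ (1 - ((m:ℝ) + ν)) / δ0 * (‖c n‖ * a ^ n) := by ring
  have hgnorm : ∀ t : ℝ, 0 < t → t ≤ a → Summable (fun n => ‖g n t‖) := by
    intro t ht hta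
    exact Summable.of_nonneg_of_le (fun n => norm_nonneg _) (hgbound t ht hta)
      (hsum.mul_left _)
  have hgsum : ∀ t : ℝ, 0 < t → t ≤ a → Summable (fun n => g n t) :=
    fun t ht hta => (hgnorm t ht hta).of_norm
  set L : ℂ := ∑' n, g n a with hLdef
  have hga : Summable (fun n => c n * ((a ^ (e n) / e n : ℝ) : ℂ)) :=
    hgsum a ha le_rfl
  have hB : (1 / (Complex.exp (-2 * Real.pi * ν * Complex.I) - 1)) *
        (∫ θ in (0:ℝ)..(2 * Real.pi),
          f (a * Complex.exp (θ * Complex.I)) *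
            Complex.exp (-((m : ℂ) + ν) * ((Real.log a : ℂ) + θ * Complex.I)) *
            (Complex.I * a * Complex.exp (θ * Complex.I)))
      = L := by
    set w : ℂ := Complex.exp (-2 * Real.pi * ν * Complex.I) with hwdef
    have hw1 : w ≠ 1 := by
      rw [hwdef, Ne, Complex.exp_eq_one_iff]
      rintro ⟨k, hk⟩
      have h2c : ((-2 * Real.pi * ν : ℝ) : ℂ) = ((k * (2 * Real.pi) : ℝ) : ℂ) := by
        apply mul_right_cancel₀ Complex.I_ne_zero
        push_cast
        rw [hk]
        ring
      have h2 : (-2 * Real.pi * ν : ℝ) = (k : ℝ) * (2 * Real.pi) := by exact_mod_cast h2c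
      have h4 : (-ν) * (2 * Real.pi) = (k:ℝ) * (2 * Real.pi) := by linarith [h2]
      have hν' : -ν = (k:ℝ) :=
        mul_right_cancel₀ (by positivity : (2 * Real.pi) ≠ 0) h4
      have hπ := Real.pi_pos
      rcases le_or_gt 0 k with hk0 | hk0
      · have : (0:ℝ) ≤ (k:ℝ) := by exact_mod_cast hk0
        linarith
      · have hk1 : k ≤ -1 := by omega
        have : (k:ℝ) ≤ -1 := by exact_mod_cast hk1
        linarith
    have hwm : w - 1 ≠ 0 := sub_ne_zero.mpr hw1
    set E : ℂ := Complex.exp (-((m : ℂ) + ν) * (Real.log a : ℂ)) with hEdef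
    set K : ℕ → ℂ := fun n => c n * (a:ℂ) ^ n * E * (Complex.I * a) with hKdef
    set G : ℕ → ℝ → ℂ := fun n θ =>
      (c n * ((a:ℂ) * Complex.exp ((θ:ℂ) * Complex.I)) ^ n) *
        (Complex.exp (-((m : ℂ) + ν) * ((Real.log a : ℂ) + (θ:ℂ) * Complex.I)) *
          (Complex.I * a * Complex.exp ((θ:ℂ) * Complex.I))) with hGdef
    have hGK : ∀ n θ, G n θ = K n * Complex.exp ((((e n : ℝ)):ℂ) * Complex.I * (θ:ℂ)) := by
      intro n θ
      have hz : ((e n : ℝ) : ℂ) = (n:ℂ) + 1 - ((m:ℂ) + ν) := by rw [hedef]; push_cast; ring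
      simp only [hGdef, hKdef, hEdef]
      rw [mul_pow, ← Complex.exp_nat_mul,
        show -((m:ℂ)+(ν:ℂ)) * ((Real.log a : ℂ) + (θ:ℂ)*Complex.I)
          = -((m:ℂ)+(ν:ℂ)) * (Real.log a : ℂ) + -((m:ℂ)+(ν:ℂ))*((θ:ℂ)*Complex.I) by ring,
        Complex.exp_add, hz,
        show ((n:ℂ) + 1 - ((m:ℂ) + ν)) * Complex.I * (θ:ℂ)
          = (n:ℂ)*((θ:ℂ)*Complex.I) + (-((m:ℂ)+(ν:ℂ))*((θ:ℂ)*Complex.I) + (θ:ℂ)*Complex.I) by ring,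
        Complex.exp_add, Complex.exp_add]
      ring
    have hEre : E = ((Real.exp (-((m:ℝ) + ν) * Real.log a) : ℝ) : ℂ) := by
      rw [hEdef, Complex.ofReal_exp]
      congr 1
      push_cast
      ring
    have hKnorm : ∀ n, ‖K n‖ = ‖c n‖ * a ^ n * Real.exp (-((m:ℝ) + ν) * Real.log a) * a := by
      intro n
      rw [hKdef]
      simp only [norm_mul, norm_pow, Complex.norm_real, Real.norm_eq_abs, abs_of_pos ha,
        Complex.norm_I, one_mul, hEre]
      rw [abs_of_pos (Real.exp_pos _)]
    have hGnorm : ∀ n θ, ‖G n θ‖ = ‖K n‖ := by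
      intro n θ
      rw [hGK n θ,
        show (((e n : ℝ)):ℂ) * Complex.I * (θ:ℂ) = ((e n * θ : ℝ) : ℂ) * Complex.I by push_cast; ring,
        norm_mul, Complex.norm_exp_ofReal_mul_I, mul_one]
    have hGcont : ∀ n, Continuous (G n) := by
      intro n
      have : Continuous fun θ : ℝ => K n * Complex.exp ((((e n : ℝ)):ℂ) * Complex.I * (θ:ℂ)) := by
        apply continuous_const.mul
        apply Complex.continuous_exp.comp
        exact continuous_const.mul Complex.continuous_ofReal
      exact (funext (hGK n) : G n = _) ▸ this
    have hGint : ∀ n, IntegrableOn (G n) (Ioc 0 (2 * Real.pi)) volume := fun n =>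
      (hGcont n).integrableOn_Ioc
    have hGnormint : ∀ n, ∫ θ in Ioc 0 (2 * Real.pi), ‖G n θ‖
        = 2 * Real.pi * ‖K n‖ := by
      intro n
      simp only [hGnorm]
      rw [setIntegral_const, Real.volume_real_Ioc_of_le (by positivity), sub_zero,
        smul_eq_mul]
    have hGsummable : Summable (fun n => ∫ θ in Ioc 0 (2 * Real.pi), ‖G n θ‖) := by
      apply Summable.of_nonneg_of_le (fun n => integral_nonneg fun θ => norm_nonneg _) (fun n => ?_)
        (hsum.mul_left (2 * Real.pi * (Real.exp (-((m:ℝ) + ν) * Real.log a) * a)))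
      rw [hGnormint n, hKnorm n]
      apply le_of_eq
      ring
    have keyB := hasSum_integral_of_summable_integral_norm hGint hGsummable
    -- identify tsum
    have htsum : ∀ θ : ℝ, ∑' n, G n θ =
        f (a * Complex.exp ((θ:ℂ) * Complex.I)) *
          Complex.exp (-((m : ℂ) + ν) * ((Real.log a : ℂ) + (θ:ℂ) * Complex.I)) *
          (Complex.I * a * Complex.exp ((θ:ℂ) * Complex.I)) := by
      intro θ
      have hz : ‖(a:ℂ) * Complex.exp ((θ:ℂ) * Complex.I)‖ ≤ a := by
        rw [norm_mul, Complex.norm_exp_ofReal_mul_I, mul_one, Complex.norm_real,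
          Real.norm_eq_abs, abs_of_pos ha]
      have h1 := (hfs _ hz).mul_right
        (Complex.exp (-((m : ℂ) + ν) * ((Real.log a : ℂ) + (θ:ℂ) * Complex.I)) *
          (Complex.I * a * Complex.exp ((θ:ℂ) * Complex.I)))
      rw [h1.tsum_eq, ← mul_assoc]
    -- each term integral
    have hterm : ∀ n, ∫ θ in Ioc 0 (2 * Real.pi), G n θ
        = (w - 1) * (c n * ((a ^ (e n) / e n : ℝ) : ℂ)) := by
      intro n
      have hc0 : (((e n : ℝ)):ℂ) * Complex.I ≠ 0 :=
        mul_ne_zero (Complex.ofReal_ne_zero.mpr (he0 n)) Complex.I_ne_zero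
      rw [← intervalIntegral.integral_of_le (by positivity)]
      rw [intervalIntegral.integral_congr (fun θ _ => by
        simp only [hGK n θ, mul_assoc] :
          EqOn (G n) (fun θ : ℝ => K n * Complex.exp (((((e n : ℝ)):ℂ) * Complex.I) * (θ:ℂ)))
            (uIcc 0 (2 * Real.pi)))]
      rw [intervalIntegral.integral_const_mul, integral_exp_mul_complex hc0]
      have hexp0 : Complex.exp ((((e n : ℝ)):ℂ) * Complex.I * ((0:ℝ):ℂ)) = 1 := by
        simp
      have hexp2 : Complex.exp ((((e n : ℝ)):ℂ) * Complex.I * ((2 * Real.pi : ℝ):ℂ)) = w := by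
        have hz2 : (((e n : ℝ)):ℂ) * Complex.I * ((2 * Real.pi : ℝ):ℂ)
            = (((n : ℤ) + 1 - m : ℤ):ℂ) * (2 * (Real.pi:ℂ) * Complex.I)
              + (-2 * Real.pi * ν * Complex.I) := by
          rw [hedef]; push_cast; ring
        rw [hz2, Complex.exp_add, Complex.exp_int_mul_two_pi_mul_I, one_mul, hwdef]
      rw [hexp0, hexp2]
      -- now the algebra
      have hrp : (a:ℝ) ^ (e n) = a ^ (n:ℕ) * Real.exp (-((m:ℝ) + ν) * Real.log a) * a := by
        rw [hedef,
          show (n:ℝ) + 1 - ((m:ℝ) + ν) = (n:ℝ) + -((m:ℝ)+ν) + 1 by ring,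
          Real.rpow_add ha, Real.rpow_add ha, Real.rpow_one, Real.rpow_natCast,
          Real.rpow_def_of_pos ha, mul_comm (Real.log a)]
      rw [hKdef, hEre, hrp]
      push_cast
      have hen : ((e n : ℝ) : ℂ) ≠ 0 := Complex.ofReal_ne_zero.mpr (he0 n)
      field_simp
    have hIval : (∫ θ in (0:ℝ)..(2 * Real.pi),
        f (a * Complex.exp ((θ:ℂ) * Complex.I)) *
          Complex.exp (-((m : ℂ) + ν) * ((Real.log a : ℂ) + (θ:ℂ) * Complex.I)) *
          (Complex.I * a * Complex.exp ((θ:ℂ) * Complex.I)))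
        = (w - 1) * ∑' n, c n * ((a ^ (e n) / e n : ℝ) : ℂ) := by
      rw [intervalIntegral.integral_of_le (by positivity)]
      have h1 : HasSum (fun n => (w - 1) * (c n * ((a ^ (e n) / e n : ℝ) : ℂ)))
          ((w - 1) * ∑' n, c n * ((a ^ (e n) / e n : ℝ) : ℂ)) := hga.hasSum.mul_left _
      have h2 := keyB
      rw [setIntegral_congr_fun measurableSet_Ioc (fun θ _ => htsum θ)] at h2
      rw [funext hterm] at h2
      exact h2.unique h1
    rw [hIval, ← mul_assoc, one_div, inv_mul_cancel₀ hwm, one_mul]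
  rw [hB]
  -- the bracket identity
  have hbr : ∀ ε : ℝ, 0 < ε → ε < a →
      (∫ x in ε..a, f x / ((x ^ ((m : ℝ) + ν) : ℝ) : ℂ))
        - (∑ j ∈ Finset.range m,
            iteratedDeriv j f 0 /
                ((j.factorial : ℂ) * (((m : ℝ) + ν - j - 1 : ℝ) : ℂ)) *
              ((ε ^ (-((m : ℝ) + ν - j - 1)) : ℝ) : ℂ))
      = L - ∑' k, g (k + m) ε := by
    intro ε hε hεa
    have hs := S1 ε hε hεa.le
    have hsplit : ∀ n : ℕ, c n * (((a ^ (e n) - ε ^ (e n)) / e n : ℝ) : ℂ)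
        = g n a - g n ε := by
      intro n
      simp only [hgdef, sub_div]
      push_cast
      ring
    rw [funext hsplit] at hs
    have hInt : (∫ x in ε..a, f x / ((x ^ ((m : ℝ) + ν) : ℝ) : ℂ))
        = L - ∑' n, g n ε := by
      have h1 := (hgsum a ha le_rfl).hasSum.sub (hgsum ε hε hεa.le).hasSum
      exact hs.unique h1
    have hfin : (∑ j ∈ Finset.range m,
            iteratedDeriv j f 0 /
                ((j.factorial : ℂ) * (((m : ℝ) + ν - j - 1 : ℝ) : ℂ)) *
              ((ε ^ (-((m : ℝ) + ν - j - 1)) : ℝ) : ℂ))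
        = - ∑ j ∈ Finset.range m, g j ε := by
      rw [← Finset.sum_neg_distrib]
      apply Finset.sum_congr rfl
      intro j _
      have hdj : ((m:ℝ) + ν - j - 1) = -(e j) := by rw [hedef]; ring
      rw [hc j, hdj, neg_neg]
      have hj0 : ((j.factorial : ℂ)) ≠ 0 := by
        exact_mod_cast Nat.cast_ne_zero.mpr j.factorial_ne_zero
      have hej0 : ((e j : ℝ) : ℂ) ≠ 0 := by
        exact_mod_cast Complex.ofReal_ne_zero.mpr (he0 j)
      simp only [hgdef]
      push_cast
      field_simp
    have htail : ∑' n, g n ε = (∑ j ∈ Finset.range m, g j ε) + ∑' k, g (k + m) ε := by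
      rw [← Summable.sum_add_tsum_nat_add m (hgsum ε hε hεa.le)]
    rw [hInt, hfin, htail]
    ring
  -- the shifted summable bound
  have hshift : Summable (fun k => ‖c (k + m)‖ * a ^ k) := by
    have h1 : Summable (fun k => ‖c (k + m)‖ * a ^ (k + m)) :=
      (summable_nat_add_iff m).2 hsum
    refine (h1.mul_right ((a ^ m)⁻¹)).congr (fun k => ?_)
    rw [pow_add, mul_assoc, mul_assoc, mul_inv_cancel₀ (pow_ne_zero m ha.ne'), mul_one]
  set K : ℝ := (∑' k, ‖c (k + m)‖ * a ^ k) / δ0 with hKdef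
  have htailbound : ∀ ε : ℝ, 0 < ε → ε < a →
      ‖∑' k, g (k + m) ε‖ ≤ K * ε ^ (1 - ν) := by
    intro ε hε hεa
    have hnorm : Summable (fun k => ‖g (k + m) ε‖) :=
      (summable_nat_add_iff m).2 (hgnorm ε hε hεa.le)
    calc ‖∑' k, g (k + m) ε‖ ≤ ∑' k, ‖g (k + m) ε‖ := norm_tsum_le_tsum_norm hnorm
      _ ≤ ∑' k, (‖c (k + m)‖ * a ^ k / δ0) * ε ^ (1 - ν) := by
          apply Summable.tsum_le_tsum _ hnorm ((hshift.div_const δ0).mul_right _)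
          intro k
          have hekm : e (k + m) = (k:ℝ) + (1 - ν) := by rw [hedef]; push_cast; ring
          have h2 : ε ^ (e (k + m)) = ε ^ (k:ℕ) * ε ^ (1 - ν) := by
            rw [hekm, Real.rpow_add hε, Real.rpow_natCast]
          calc ‖g (k + m) ε‖ = ‖c (k + m)‖ * (ε ^ (e (k + m)) / |e (k + m)|) :=
                hgnorm1 ε hε (k + m)
            _ ≤ ‖c (k + m)‖ * (ε ^ (e (k + m)) / δ0) := by gcongr; exact heδ (k + m)
            _ = ‖c (k + m)‖ * ((ε ^ (k:ℕ) * ε ^ (1 - ν)) / δ0) := by rw [h2]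
            _ ≤ ‖c (k + m)‖ * ((a ^ (k:ℕ) * ε ^ (1 - ν)) / δ0) := by
                gcongr <;> first | exact hε.le | exact hεa.le
            _ = (‖c (k + m)‖ * a ^ k / δ0) * ε ^ (1 - ν) := by ring
      _ = K * ε ^ (1 - ν) := by
          rw [hKdef, tsum_mul_right, tsum_div_const]
  -- tendsto of the bound
  have hrpow0 : Tendsto (fun ε : ℝ => K * ε ^ (1 - ν)) (nhdsWithin 0 (Ioi 0)) (nhds 0) := by
    have h1 : Tendsto (fun ε : ℝ => ε ^ (1 - ν)) (nhdsWithin 0 (Ioi 0)) (nhds 0) := by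
      have hca : ContinuousAt (fun x : ℝ => x ^ (1 - ν)) 0 :=
        Real.continuousAt_rpow_const 0 (1 - ν) (Or.inr (by linarith))
      have := hca.continuousWithinAt (s := Ioi 0)
      rw [ContinuousWithinAt] at this
      simpa [Real.zero_rpow (by linarith : (1:ℝ) - ν ≠ 0)] using this
    simpa using h1.const_mul K
  rw [← tendsto_sub_nhds_zero_iff]
  apply squeeze_zero_norm' _ hrpow0
  filter_upwards [Ioo_mem_nhdsGT_of_mem (by constructor <;> simp [ha] : (0:ℝ) ∈ Ico 0 a)]
  intro ε hε
  rw [hbr ε hε.1 hε.2]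
  rw [show L - ∑' k, g (k + m) ε - L = -(∑' k, g (k + m) ε) by ring, norm_neg]
  exact htailbound ε hε.1 hε.2
end

section
/- Let f : ℂ → ℂ be entire and let 0 < ω < a. Then ∫_0^a f(x)/(ω+x) dx = −f(−ω)(ln ω + iπ) + (1/(2πi)) ∫_0^{2π} f(a e^{iθ}) (ln a + iθ) / (ω + a e^{iθ}) · i a e^{iθ} dθ; i.e. the incomplete Stieltjes transform equals −f(−ω)(ln ω + iπ) plus (1/(2πi)) ∫_C f(z) log z /(ω+z) dz over the circle of radius a about the origin traversed counterclockwise, with the branch of log z whose cut is the positive real axis. -/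
open MeasureTheory Filter Set

open Complex
open scoped Real Topology

/-- Every entire function has a primitive. -/
lemma exists_primitive (g : ℂ → ℂ) (hg : Differentiable ℂ g) :
    ∃ G : ℂ → ℂ, G 0 = 0 ∧ ∀ z, HasDerivAt G (g z) z := by
  obtain ⟨p, hp⟩ : ∃ p, HasFPowerSeriesOnBall g p 0 ⊤ :=
    ⟨_, hg.hasFPowerSeriesOnBall 0 one_pos⟩
  set c : ℕ → ℂ := fun n => p.coeff n with hc
  have hsum : ∀ z : ℂ, HasSum (fun n => c n * z ^ n) (g z) := by
    intro z
    have h := hp.hasSum (y := z) (by simp)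
    simp only [FormalMultilinearSeries.apply_eq_pow_smul_coeff, zero_add, smul_eq_mul] at h
    simpa [mul_comm] using h
  have hsummable : ∀ r : ℝ, 0 ≤ r → Summable (fun n => ‖c n‖ * r ^ n) := by
    intro r hr
    lift r to NNReal using hr
    have hrad : (r : ENNReal) < p.radius := by
      rw [top_le_iff.mp hp.r_le]; exact ENNReal.coe_lt_top
    have := p.summable_norm_mul_pow hrad
    simpa [hc, FormalMultilinearSeries.norm_apply_eq_norm_coef] using this
  refine ⟨fun z => ∑' (n : ℕ), ((n : ℂ) + 1)⁻¹ * c n * z ^ (n + 1), by simp, fun z => ?_⟩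
  have hz1 : (0:ℝ) < ‖z‖ + 1 := by positivity
  have hball : z ∈ Metric.ball (0 : ℂ) (‖z‖ + 1) := by
    simp [Metric.mem_ball, dist_zero_right]
  have hder := hasDerivAt_tsum_of_isPreconnected
      (hsummable (‖z‖ + 1) hz1.le) Metric.isOpen_ball
      ((convex_ball (0:ℂ) (‖z‖+1)).isPreconnected)
      (g := fun (n : ℕ) (w : ℂ) => ((n : ℂ) + 1)⁻¹ * c n * w ^ (n + 1))
      (g' := fun (n : ℕ) (w : ℂ) => c n * w ^ n)
      (fun n w _ => by
        have hne : ((n : ℂ) + 1) ≠ 0 := Nat.cast_add_one_ne_zero n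
        have h1 : HasDerivAt (fun w : ℂ => ((n : ℂ) + 1)⁻¹ * c n * w ^ (n + 1))
            (((n : ℂ) + 1)⁻¹ * c n * (((n : ℂ) + 1) * w ^ n)) w := by
          have := (hasDerivAt_pow (n + 1) w).const_mul (((n : ℂ) + 1)⁻¹ * c n)
          simpa [mul_comm, mul_left_comm] using this
        have heq : ((n : ℂ) + 1)⁻¹ * c n * (((n : ℂ) + 1) * w ^ n) = c n * w ^ n := by
          field_simp
        rw [heq] at h1
        exact h1)
      (fun (n : ℕ) (w : ℂ) hw => by
        have hwle : ‖w‖ ≤ ‖z‖ + 1 := by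
          have := Metric.mem_ball.mp hw
          rw [dist_zero_right] at this
          exact this.le
        calc ‖c n * w ^ n‖ = ‖c n‖ * ‖w‖ ^ n := by
              rw [norm_mul, norm_pow]
          _ ≤ ‖c n‖ * (‖z‖ + 1) ^ n := by
              gcongr
        )
      (Metric.mem_ball_self hz1)
      (by simpa using summable_zero)
      hball
  exact (hsum z).tsum_eq ▸ hder

/-- Mean value property over a circle centered at 0. -/
lemma circle_mean_value (F : ℂ → ℂ) (r : ℝ) (hr : 0 < r)
    (hF : DifferentiableOn ℂ F (Metric.closedBall 0 r)) :
    (∫ θ in (0:ℝ)..(2 * Real.pi), F (r * Complex.exp (θ * Complex.I)))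
      = 2 * Real.pi * F 0 := by
  have h := hF.circleIntegral_sub_inv_smul (w := 0) (Metric.mem_ball_self hr)
  rw [circleIntegral] at h
  simp only [deriv_circleMap, circleMap_zero, sub_zero, smul_eq_mul] at h
  have h2 : EqOn (fun θ : ℝ => (↑r * Complex.exp (↑θ * I) * I) *
      ((↑r * Complex.exp (↑θ * I))⁻¹ * F (↑r * Complex.exp (↑θ * I))))
      (fun θ : ℝ => I * F (↑r * Complex.exp (↑θ * I))) (Set.uIcc 0 (2 * Real.pi)) := by
    intro θ _
    have hne : (↑r * Complex.exp (↑θ * I)) ≠ 0 :=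
      mul_ne_zero (ofReal_ne_zero.mpr hr.ne') (Complex.exp_ne_zero _)
    field_simp
    exact mul_div_cancel_left₀ _ (ofReal_ne_zero.mpr hr.ne')
  rw [intervalIntegral.integral_congr h2, intervalIntegral.integral_const_mul] at h
  have := mul_left_cancel₀ Complex.I_ne_zero
    (h.trans (by ring : (2 * ↑Real.pi * I) * F 0 = I * (2 * ↑Real.pi * F 0)))
  exact this

/-- For `f : ℂ → ℂ` entire and `0 < ω < a`, the incomplete Stieltjes transform
`∫_0^a f(x)/(ω+x) dx` equals `−f(−ω)(ln ω + iπ)` plus the contour integral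
`(1/(2πi)) ∫_C f(z) log z/(ω+z) dz` over the circle of radius `a` (parametrized by
`z = a e^{iθ}`, `0 ≤ θ ≤ 2π`, with `log z = ln a + iθ`). -/
theorem incomplete_stieltjes_contour_rep (f : ℂ → ℂ) (hf : Differentiable ℂ f)
    (ω a : ℝ) (hω : 0 < ω) (hωa : ω < a) :
    (∫ x in (0:ℝ)..a, f x / ((ω : ℂ) + x))
      = -f (-(ω : ℂ)) * ((Real.log ω : ℂ) + Real.pi * Complex.I)
        + (1 / (2 * Real.pi * Complex.I)) *
          ∫ θ in (0:ℝ)..(2 * Real.pi),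
            f (a * Complex.exp (θ * Complex.I)) *
                ((Real.log a : ℂ) + θ * Complex.I) /
                ((ω : ℂ) + a * Complex.exp (θ * Complex.I)) *
              (Complex.I * a * Complex.exp (θ * Complex.I)) := by
  have hπ : (0:ℝ) < Real.pi := Real.pi_pos
  have ha : (0:ℝ) < a := hω.trans hωa
  have hA0 : (a:ℂ) ≠ 0 := ofReal_ne_zero.mpr ha.ne'
  have hexp : ∀ θ : ℝ, Complex.exp ((θ:ℂ) * I) ≠ 0 := fun θ => Complex.exp_ne_zero _
  have habs : ∀ θ : ℝ, ‖(a:ℂ) * Complex.exp ((θ:ℂ) * I)‖ = a := by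
    intro θ
    rw [norm_mul, Complex.norm_exp_ofReal_mul_I, Complex.norm_real, Real.norm_eq_abs,
      abs_of_pos ha, mul_one]
  have hWe : ∀ θ : ℝ, (ω:ℂ) + (a:ℂ) * Complex.exp ((θ:ℂ) * I) ≠ 0 := by
    intro θ h
    have h2 : (a:ℂ) * Complex.exp ((θ:ℂ) * I) = -(ω:ℂ) := by linear_combination h
    have h3 := congrArg norm h2
    rw [habs θ] at h3
    simp only [norm_neg, Complex.norm_real, Real.norm_eq_abs, abs_of_pos hω] at h3
    linarith
  -- the entire quotient
  set g : ℂ → ℂ := dslope f (-(ω:ℂ)) with hgdef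
  have hg : Differentiable ℂ g := by
    intro z
    rcases eq_or_ne z (-(ω:ℂ)) with rfl | hz
    · obtain ⟨p, hp⟩ := hf.analyticAt (-(ω:ℂ))
      exact hp.has_fpower_series_dslope_fslope.analyticAt.differentiableAt
    · exact (differentiableAt_dslope_of_ne hz).mpr (hf z)
  have hkey : ∀ z : ℂ, f z = f (-(ω:ℂ)) + ((ω:ℂ) + z) * g z := by
    intro z
    have h := sub_smul_dslope f (-(ω:ℂ)) z
    rw [smul_eq_mul] at h
    rw [hgdef]
    linear_combination -h
  obtain ⟨G, hG0, hGd⟩ := exists_primitive g hg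
  have hGdiff : Differentiable ℂ G := fun z => (hGd z).differentiableAt
  -- derivative of the parametrization
  have hE : ∀ θ : ℝ, HasDerivAt (fun t : ℝ => (a:ℂ) * Complex.exp ((t:ℂ) * I))
      ((a:ℂ) * Complex.exp ((θ:ℂ) * I) * I) θ := by
    intro θ
    have h2 := (Complex.hasDerivAt_exp ((θ:ℂ) * I)).comp (θ:ℂ)
      ((hasDerivAt_id (θ:ℂ)).mul_const I)
    have h3 := h2.const_mul (a:ℂ)
    have h4 : HasDerivAt (fun z : ℂ => (a:ℂ) * Complex.exp (z * I))
        ((a:ℂ) * Complex.exp ((θ:ℂ) * I) * I) (θ:ℂ) := by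
      simpa [Function.comp, mul_comm, mul_assoc, mul_left_comm] using h3
    exact h4.comp_ofReal
  have hu : ∀ θ : ℝ, HasDerivAt (fun t : ℝ => ((Real.log a : ℝ):ℂ) + (t:ℂ) * I) I θ := by
    intro θ
    have h1 : HasDerivAt (fun t : ℝ => (t:ℂ)) ((1:ℝ):ℂ) θ := (hasDerivAt_id θ).ofReal_comp
    simpa using (h1.mul_const I).const_add ((Real.log a : ℝ):ℂ)
  -- T1 and T2
  set T1 : ℝ → ℂ := fun θ => (((Real.log a : ℝ):ℂ) + (θ:ℂ) * I) *
      (g ((a:ℂ) * Complex.exp ((θ:ℂ) * I)) * ((a:ℂ) * Complex.exp ((θ:ℂ) * I) * I)) with hT1def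
  set T2 : ℝ → ℂ := fun θ => (((Real.log a : ℝ):ℂ) + (θ:ℂ) * I) *
      (((a:ℂ) * Complex.exp ((θ:ℂ) * I) * I) / ((ω:ℂ) + (a:ℂ) * Complex.exp ((θ:ℂ) * I))) with hT2def
  have hce : Continuous (fun θ : ℝ => (a:ℂ) * Complex.exp ((θ:ℂ) * I)) := by fun_prop
  have hcu : Continuous (fun θ : ℝ => ((Real.log a : ℝ):ℂ) + (θ:ℂ) * I) := by fun_prop
  have hT1c : Continuous T1 := by
    rw [hT1def]; exact hcu.mul ((hg.continuous.comp hce).mul (hce.mul continuous_const))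
  have hT2c : Continuous T2 := by
    rw [hT2def]
    exact hcu.mul ((hce.mul continuous_const).div
      (continuous_const.add hce) (fun θ => hWe θ))
  -- splitting the contour integrand
  have hsplit : (∫ θ in (0:ℝ)..(2 * Real.pi),
        f ((a:ℂ) * Complex.exp ((θ:ℂ) * I)) * (((Real.log a : ℝ):ℂ) + (θ:ℂ) * I) /
          ((ω:ℂ) + (a:ℂ) * Complex.exp ((θ:ℂ) * I)) * (I * (a:ℂ) * Complex.exp ((θ:ℂ) * I)))
      = (∫ θ in (0:ℝ)..(2 * Real.pi), T1 θ) + f (-(ω:ℂ)) * ∫ θ in (0:ℝ)..(2 * Real.pi), T2 θ := by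
    rw [← intervalIntegral.integral_const_mul, ← intervalIntegral.integral_add (g := fun θ => f (-(ω:ℂ)) * T2 θ)
      (hT1c.intervalIntegrable _ _) ((continuous_const.mul hT2c).intervalIntegrable _ _)]
    apply intervalIntegral.integral_congr
    intro θ _
    have hne := hWe θ
    simp only [hT1def, hT2def]
    rw [hkey ((a:ℂ) * Complex.exp ((θ:ℂ) * I))]
    field_simp
    ring
  -- mean value for G
  have hmvG : (∫ θ in (0:ℝ)..(2*Real.pi), G ((a:ℂ) * Complex.exp ((θ:ℂ)*I))) = 2*Real.pi * G 0 :=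
    circle_mean_value G a ha hGdiff.differentiableOn
  -- integration by parts for T1
  have hT1v : (∫ θ in (0:ℝ)..(2*Real.pi), T1 θ) = 2*(Real.pi:ℂ)*I * (G (a:ℂ) - G 0) := by
    have hibp := intervalIntegral.integral_mul_deriv_eq_deriv_mul
      (u := fun θ : ℝ => ((Real.log a : ℝ):ℂ) + (θ:ℂ) * I)
      (v := fun θ : ℝ => G ((a:ℂ) * Complex.exp ((θ:ℂ) * I)))
      (u' := fun _ => I)
      (v' := fun θ : ℝ => g ((a:ℂ) * Complex.exp ((θ:ℂ)*I)) * ((a:ℂ) * Complex.exp ((θ:ℂ)*I) * I))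
      (fun θ _ => hu θ) (fun θ _ => (hGd _).comp θ (hE θ))
      ((continuous_const : Continuous fun _ : ℝ => I).intervalIntegrable 0 (2*Real.pi))
      (((hg.continuous.comp hce).mul (hce.mul continuous_const)).intervalIntegrable 0 (2*Real.pi))
    simp only [hT1def]
    rw [hibp]
    have hb : (a:ℂ) * Complex.exp (((2*Real.pi : ℝ):ℂ) * I) = (a:ℂ) := by
      rw [show ((2*Real.pi : ℝ):ℂ) * I = 2*(Real.pi:ℂ)*I by push_cast; ring,
        Complex.exp_two_pi_mul_I, mul_one]
    have hb0 : (a:ℂ) * Complex.exp (((0:ℝ):ℂ) * I) = (a:ℂ) := by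
      norm_num
    beta_reduce
    rw [hb, hb0, intervalIntegral.integral_const_mul, hmvG]
    push_cast
    ring
  -- FTC for g on [0,a]
  have hFTC1 : (∫ x in (0:ℝ)..a, g (x:ℂ)) = G (a:ℂ) - G 0 := by
    have h := intervalIntegral.integral_eq_sub_of_hasDerivAt
      (f := fun x : ℝ => G (x:ℂ)) (f' := fun x : ℝ => g (x:ℂ))
      (fun x _ => (hGd ((x:ℂ))).comp_ofReal)
      ((hg.continuous.comp Complex.continuous_ofReal).intervalIntegrable 0 a)
    simpa using h
  -- positivity facts on [0,a]
  have hxpos : ∀ x : ℝ, x ∈ Set.uIcc (0:ℝ) a → (0:ℝ) < ω + x := by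
    intro x hx
    rw [Set.uIcc_of_le ha.le] at hx
    have := hx.1
    linarith
  have hxslit : ∀ x : ℝ, x ∈ Set.uIcc (0:ℝ) a → ((ω:ℂ) + (x:ℂ)) ∈ Complex.slitPlane := by
    intro x hx
    rw [Complex.mem_slitPlane_iff]
    left
    simpa using hxpos x hx
  have hxne : ∀ x : ℝ, x ∈ Set.uIcc (0:ℝ) a → ((ω:ℂ) + (x:ℂ)) ≠ 0 := fun x hx =>
    Complex.slitPlane_ne_zero (hxslit x hx)
  have hFTC2 : (∫ x in (0:ℝ)..a, ((ω:ℂ) + (x:ℂ))⁻¹)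
      = ((Real.log (ω + a) : ℝ):ℂ) - ((Real.log ω : ℝ):ℂ) := by
    have h := intervalIntegral.integral_eq_sub_of_hasDerivAt
      (f := fun x : ℝ => Complex.log ((ω:ℂ) + (x:ℂ)))
      (f' := fun x : ℝ => ((ω:ℂ) + (x:ℂ))⁻¹)
      (fun x hx => by
        have hin : HasDerivAt (fun z : ℂ => (ω:ℂ) + z) 1 ((x:ℂ)) := by
          simpa using (hasDerivAt_id ((x:ℂ))).const_add ((ω:ℂ))
        have h2 := (Complex.hasDerivAt_log (hxslit x hx)).comp ((x:ℂ)) hin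
        simpa using h2.comp_ofReal)
      (((continuous_const.add Complex.continuous_ofReal).continuousOn.inv₀ hxne).intervalIntegrable)
    rw [h]
    show Complex.log ((ω:ℂ) + ((a:ℝ):ℂ)) - Complex.log ((ω:ℂ) + ((0:ℝ):ℂ)) = _
    rw [show ((ω:ℂ) + ((a:ℝ):ℂ)) = (((ω + a : ℝ)):ℂ) by push_cast; ring,
      show ((ω:ℂ) + ((0:ℝ):ℂ)) = (((ω : ℝ)):ℂ) by push_cast; ring,
      ← Complex.ofReal_log (by linarith : (0:ℝ) ≤ ω + a),
      ← Complex.ofReal_log hω.le]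
  -- LHS evaluation
  have hLHS : (∫ x in (0:ℝ)..a, f (x:ℂ) / ((ω:ℂ) + (x:ℂ)))
      = (G (a:ℂ) - G 0)
        + f (-(ω:ℂ)) * (((Real.log (ω+a) : ℝ):ℂ) - ((Real.log ω : ℝ):ℂ)) := by
    have hco : (∫ x in (0:ℝ)..a, f (x:ℂ) / ((ω:ℂ) + (x:ℂ)))
        = ∫ x in (0:ℝ)..a, (g (x:ℂ) + f (-(ω:ℂ)) * ((ω:ℂ) + (x:ℂ))⁻¹) := by
      apply intervalIntegral.integral_congr
      intro x hx
      have hne := hxne x hx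
      show f (x:ℂ) / ((ω:ℂ) + (x:ℂ)) = g (x:ℂ) + f (-(ω:ℂ)) * ((ω:ℂ) + (x:ℂ))⁻¹
      rw [hkey ((x:ℂ))]
      field_simp
      ring
    have hi1 : IntervalIntegrable (fun x : ℝ => g ((x:ℝ):ℂ)) MeasureTheory.volume 0 a :=
      (hg.continuous.comp Complex.continuous_ofReal).intervalIntegrable 0 a
    have hi2 : IntervalIntegrable (fun x : ℝ => f (-(ω:ℂ)) * ((ω:ℂ) + (x:ℂ))⁻¹)
        MeasureTheory.volume 0 a :=
      (continuous_const.continuousOn.mul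
        ((continuous_const.add Complex.continuous_ofReal).continuousOn.inv₀ hxne)).intervalIntegrable
    rw [hco, intervalIntegral.integral_add hi1 hi2,
      hFTC1, intervalIntegral.integral_const_mul, hFTC2]
  -- norms of the kernel pieces
  have hq : ∀ θ : ℝ, ‖((ω:ℂ)/(a:ℂ)) * Complex.exp (-(θ:ℂ) * I)‖ < 1 := by
    intro θ
    rw [show (-(θ:ℂ)) * I = (((-θ : ℝ)):ℂ) * I by push_cast; ring,
      norm_mul, Complex.norm_exp_ofReal_mul_I, mul_one,
      norm_div, Complex.norm_real, Complex.norm_real, Real.norm_eq_abs, Real.norm_eq_abs,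
      abs_of_pos hω, abs_of_pos ha]
    exact (div_lt_one ha).mpr hωa
  have hslit2 : ∀ θ : ℝ, 1 + ((ω:ℂ)/(a:ℂ)) * Complex.exp (-(θ:ℂ) * I) ∈ Complex.slitPlane :=
    fun θ => Complex.mem_slitPlane_of_norm_lt_one (hq θ)
  have hne2 : ∀ θ : ℝ, 1 + ((ω:ℂ)/(a:ℂ)) * Complex.exp (-(θ:ℂ) * I) ≠ 0 :=
    fun θ => Complex.slitPlane_ne_zero (hslit2 θ)
  set v₂ : ℝ → ℂ := fun t => (t:ℂ) * I + Complex.log (1 + ((ω:ℂ)/(a:ℂ)) * Complex.exp (-(t:ℂ) * I))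
    with hv2def
  have hv2d : ∀ θ : ℝ, HasDerivAt v₂
      ((a:ℂ) * Complex.exp ((θ:ℂ)*I) * I / ((ω:ℂ) + (a:ℂ) * Complex.exp ((θ:ℂ)*I))) θ := by
    intro θ
    have hw : HasDerivAt (fun z : ℂ => 1 + ((ω:ℂ)/(a:ℂ)) * Complex.exp (-z * I))
        (((ω:ℂ)/(a:ℂ)) * Complex.exp (-(θ:ℂ) * I) * (-I)) (θ:ℂ) := by
      have h2 := (Complex.hasDerivAt_exp (-(θ:ℂ) * I)).comp (θ:ℂ)
        (((hasDerivAt_id (θ:ℂ)).neg).mul_const I)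
      have h3 := (h2.const_mul ((ω:ℂ)/(a:ℂ))).const_add 1
      simpa [Function.comp, mul_comm, mul_assoc, mul_left_comm] using h3
    have hlog := (Complex.hasDerivAt_log (hslit2 θ)).comp (θ:ℂ) hw
    have hlin : HasDerivAt (fun z : ℂ => z * I) I (θ:ℂ) := by
      simpa using (hasDerivAt_id (θ:ℂ)).mul_const I
    have htot := (hlin.add hlog).comp_ofReal
    have hDval : I + (1 + ((ω:ℂ)/(a:ℂ)) * Complex.exp (-(θ:ℂ)*I))⁻¹ *
          (((ω:ℂ)/(a:ℂ)) * Complex.exp (-(θ:ℂ)*I) * (-I))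
        = (a:ℂ) * Complex.exp ((θ:ℂ)*I) * I / ((ω:ℂ) + (a:ℂ) * Complex.exp ((θ:ℂ)*I)) := by
      have h1 := hWe θ
      have h2 := hne2 θ
      have h3 := hexp θ
      have hrw : Complex.exp (-(θ:ℂ)*I) = (Complex.exp ((θ:ℂ)*I))⁻¹ := by
        rw [neg_mul, Complex.exp_neg]
      rw [hrw] at h2 ⊢
      have hD' : ((a:ℂ) * Complex.exp ((θ:ℂ) * I) * (ω:ℂ)
          + ((a:ℂ))^2 * Complex.exp ((θ:ℂ) * I)^2) ≠ 0 := by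
        have hfac : ((a:ℂ) * Complex.exp ((θ:ℂ) * I) * (ω:ℂ)
              + ((a:ℂ))^2 * Complex.exp ((θ:ℂ) * I)^2)
            = ((a:ℂ) * Complex.exp ((θ:ℂ) * I)) * ((ω:ℂ) + (a:ℂ) * Complex.exp ((θ:ℂ) * I)) := by
          ring
        rw [hfac]
        exact mul_ne_zero (mul_ne_zero hA0 h3) h1
      generalize Complex.exp ((θ:ℂ)*I) = e at *
      rw [show (1 + ((ω:ℂ)/(a:ℂ)) * e⁻¹) = ((ω:ℂ) + (a:ℂ) * e) / ((a:ℂ) * e) by field_simp; ring, inv_div]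
      field_simp
      ring
    have hres : HasDerivAt v₂ (I + (1 + ((ω:ℂ)/(a:ℂ)) * Complex.exp (-(θ:ℂ)*I))⁻¹ *
          (((ω:ℂ)/(a:ℂ)) * Complex.exp (-(θ:ℂ)*I) * (-I))) θ := htot
    rw [hDval] at hres
    exact hres
  have hψcont : Continuous
      (fun θ : ℝ => Complex.log (1 + ((ω:ℂ)/(a:ℂ)) * Complex.exp (-(θ:ℂ)*I))) := by
    apply Continuous.clog
    · fun_prop
    · exact hslit2
  -- the mean value of the analytic logarithm over the circle is zero
  have hψ0 : (∫ θ in (0:ℝ)..(2*Real.pi),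
      Complex.log (1 + ((ω:ℂ)/(a:ℂ)) * Complex.exp (-(θ:ℂ)*I))) = 0 := by
    have hFd : DifferentiableOn ℂ (fun w : ℂ => Complex.log (1 + ((ω:ℂ)/(a:ℂ)) * w))
        (Metric.closedBall 0 1) := by
      intro w hw
      have hwn : ‖w‖ ≤ 1 := by simpa [Metric.mem_closedBall, dist_zero_right] using hw
      have hqn : ‖((ω:ℂ)/(a:ℂ)) * w‖ < 1 := by
        rw [norm_mul, norm_div, Complex.norm_real, Complex.norm_real,
          Real.norm_eq_abs, Real.norm_eq_abs, abs_of_pos hω, abs_of_pos ha]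
        calc ω/a * ‖w‖ ≤ ω/a * 1 := mul_le_mul_of_nonneg_left hwn (by positivity)
          _ < 1 := by rw [mul_one]; exact (div_lt_one ha).mpr hωa
      have hd1 : DifferentiableAt ℂ (fun w : ℂ => 1 + ((ω:ℂ)/(a:ℂ)) * w) w := by fun_prop
      exact ((Complex.differentiableAt_log
        (Complex.mem_slitPlane_of_norm_lt_one hqn)).comp w hd1).differentiableWithinAt
    have hmv := circle_mean_value _ 1 one_pos hFd
    simp only [Complex.ofReal_one, one_mul, mul_zero, add_zero, Complex.log_one] at hmv
    have hsub := intervalIntegral.integral_comp_sub_left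
      (a := 0) (b := 2*Real.pi)
      (fun θ : ℝ => Complex.log (1 + ((ω:ℂ)/(a:ℂ)) * Complex.exp ((θ:ℂ) * I))) (2*Real.pi)
    have hsub' : (∫ x in (0:ℝ)..(2*Real.pi),
          Complex.log (1 + ((ω:ℂ)/(a:ℂ)) * Complex.exp ((((2*Real.pi - x : ℝ)):ℂ) * I)))
        = ∫ x in (0:ℝ)..(2*Real.pi),
            Complex.log (1 + ((ω:ℂ)/(a:ℂ)) * Complex.exp (((x:ℝ):ℂ) * I)) := by
      simpa using hsub
    have hcong : ∀ θ ∈ Set.uIcc (0:ℝ) (2*Real.pi),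
        Complex.log (1 + ((ω:ℂ)/(a:ℂ)) * Complex.exp (-(θ:ℂ)*I))
          = Complex.log (1 + ((ω:ℂ)/(a:ℂ)) * Complex.exp ((((2*Real.pi - θ : ℝ)):ℂ) * I)) := by
      intro θ _
      congr 2
      rw [show ((((2*Real.pi - θ : ℝ)):ℂ) * I) = 2*(Real.pi:ℂ)*I + (-(θ:ℂ)*I) by push_cast; ring,
        Complex.exp_add, Complex.exp_two_pi_mul_I, one_mul]
    rw [intervalIntegral.integral_congr hcong, hsub', hmv]
  -- integration by parts for T2
  have hT2v : (∫ θ in (0:ℝ)..(2*Real.pi), T2 θ)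
      = 2*(Real.pi:ℂ)*I * (((Real.log (ω+a) : ℝ):ℂ) + (Real.pi:ℂ)*I) := by
    have hibp2 := intervalIntegral.integral_mul_deriv_eq_deriv_mul
      (u := fun θ : ℝ => ((Real.log a : ℝ):ℂ) + (θ:ℂ) * I)
      (v := v₂)
      (u' := fun _ => I)
      (v' := fun θ : ℝ => (a:ℂ) * Complex.exp ((θ:ℂ)*I) * I / ((ω:ℂ) + (a:ℂ) * Complex.exp ((θ:ℂ)*I)))
      (fun θ _ => hu θ) (fun θ _ => hv2d θ)
      ((continuous_const : Continuous fun _ : ℝ => I).intervalIntegrable 0 (2*Real.pi))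
      (((hce.mul continuous_const).div (continuous_const.add hce) hWe).intervalIntegrable 0 (2*Real.pi))
    have hv2a : v₂ (2*Real.pi) = 2*(Real.pi:ℂ)*I + Complex.log (1 + ((ω:ℂ)/(a:ℂ))) := by
      simp only [hv2def]
      rw [show (-(((2*Real.pi:ℝ)):ℂ) * I) = -(2*(Real.pi:ℂ)*I) by push_cast; ring,
        Complex.exp_neg, Complex.exp_two_pi_mul_I, inv_one, mul_one]
      push_cast
      ring
    have hv2b : v₂ 0 = Complex.log (1 + ((ω:ℂ)/(a:ℂ))) := by
      simp only [hv2def]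
      norm_num
    have hv2cont : Continuous v₂ := by
      rw [hv2def]
      exact (Complex.continuous_ofReal.mul continuous_const).add hψcont
    have hintv2 : (∫ θ in (0:ℝ)..(2*Real.pi), v₂ θ)
        = (((2*Real.pi)^2/2 : ℝ):ℂ) * I := by
      simp only [hv2def]
      rw [intervalIntegral.integral_add (f := fun t : ℝ => (t:ℂ) * I)
        ((Complex.continuous_ofReal.mul continuous_const).intervalIntegrable 0 (2*Real.pi))
        (hψcont.intervalIntegrable 0 (2*Real.pi)), hψ0, add_zero,
        intervalIntegral.integral_mul_const]
      congr 1
      rw [intervalIntegral.integral_ofReal]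
      norm_num [integral_id]
    have hLg : Complex.log (1 + ((ω:ℂ)/(a:ℂ)))
        = ((Real.log (ω+a) : ℝ):ℂ) - ((Real.log a : ℝ):ℂ) := by
      rw [show (1 + ((ω:ℂ)/(a:ℂ))) = (((ω+a)/a : ℝ):ℂ) by push_cast; field_simp; ring_nf,
        ← Complex.ofReal_log (by positivity),
        Real.log_div (by positivity) ha.ne']
      push_cast
      ring
    simp only [hT2def]
    rw [hibp2]
    beta_reduce
    rw [hv2a, hv2b, intervalIntegral.integral_const_mul, hintv2, hLg]
    push_cast
    ring
  -- final assembly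
  rw [hLHS, hsplit, hT1v, hT2v]
  have h2πI : (2*(Real.pi:ℂ)*I) ≠ 0 :=
    mul_ne_zero (mul_ne_zero two_ne_zero (Complex.ofReal_ne_zero.mpr Real.pi_ne_zero))
      Complex.I_ne_zero
  field_simp
  ring
end

section
/- Let f : ℂ → ℂ be entire, 0 < ν < 1, and 0 < ω < a. Then ∫_0^a x^{−ν} f(x)/(ω+x) dx = π f(−ω)/(ω^ν sin(πν)) + (1/(e^{−2πiν} − 1)) ∫_0^{2π} f(a e^{iθ}) e^{−ν(ln a + iθ)} / (ω + a e^{iθ}) · i a e^{iθ} dθ; i.e. the integral equals π f(−ω)/(ω^ν sin πν) plus (1/(e^{−2πiν}−1)) ∫_C f(z) z^{−ν}/(ω+z) dz over the circle of radius a about the origin traversed counterclockwise, where the branch of z^{−ν} is positive on top of the positive real axis. -/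
open MeasureTheory Filter Set ComplexConjugate Topology
open Complex (I)

private lemma horiz_log' (c : ℂ) (h L R : ℝ) (hh : h ≠ c.im) :
    (∫ t : ℝ in L..R, ((t:ℂ) + h*I - c)⁻¹)
      = Complex.log ((R:ℂ) + h*I - c) - Complex.log ((L:ℂ) + h*I - c) := by
  have hne : ∀ t : ℝ, ((t:ℂ) + h*I - c) ∈ Complex.slitPlane := by
    intro t
    rw [Complex.mem_slitPlane_iff]
    have him : ((t:ℂ) + h*I - c).im = h - c.im := by simp
    rw [him]
    exact Or.inr (sub_ne_zero.mpr hh)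
  have hder : ∀ t ∈ uIcc L R,
      HasDerivAt (fun t : ℝ => Complex.log ((t:ℂ) + h*I - c)) (((t:ℂ) + h*I - c)⁻¹) t := by
    intro t _
    have h1 : HasDerivAt (fun z : ℂ => Complex.log (z + h*I - c)) (((t:ℂ) + h*I - c)⁻¹) (t:ℂ) := by
      have h2 : HasDerivAt (fun z : ℂ => z + (h:ℂ)*I - c) 1 (t:ℂ) :=
        ((hasDerivAt_id _).add_const _).sub_const _
      simpa [Function.comp_def] using (Complex.hasDerivAt_log (hne t)).scomp (t:ℂ) h2
    exact h1.comp_ofReal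
  refine intervalIntegral.integral_eq_sub_of_hasDerivAt hder ?_
  refine ContinuousOn.intervalIntegrable (ContinuousOn.inv₀ (by fun_prop) ?_)
  intro t _
  exact Complex.slitPlane_ne_zero (hne t)

private lemma vert_log_pos' (c : ℂ) (R y1 y2 : ℝ) (hR : c.re < R) :
    (∫ y : ℝ in y1..y2, I * (((R:ℂ) + y*I) - c)⁻¹)
      = Complex.log ((R:ℂ) + y2*I - c) - Complex.log ((R:ℂ) + y1*I - c) := by
  have hne : ∀ y : ℝ, ((R:ℂ) + y*I - c) ∈ Complex.slitPlane := by
    intro y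
    rw [Complex.mem_slitPlane_iff]
    left; simpa using sub_pos.mpr hR
  have hder : ∀ y ∈ uIcc y1 y2,
      HasDerivAt (fun y : ℝ => Complex.log ((R:ℂ) + y*I - c)) (I * (((R:ℂ) + y*I) - c)⁻¹) y := by
    intro y _
    have h2 : HasDerivAt (fun y : ℝ => (R:ℂ) + y*I - c) I y := by
      have : HasDerivAt (fun y : ℝ => (y:ℂ)) 1 y := Complex.ofRealCLM.hasDerivAt
      simpa using ((this.mul_const I).const_add ((R:ℂ))).sub_const c
    have := (Complex.hasDerivAt_log (hne y)).scomp y h2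
    simpa [smul_eq_mul, Function.comp_def] using this
  refine intervalIntegral.integral_eq_sub_of_hasDerivAt hder ?_
  refine ContinuousOn.intervalIntegrable (continuousOn_const.mul (ContinuousOn.inv₀ (by fun_prop) ?_))
  intro y _
  exact Complex.slitPlane_ne_zero (hne y)

private lemma vert_log_neg' (c : ℂ) (L y1 y2 : ℝ) (hL : L < c.re) :
    (∫ y : ℝ in y1..y2, I * (((L:ℂ) + y*I) - c)⁻¹)
      = Complex.log (-((L:ℂ) + y2*I - c)) - Complex.log (-((L:ℂ) + y1*I - c)) := by
  have hne : ∀ y : ℝ, (-((L:ℂ) + y*I - c)) ∈ Complex.slitPlane := by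
    intro y
    rw [Complex.mem_slitPlane_iff]
    left; simpa using sub_pos.mpr hL
  have hder : ∀ y ∈ uIcc y1 y2,
      HasDerivAt (fun y : ℝ => Complex.log (-((L:ℂ) + y*I - c))) (I * (((L:ℂ) + y*I) - c)⁻¹) y := by
    intro y _
    have h2 : HasDerivAt (fun y : ℝ => -((L:ℂ) + y*I - c)) (-I) y := by
      have : HasDerivAt (fun y : ℝ => (y:ℂ)) 1 y := Complex.ofRealCLM.hasDerivAt
      have h4 := (((this.mul_const I).const_add ((L:ℂ))).sub_const c).neg
      rw [one_mul] at h4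
      exact h4
    have h3 := (Complex.hasDerivAt_log (hne y)).scomp y h2
    have he : (-I : ℂ) • (-((L:ℂ) + y*I - c))⁻¹ = I * (((L:ℂ) + y*I) - c)⁻¹ := by
      rw [smul_eq_mul, inv_neg]; ring
    rw [he] at h3
    exact h3
  refine intervalIntegral.integral_eq_sub_of_hasDerivAt hder ?_
  refine ContinuousOn.intervalIntegrable (continuousOn_const.mul (ContinuousOn.inv₀ (by fun_prop) ?_))
  intro y _
  have := Complex.slitPlane_ne_zero (hne y)
  exact fun h => this (by rw [h, neg_zero])

private lemma pole_rect' (x0 L R : ℝ) (hL : L < x0) (hR : x0 < R) :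
    (∫ t : ℝ in L..R, ((t:ℂ) - ((x0:ℂ) + Real.pi*I))⁻¹)
    - (∫ t : ℝ in L..R, ((t:ℂ) + (2*Real.pi:ℝ)*I - ((x0:ℂ) + Real.pi*I))⁻¹)
    + I • (∫ y : ℝ in (0:ℝ)..(2*Real.pi), (((R:ℂ) + y*I) - ((x0:ℂ) + Real.pi*I))⁻¹)
    - I • (∫ y : ℝ in (0:ℝ)..(2*Real.pi), (((L:ℂ) + y*I) - ((x0:ℂ) + Real.pi*I))⁻¹)
    = 2 * Real.pi * I := by
  have hπ : (0:ℝ) < Real.pi := Real.pi_pos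
  set c : ℂ := (x0:ℂ) + Real.pi*I with hc
  have hcre : c.re = x0 := by simp [hc]
  have hcim : c.im = Real.pi := by simp [hc]
  have hb0 : (∫ t : ℝ in L..R, ((t:ℂ) - c)⁻¹)
      = ∫ t : ℝ in L..R, ((t:ℂ) + (0:ℝ)*I - c)⁻¹ := by
    simp
  have hs1 : I • (∫ y : ℝ in (0:ℝ)..(2*Real.pi), (((R:ℂ) + y*I) - c)⁻¹)
      = ∫ y : ℝ in (0:ℝ)..(2*Real.pi), I * (((R:ℂ) + y*I) - c)⁻¹ := by
    rw [intervalIntegral.integral_const_mul, smul_eq_mul]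
  have hs2 : I • (∫ y : ℝ in (0:ℝ)..(2*Real.pi), (((L:ℂ) + y*I) - c)⁻¹)
      = ∫ y : ℝ in (0:ℝ)..(2*Real.pi), I * (((L:ℂ) + y*I) - c)⁻¹ := by
    rw [intervalIntegral.integral_const_mul, smul_eq_mul]
  rw [hb0, hs1, hs2, horiz_log' c 0 L R (by rw [hcim]; exact hπ.ne),
    horiz_log' c (2*Real.pi) L R (by rw [hcim]; nlinarith),
    vert_log_pos' c R 0 (2*Real.pi) (by rw [hcre]; exact hR),
    vert_log_neg' c L 0 (2*Real.pi) (by rw [hcre]; exact hL)]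
  set u : ℝ := L - x0 with hu
  have hu0 : u < 0 := by simp [hu]; linarith
  set z1 : ℂ := (u:ℂ) + Real.pi*I with hz1
  set z2 : ℂ := (-u:ℂ) + Real.pi*I with hz2
  have e3 : -((L:ℂ) + ((2*Real.pi:ℝ):ℂ)*I - c) = conj z2 := by
    apply Complex.ext <;> simp [hz2, hc, hu] <;> ring
  have e4 : -((L:ℂ) + ((0:ℝ):ℂ)*I - c) = z2 := by
    apply Complex.ext <;> simp [hz2, hc, hu]
  have e1 : (L:ℂ) + ((0:ℝ):ℂ)*I - c = conj z1 := by
    apply Complex.ext <;> simp [hz1, hc, hu]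
  have e2 : (L:ℂ) + ((2*Real.pi:ℝ):ℂ)*I - c = z1 := by
    apply Complex.ext <;> simp [hz1, hc, hu] <;> ring
  rw [e3, e4, e1, e2]
  have harg : ∀ z : ℂ, z.im = Real.pi → z.arg ≠ Real.pi := by
    intro z hz h
    have := (Complex.arg_eq_pi_iff.mp h).2
    rw [hz] at this; exact hπ.ne' this
  have him1 : z1.im = Real.pi := by simp [hz1]
  have him2 : z2.im = Real.pi := by simp [hz2]
  have l1 : Complex.log (conj z1) = conj (Complex.log z1) := Complex.log_conj _ (harg _ him1)
  have l2 : Complex.log (conj z2) = conj (Complex.log z2) := Complex.log_conj _ (harg _ him2)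
  have key : ∀ z : ℂ, Complex.log z - conj (Complex.log z) = (2 * z.arg : ℝ) * I := by
    intro z
    rw [Complex.sub_conj, Complex.log_im]
  have habs : ‖z1‖ = ‖z2‖ := by
    simp [Complex.norm_def, Complex.normSq_apply, hz1, hz2]
  have a1 : z1.arg = Real.arcsin ((-z1).im / ‖z1‖) + Real.pi :=
    Complex.arg_of_re_neg_of_im_nonneg (by simp [hz1]; exact hu0) (by rw [him1]; exact hπ.le)
  have a2 : z2.arg = Real.arcsin (z2.im / ‖z2‖) :=
    Complex.arg_of_re_nonneg (by simp [hz2]; linarith)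
  have hsum : z1.arg + z2.arg = Real.pi := by
    rw [a1, a2, habs, him2]
    have : (-z1).im = -Real.pi := by simp [him1]
    rw [this, neg_div, Real.arcsin_neg]
    ring
  calc Complex.log ((R:ℂ) + ((0:ℝ):ℂ)*I - c) - Complex.log (conj z1) -
        (Complex.log ((R:ℂ) + ((2*Real.pi:ℝ):ℂ)*I - c) - Complex.log z1) +
        (Complex.log ((R:ℂ) + ((2*Real.pi:ℝ):ℂ)*I - c) - Complex.log ((R:ℂ) + ((0:ℝ):ℂ)*I - c)) -
        (Complex.log (conj z2) - Complex.log z2)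
      = (Complex.log z1 - conj (Complex.log z1)) + (Complex.log z2 - conj (Complex.log z2)) := by
        rw [l1, l2]; ring
    _ = ((2 * z1.arg : ℝ) * I) + ((2 * z2.arg : ℝ) * I) := by rw [key, key]
    _ = 2 * Real.pi * I := by
        push_cast
        rw [← hsum]
        push_cast
        ring


set_option maxHeartbeats 2000000 in
/-- For `f : ℂ → ℂ` entire, `0 < ν < 1`, and `0 < ω < a`,
`∫_0^a x^{−ν} f(x)/(ω+x) dx = π f(−ω)/(ω^ν sin(πν))` plus the contour integral
`(1/(e^{−2πiν} − 1)) ∫_C f(z) z^{−ν}/(ω+z) dz` over the circle of radius `a`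
(parametrized by `z = a e^{iθ}`, with `z^{−ν} = e^{−ν(ln a + iθ)}`). -/
theorem incomplete_stieltjes_branch_contour_rep (f : ℂ → ℂ) (hf : Differentiable ℂ f)
    (ν : ℝ) (hν0 : 0 < ν) (hν1 : ν < 1) (ω a : ℝ) (hω : 0 < ω) (hωa : ω < a) :
    (∫ x in (0:ℝ)..a, ((x ^ (-ν) : ℝ) : ℂ) * f x / ((ω : ℂ) + x))
      = (Real.pi : ℂ) * f (-(ω : ℂ)) /
          (((ω ^ ν : ℝ) : ℂ) * ((Real.sin (Real.pi * ν) : ℝ) : ℂ))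
        + (1 / (Complex.exp (-2 * Real.pi * ν * Complex.I) - 1)) *
          ∫ θ in (0:ℝ)..(2 * Real.pi),
            f (a * Complex.exp (θ * Complex.I)) *
                Complex.exp (-(ν : ℂ) * ((Real.log a : ℂ) + θ * Complex.I)) /
                ((ω : ℂ) + a * Complex.exp (θ * Complex.I)) *
              (Complex.I * a * Complex.exp (θ * Complex.I)) := by
  have hπ : (0:ℝ) < Real.pi := Real.pi_pos
  have ha : 0 < a := hω.trans hωa
  set x0 : ℝ := Real.log ω with hx0def
  set R : ℝ := Real.log a with hRdef
  have hx0R : x0 < R := Real.log_lt_log hω hωa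
  set w0 : ℂ := (x0:ℂ) + Real.pi * I with hw0def
  set D : ℂ → ℂ := fun w => (ω:ℂ) + Complex.exp w with hDdef
  set N : ℂ → ℂ := fun w => f (Complex.exp w) * Complex.exp ((1 - (ν:ℂ)) * w) with hNdef
  have hexpx0 : Complex.exp (x0:ℂ) = (ω:ℂ) := by
    rw [← Complex.ofReal_exp, Complex.ofReal_inj]
    exact Real.exp_log hω
  have hexpR : Complex.exp (R:ℂ) = (a:ℂ) := by
    rw [← Complex.ofReal_exp, Complex.ofReal_inj]
    exact Real.exp_log ha
  have hexpw0 : Complex.exp w0 = -(ω:ℂ) := by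
    rw [hw0def, Complex.exp_add, hexpx0, Complex.exp_pi_mul_I]; ring
  have hD0 : D w0 = 0 := by simp only [hDdef, hexpw0]; ring
  have hDne : ∀ w : ℂ, w.im ∈ Icc (0:ℝ) (2*Real.pi) → w ≠ w0 → D w ≠ 0 := by
    intro w him hne hDw
    have hew : Complex.exp w = Complex.exp w0 := by
      rw [hexpw0]
      simp only [hDdef] at hDw
      linear_combination hDw
    obtain ⟨n, hn⟩ := Complex.exp_eq_exp_iff_exists_int.mp hew
    have him' : w.im = Real.pi + 2*Real.pi*(n:ℝ) := by
      rw [hn]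
      simp [hw0def]
      ring
    obtain ⟨h1, h2⟩ := him
    rw [him'] at h1 h2
    have hn1 : -1 < (n:ℝ) := by nlinarith
    have hn2 : (n:ℝ) < 1 := by nlinarith
    have hn1' : (-1:ℤ) < n := by exact_mod_cast hn1
    have hn2' : n < (1:ℤ) := by exact_mod_cast hn2
    have hn0 : n = 0 := by omega
    rw [hn0] at hn
    simp at hn
    exact hne hn
  -- dslope machinery
  set dD : ℂ → ℂ := dslope D w0 with hdDdef
  have hDd : Differentiable ℂ D := by
    simp only [hDdef]
    exact (differentiable_const _).add Complex.differentiable_exp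
  have hNd : Differentiable ℂ N := by
    simp only [hNdef]
    exact (hf.comp Complex.differentiable_exp).mul
      (Complex.differentiable_exp.comp (differentiable_id.const_mul _))
  have hdDd : Differentiable ℂ dD := by
    rw [← differentiableOn_univ]
    exact (Complex.differentiableOn_dslope (univ_mem)).mpr hDd.differentiableOn
  have hDderiv : deriv D w0 = Complex.exp w0 := by
    have : HasDerivAt D (Complex.exp w0) w0 := by
      simp only [hDdef]
      exact (Complex.hasDerivAt_exp w0).const_add _
    exact this.deriv
  have hdD0 : dD w0 = -(ω:ℂ) := by
    rw [hdDdef, dslope_same, hDderiv, hexpw0]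
  have hdDne : ∀ w : ℂ, w.im ∈ Icc (0:ℝ) (2*Real.pi) → dD w ≠ 0 := by
    intro w him
    rcases eq_or_ne w w0 with rfl | hne
    · rw [hdD0]
      simpa using hω.ne'
    · rw [hdDdef, dslope_of_ne _ hne, slope_def_field, hD0, sub_zero]
      exact div_ne_zero (hDne w him hne) (sub_ne_zero.mpr hne)
  set Φ : ℂ → ℂ := fun w => N w * (dD w)⁻¹ with hΦdef
  set K : ℂ → ℂ := dslope Φ w0 with hKdef
  set r : ℂ := Φ w0 with hrdef
  have hGeq : ∀ w : ℂ, w ≠ w0 → D w ≠ 0 → w.im ∈ Icc (0:ℝ) (2*Real.pi) →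
      N w / D w = K w + r * (w - w0)⁻¹ := by
    intro w hne hDw him
    have hsub : w - w0 ≠ 0 := sub_ne_zero.mpr hne
    have hdDw : dD w = D w / (w - w0) := by
      rw [hdDdef, dslope_of_ne _ hne, slope_def_field, hD0, sub_zero]
    have hKw : K w = (Φ w - Φ w0) / (w - w0) := by
      rw [hKdef, dslope_of_ne _ hne, slope_def_field]
    rw [hKw, hrdef]
    have hΦw : Φ w = N w * (w - w0) / D w := by
      simp only [hΦdef]
      rw [hdDw]
      field_simp
    rw [hΦw]
    field_simp
    ring
  have h2π : (0:ℝ) < 2*Real.pi := by linarith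
  set E : ℂ := Complex.exp (-2 * Real.pi * ν * Complex.I) with hEdef
  have hrectK : ∀ L : ℝ, L < x0 →
      (∫ t : ℝ in L..R, K ((t:ℂ))) - (∫ t : ℝ in L..R, K ((t:ℂ) + (2*Real.pi:ℝ)*I))
      + I • (∫ y : ℝ in (0:ℝ)..(2*Real.pi), K ((R:ℂ) + (y:ℂ)*I))
      - I • (∫ y : ℝ in (0:ℝ)..(2*Real.pi), K ((L:ℂ) + (y:ℂ)*I)) = 0 := by
    intro L hL
    have hLR : L < R := hL.trans hx0R
    set Rect : Set ℂ := uIcc L R ×ℂ uIcc (0:ℝ) (2*Real.pi) with hRect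
    have hsubim : ∀ w ∈ Rect, w.im ∈ Icc (0:ℝ) (2*Real.pi) := by
      intro w hw
      have := (Complex.mem_reProdIm.mp hw).2
      rwa [uIcc_of_le h2π.le] at this
    have hΦdiff : DifferentiableOn ℂ Φ Rect := by
      simp only [hΦdef]
      exact hNd.differentiableOn.mul ((hdDd.differentiableOn).inv
        (fun w hw => hdDne w (hsubim w hw)))
    have hmem : Rect ∈ 𝓝 w0 := by
      rw [mem_nhds_iff]
      refine ⟨Ioo L R ×ℂ Ioo (0:ℝ) (2*Real.pi), ?_, isOpen_Ioo.reProdIm isOpen_Ioo, ?_⟩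
      · intro z hz
        obtain ⟨h1, h2⟩ := Complex.mem_reProdIm.mp hz
        rw [hRect]
        rw [Complex.mem_reProdIm, uIcc_of_le hLR.le, uIcc_of_le h2π.le]
        exact ⟨Ioo_subset_Icc_self h1, Ioo_subset_Icc_self h2⟩
      · rw [Complex.mem_reProdIm]
        constructor
        · simp only [hw0def, Complex.add_re, Complex.ofReal_re, Complex.mul_re,
            Complex.I_re, Complex.I_im, Complex.ofReal_im]
          norm_num
          exact ⟨hL, hx0R⟩
        · simp only [hw0def, Complex.add_im, Complex.ofReal_im, Complex.mul_im,
            Complex.I_re, Complex.I_im, Complex.ofReal_re]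
          norm_num
          exact ⟨hπ, by linarith⟩
    have hKdiff : DifferentiableOn ℂ K Rect := by
      rw [hKdef]
      exact (Complex.differentiableOn_dslope hmem).mpr hΦdiff
    have h0 := Complex.integral_boundary_rect_eq_zero_of_differentiableOn K (L:ℂ)
      ((R:ℂ) + (2*Real.pi:ℝ)*I) (by simpa using hKdiff)
    simpa using h0
  have hrectG : ∀ L : ℝ, L < x0 →
      (1 - E) * (∫ t : ℝ in L..R, N ((t:ℂ)) / D ((t:ℂ)))
      + I • (∫ y : ℝ in (0:ℝ)..(2*Real.pi), N ((R:ℂ) + (y:ℂ)*I) / D ((R:ℂ) + (y:ℂ)*I))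
      - I • (∫ y : ℝ in (0:ℝ)..(2*Real.pi), N ((L:ℂ) + (y:ℂ)*I) / D ((L:ℂ) + (y:ℂ)*I))
      = 2 * Real.pi * I * r := by
    intro L hL
    have hLR : L < R := hL.trans hx0R
    have hK0 := hrectK L hL
    have hpole := pole_rect' x0 L R hL hx0R
    rw [← hw0def] at hpole
    -- basic nonvanishing facts on the four sides
    have hne_bot : ∀ t : ℝ, ((t:ℂ)) ≠ w0 := by
      intro t h
      have := congrArg Complex.im h
      simp [hw0def] at this
      exact hπ.ne' this.symm
    have hne_top : ∀ t : ℝ, ((t:ℂ) + (2*Real.pi:ℝ)*I) ≠ w0 := by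
      intro t h
      have := congrArg Complex.im h
      simp [hw0def] at this
    have hne_right : ∀ y : ℝ, ((R:ℂ) + (y:ℂ)*I) ≠ w0 := by
      intro y h
      have := congrArg Complex.re h
      simp [hw0def] at this
      linarith
    have hne_left : ∀ y : ℝ, ((L:ℂ) + (y:ℂ)*I) ≠ w0 := by
      intro y h
      have := congrArg Complex.re h
      simp [hw0def] at this
      linarith
    -- membership of side points in the rectangle / strip
    have him_bot : ∀ t : ℝ, ((t:ℂ)).im ∈ Icc (0:ℝ) (2*Real.pi) := by
      intro t; simp; positivity
    have him_top : ∀ t : ℝ, ((t:ℂ) + (2*Real.pi:ℝ)*I).im ∈ Icc (0:ℝ) (2*Real.pi) := by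
      intro t; simp; positivity
    have him_side : ∀ y : ℝ, y ∈ uIcc (0:ℝ) (2*Real.pi) →
        ((R:ℂ) + (y:ℂ)*I).im ∈ Icc (0:ℝ) (2*Real.pi) ∧
        ((L:ℂ) + (y:ℂ)*I).im ∈ Icc (0:ℝ) (2*Real.pi) := by
      intro y hy
      rw [uIcc_of_le h2π.le] at hy
      constructor <;> simpa using hy
    -- continuity of K on the rectangle
    set Rect : Set ℂ := uIcc L R ×ℂ uIcc (0:ℝ) (2*Real.pi) with hRect
    have hsubim : ∀ w ∈ Rect, w.im ∈ Icc (0:ℝ) (2*Real.pi) := by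
      intro w hw
      have := (Complex.mem_reProdIm.mp hw).2
      rwa [uIcc_of_le h2π.le] at this
    have hΦdiff : DifferentiableOn ℂ Φ Rect := by
      simp only [hΦdef]
      exact hNd.differentiableOn.mul ((hdDd.differentiableOn).inv
        (fun w hw => hdDne w (hsubim w hw)))
    have hmem : Rect ∈ 𝓝 w0 := by
      rw [mem_nhds_iff]
      refine ⟨Ioo L R ×ℂ Ioo (0:ℝ) (2*Real.pi), ?_, isOpen_Ioo.reProdIm isOpen_Ioo, ?_⟩
      · intro z hz
        obtain ⟨h1, h2⟩ := Complex.mem_reProdIm.mp hz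
        rw [hRect, Complex.mem_reProdIm, uIcc_of_le hLR.le, uIcc_of_le h2π.le]
        exact ⟨Ioo_subset_Icc_self h1, Ioo_subset_Icc_self h2⟩
      · rw [Complex.mem_reProdIm]
        constructor
        · simp only [hw0def, Complex.add_re, Complex.ofReal_re, Complex.mul_re,
            Complex.I_re, Complex.I_im, Complex.ofReal_im]
          norm_num
          exact ⟨hL, hx0R⟩
        · simp only [hw0def, Complex.add_im, Complex.ofReal_im, Complex.mul_im,
            Complex.I_re, Complex.I_im, Complex.ofReal_re]
          norm_num
          exact ⟨hπ, by linarith⟩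
    have hKcont : ContinuousOn K Rect := by
      rw [hKdef]
      exact ((Complex.differentiableOn_dslope hmem).mpr hΦdiff).continuousOn
    -- interval integrability of the K-restrictions
    have hKbot : IntervalIntegrable (fun t : ℝ => K ((t:ℂ))) volume L R := by
      refine (hKcont.comp (Complex.continuous_ofReal.continuousOn) ?_).intervalIntegrable
      intro t ht
      rw [hRect, Complex.mem_reProdIm]
      refine ⟨by simpa using ht, ?_⟩
      simp only [Complex.ofReal_im]
      exact left_mem_uIcc
    have hKtop : IntervalIntegrable (fun t : ℝ => K ((t:ℂ) + (2*Real.pi:ℝ)*I)) volume L R := by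
      refine (hKcont.comp (by fun_prop) ?_).intervalIntegrable
      intro t ht
      rw [hRect, Complex.mem_reProdIm]
      constructor
      · simpa using ht
      · simp only [Complex.add_im, Complex.ofReal_im, Complex.mul_im, Complex.I_im,
          Complex.I_re, Complex.ofReal_re]
        norm_num
    have hKright : IntervalIntegrable (fun y : ℝ => K ((R:ℂ) + (y:ℂ)*I)) volume 0 (2*Real.pi) := by
      refine (hKcont.comp (by fun_prop) ?_).intervalIntegrable
      intro y hy
      rw [hRect, Complex.mem_reProdIm]
      constructor
      · simp only [Complex.add_re, Complex.ofReal_re, Complex.mul_re, Complex.I_re,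
          Complex.I_im, Complex.ofReal_im]
        norm_num
      · simpa using hy
    have hKleft : IntervalIntegrable (fun y : ℝ => K ((L:ℂ) + (y:ℂ)*I)) volume 0 (2*Real.pi) := by
      refine (hKcont.comp (by fun_prop) ?_).intervalIntegrable
      intro y hy
      rw [hRect, Complex.mem_reProdIm]
      constructor
      · simp only [Complex.add_re, Complex.ofReal_re, Complex.mul_re, Complex.I_re,
          Complex.I_im, Complex.ofReal_im]
        norm_num
      · simpa using hy
    -- interval integrability of the pole-restrictions
    have hPbot : IntervalIntegrable (fun t : ℝ => ((t:ℂ) - w0)⁻¹) volume L R := by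
      refine (ContinuousOn.inv₀ (by fun_prop) ?_).intervalIntegrable
      intro t _
      exact sub_ne_zero.mpr (hne_bot t)
    have hPtop : IntervalIntegrable (fun t : ℝ => ((t:ℂ) + (2*Real.pi:ℝ)*I - w0)⁻¹) volume L R := by
      refine (ContinuousOn.inv₀ (by fun_prop) ?_).intervalIntegrable
      intro t _
      exact sub_ne_zero.mpr (hne_top t)
    have hPright : IntervalIntegrable (fun y : ℝ => ((R:ℂ) + (y:ℂ)*I - w0)⁻¹) volume 0 (2*Real.pi) := by
      refine (ContinuousOn.inv₀ (by fun_prop) ?_).intervalIntegrable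
      intro y _
      exact sub_ne_zero.mpr (hne_right y)
    have hPleft : IntervalIntegrable (fun y : ℝ => ((L:ℂ) + (y:ℂ)*I - w0)⁻¹) volume 0 (2*Real.pi) := by
      refine (ContinuousOn.inv₀ (by fun_prop) ?_).intervalIntegrable
      intro y _
      exact sub_ne_zero.mpr (hne_left y)
    -- side decompositions
    have hbot : (∫ t : ℝ in L..R, N ((t:ℂ)) / D ((t:ℂ)))
        = (∫ t : ℝ in L..R, K ((t:ℂ))) + r * ∫ t : ℝ in L..R, ((t:ℂ) - w0)⁻¹ := by
      rw [← intervalIntegral.integral_const_mul,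
        ← intervalIntegral.integral_add hKbot (hPbot.const_mul r)]
      refine intervalIntegral.integral_congr fun t _ => ?_
      exact hGeq _ (hne_bot t) (hDne _ (him_bot t) (hne_bot t)) (him_bot t)
    have htopdec : (∫ t : ℝ in L..R, N ((t:ℂ) + (2*Real.pi:ℝ)*I) / D ((t:ℂ) + (2*Real.pi:ℝ)*I))
        = (∫ t : ℝ in L..R, K ((t:ℂ) + (2*Real.pi:ℝ)*I))
          + r * ∫ t : ℝ in L..R, ((t:ℂ) + (2*Real.pi:ℝ)*I - w0)⁻¹ := by
      rw [← intervalIntegral.integral_const_mul,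
        ← intervalIntegral.integral_add hKtop (hPtop.const_mul r)]
      refine intervalIntegral.integral_congr fun t _ => ?_
      exact hGeq _ (hne_top t) (hDne _ (him_top t) (hne_top t)) (him_top t)
    have hright : (∫ y : ℝ in (0:ℝ)..(2*Real.pi), N ((R:ℂ) + (y:ℂ)*I) / D ((R:ℂ) + (y:ℂ)*I))
        = (∫ y : ℝ in (0:ℝ)..(2*Real.pi), K ((R:ℂ) + (y:ℂ)*I))
          + r * ∫ y : ℝ in (0:ℝ)..(2*Real.pi), ((R:ℂ) + (y:ℂ)*I - w0)⁻¹ := by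
      rw [← intervalIntegral.integral_const_mul,
        ← intervalIntegral.integral_add hKright (hPright.const_mul r)]
      refine intervalIntegral.integral_congr fun y hy => ?_
      exact hGeq _ (hne_right y) (hDne _ ((him_side y hy).1) (hne_right y)) ((him_side y hy).1)
    have hleft : (∫ y : ℝ in (0:ℝ)..(2*Real.pi), N ((L:ℂ) + (y:ℂ)*I) / D ((L:ℂ) + (y:ℂ)*I))
        = (∫ y : ℝ in (0:ℝ)..(2*Real.pi), K ((L:ℂ) + (y:ℂ)*I))
          + r * ∫ y : ℝ in (0:ℝ)..(2*Real.pi), ((L:ℂ) + (y:ℂ)*I - w0)⁻¹ := by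
      rw [← intervalIntegral.integral_const_mul,
        ← intervalIntegral.integral_add hKleft (hPleft.const_mul r)]
      refine intervalIntegral.integral_congr fun y hy => ?_
      exact hGeq _ (hne_left y) (hDne _ ((him_side y hy).2) (hne_left y)) ((him_side y hy).2)
    -- top side is E times the bottom side
    have htopE : (∫ t : ℝ in L..R, N ((t:ℂ) + (2*Real.pi:ℝ)*I) / D ((t:ℂ) + (2*Real.pi:ℝ)*I))
        = E * (∫ t : ℝ in L..R, N ((t:ℂ)) / D ((t:ℂ))) := by
      rw [← intervalIntegral.integral_const_mul]
      refine intervalIntegral.integral_congr fun t _ => ?_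
      have hexp' : Complex.exp ((t:ℂ) + (2*Real.pi:ℝ)*I) = Complex.exp ((t:ℂ)) := by
        rw [show ((t:ℂ) + ((2*Real.pi:ℝ):ℂ)*I) = (t:ℂ) + 2*(Real.pi:ℂ)*I by push_cast; ring,
          Complex.exp_add, Complex.exp_two_pi_mul_I, mul_one]
      have hD' : D ((t:ℂ) + (2*Real.pi:ℝ)*I) = D ((t:ℂ)) := by
        simp only [hDdef]
        rw [hexp']
      have hN' : N ((t:ℂ) + (2*Real.pi:ℝ)*I) = E * N ((t:ℂ)) := by
        simp only [hNdef]
        rw [hexp', show (1 - (ν:ℂ)) * ((t:ℂ) + ((2*Real.pi:ℝ):ℂ)*I)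
            = (1 - (ν:ℂ)) * (t:ℂ) + 2*(Real.pi:ℂ)*I + (-2 * Real.pi * ν * Complex.I)
            by push_cast; ring, Complex.exp_add, Complex.exp_add, Complex.exp_two_pi_mul_I,
          hEdef]
        ring
      rw [hD', hN', mul_div_assoc]
    simp only [smul_eq_mul] at hK0 hpole ⊢
    linear_combination hbot - (htopE.symm.trans htopdec) + I*hright - I*hleft + hK0 + r*hpole
  -- change of variables on the bottom edge
  set g : ℝ → ℂ := fun x => ((x ^ (-ν) : ℝ) : ℂ) * f x / ((ω : ℂ) + x) with hgdef
  have hgcont : ContinuousOn g (Ioi (0:ℝ)) := by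
    simp only [hgdef]
    apply ContinuousOn.div
    · apply ContinuousOn.mul
      · exact Complex.continuous_ofReal.comp_continuousOn
          (ContinuousOn.rpow_const continuousOn_id (fun x hx => Or.inl (ne_of_gt hx)))
      · exact (hf.continuous.comp Complex.continuous_ofReal).continuousOn
    · fun_prop
    · intro x hx
      have : ((ω:ℂ) + (x:ℂ)) = (((ω + x:ℝ)):ℂ) := by push_cast; ring
      rw [this]
      rw [Complex.ofReal_ne_zero]
      have : (0:ℝ) < x := hx
      positivity
  have hchg : ∀ L : ℝ, (∫ t : ℝ in L..R, N ((t:ℂ)) / D ((t:ℂ)))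
      = ∫ x in Real.exp L..a, g x := by
    intro L
    have h1 : ∀ t : ℝ, Real.exp t • (g ∘ Real.exp) t = N ((t:ℂ)) / D ((t:ℂ)) := by
      intro t
      have e1 : ((Real.exp t : ℝ) : ℂ) = Complex.exp (t:ℂ) := Complex.ofReal_exp t
      have e2 : ((Real.exp t ^ (-ν) : ℝ) : ℂ) = Complex.exp (-(ν:ℂ) * t) := by
        rw [Real.rpow_def_of_pos (Real.exp_pos t), Real.log_exp, Complex.ofReal_exp,
          show ((t * -ν : ℝ) : ℂ) = -(ν:ℂ) * t by push_cast; ring]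
      have e3 : Complex.exp ((1 - (ν:ℂ)) * t) = Complex.exp (t:ℂ) * Complex.exp (-(ν:ℂ) * t) := by
        rw [← Complex.exp_add]; congr 1; ring
      simp only [hgdef, hNdef, hDdef, Function.comp_apply]
      rw [Complex.real_smul, e1, e2, e3]
      ring
    have himage : Real.exp '' uIcc L R ⊆ Ioi (0:ℝ) := by
      rintro x ⟨t, _, rfl⟩
      exact Real.exp_pos t
    calc (∫ t : ℝ in L..R, N ((t:ℂ)) / D ((t:ℂ)))
        = ∫ t : ℝ in L..R, Real.exp t • (g ∘ Real.exp) t :=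
          (intervalIntegral.integral_congr fun t _ => (h1 t).symm)
      _ = ∫ x in Real.exp L..Real.exp R, g x := by
          apply intervalIntegral.integral_comp_smul_deriv'' Real.continuous_exp.continuousOn
            (fun x _ => (Real.hasDerivAt_exp x).hasDerivWithinAt)
            Real.continuous_exp.continuousOn (hgcont.mono himage)
      _ = ∫ x in Real.exp L..a, g x := by rw [hRdef, Real.exp_log ha]
  -- integrability of g on [0, a]
  obtain ⟨M, hM⟩ := isCompact_Icc.exists_bound_of_continuousOn
    (s := Icc (0:ℝ) a) ((hf.continuous.comp Complex.continuous_ofReal).continuousOn (f := fun x : ℝ => f ((x:ℝ):ℂ)))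
  have hM0 : 0 ≤ M := le_trans (norm_nonneg _) (hM 0 ⟨le_refl 0, ha.le⟩)
  have hgInt : IntervalIntegrable g volume 0 a := by
    rw [intervalIntegrable_iff, uIoc_of_le ha.le]
    have hbound : IntegrableOn (fun x => (M/ω) * x ^ (-ν)) (Ioc 0 a) volume := by
      have h1 : IntervalIntegrable (fun x : ℝ => x ^ (-ν)) volume 0 a :=
        intervalIntegral.intervalIntegrable_rpow' (by linarith)
      have h2 := h1.const_mul (M/ω)
      rwa [intervalIntegrable_iff, uIoc_of_le ha.le] at h2
    refine hbound.mono' ?_ ?_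
    · exact (hgcont.mono Ioc_subset_Ioi_self).aestronglyMeasurable measurableSet_Ioc
    · rw [ae_restrict_iff' measurableSet_Ioc]
      filter_upwards with x hx
      obtain ⟨hx0, hxa⟩ := hx
      have hnorm : ‖g x‖ = x ^ (-ν) * ‖f (x:ℂ)‖ / (ω + x) := by
        simp only [hgdef]
        rw [norm_div, norm_mul, Complex.norm_real, Real.norm_eq_abs,
          abs_of_nonneg (Real.rpow_nonneg hx0.le _),
          show ((ω:ℂ) + (x:ℂ)) = (((ω + x : ℝ)):ℂ) by push_cast; ring,
          Complex.norm_real, Real.norm_eq_abs, abs_of_pos (by positivity)]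
      rw [hnorm]
      have h1 : ‖f (x:ℂ)‖ ≤ M := hM x ⟨hx0.le, hxa⟩
      calc x ^ (-ν) * ‖f (x:ℂ)‖ / (ω + x) ≤ x ^ (-ν) * M / ω :=
            div_le_div₀ (mul_nonneg (Real.rpow_nonneg hx0.le _) hM0)
              (mul_le_mul_of_nonneg_left h1 (Real.rpow_nonneg hx0.le _)) hω (by linarith)
        _ = M/ω * x ^ (-ν) := by ring
  -- limit of the bottom integral
  have hlimB : Tendsto (fun L : ℝ => ∫ x in Real.exp L..a, g x) atBot
      (𝓝 (∫ x in (0:ℝ)..a, g x)) := by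
    have hprim : ContinuousOn (fun u : ℝ => ∫ x in (0:ℝ)..u, g x) (uIcc (0:ℝ) a) := by
      apply intervalIntegral.continuousOn_primitive_interval
      rw [uIcc_of_le ha.le]
      rw [integrableOn_Icc_iff_integrableOn_Ioc]
      have := hgInt
      rwa [intervalIntegrable_iff, uIoc_of_le ha.le] at this
    have hexp_tend : Tendsto Real.exp atBot (𝓝[uIcc (0:ℝ) a] 0) := by
      rw [tendsto_nhdsWithin_iff]
      refine ⟨Real.tendsto_exp_atBot, ?_⟩
      filter_upwards [eventually_le_atBot R] with L hL
      rw [uIcc_of_le ha.le]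
      refine ⟨(Real.exp_pos L).le, ?_⟩
      calc Real.exp L ≤ Real.exp R := Real.exp_le_exp.mpr hL
        _ = a := by rw [hRdef, Real.exp_log ha]
    have h2 : Tendsto (fun L : ℝ => ∫ x in (0:ℝ)..Real.exp L, g x) atBot (𝓝 0) := by
      have h3 := (hprim 0 left_mem_uIcc).tendsto.comp hexp_tend
      simpa [Function.comp_def] using h3
    have h4 : Tendsto (fun L : ℝ => (∫ x in (0:ℝ)..a, g x) - ∫ x in (0:ℝ)..Real.exp L, g x)
        atBot (𝓝 ((∫ x in (0:ℝ)..a, g x) - 0)) := tendsto_const_nhds.sub h2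
    rw [sub_zero] at h4
    refine Filter.Tendsto.congr' ?_ h4
    filter_upwards [eventually_le_atBot R] with L hL
    have hsub : uIcc (0:ℝ) (Real.exp L) ⊆ uIcc (0:ℝ) a := by
      apply uIcc_subset_uIcc left_mem_uIcc
      rw [uIcc_of_le ha.le]
      refine ⟨(Real.exp_pos L).le, ?_⟩
      calc Real.exp L ≤ Real.exp R := Real.exp_le_exp.mpr hL
        _ = a := by rw [hRdef, Real.exp_log ha]
    exact intervalIntegral.integral_interval_sub_left hgInt (hgInt.mono_set hsub)
  -- the left edge integral tends to zero
  obtain ⟨M1, hM1⟩ := (isCompact_closedBall (0:ℂ) 1).exists_bound_of_continuousOn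
    hf.continuous.continuousOn
  have hlimLeft : Tendsto
      (fun L : ℝ => I • ∫ y : ℝ in (0:ℝ)..(2*Real.pi), N ((L:ℂ) + (y:ℂ)*I) / D ((L:ℂ) + (y:ℂ)*I))
      atBot (𝓝 0) := by
    have hM10 : 0 ≤ M1 := le_trans (norm_nonneg _) (hM1 0 (Metric.mem_closedBall_self zero_le_one))
    apply squeeze_zero_norm'
      (a := fun L : ℝ => 2*Real.pi * (M1 * Real.exp ((1-ν)*L) / (ω/2)))
    · filter_upwards [eventually_le_atBot (min 0 (Real.log (ω/2)))] with L hLle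
      obtain ⟨hL0, hLω⟩ := le_min_iff.mp hLle
      have hexpL : Real.exp L ≤ ω/2 := by
        calc Real.exp L ≤ Real.exp (Real.log (ω/2)) := Real.exp_le_exp.mpr hLω
          _ = ω/2 := Real.exp_log (by positivity)
      have hexpL1 : Real.exp L ≤ 1 := by
        calc Real.exp L ≤ Real.exp 0 := Real.exp_le_exp.mpr hL0
          _ = 1 := Real.exp_zero
      rw [norm_smul, Complex.norm_I, one_mul]
      have hCb : ∀ y ∈ Set.uIoc (0:ℝ) (2*Real.pi),
          ‖N ((L:ℂ) + (y:ℂ)*I) / D ((L:ℂ) + (y:ℂ)*I)‖ ≤ M1 * Real.exp ((1-ν)*L) / (ω/2) := by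
        intro y _
        set w : ℂ := (L:ℂ) + (y:ℂ)*I with hwdef
        have hwre : w.re = L := by simp [hwdef]
        have hnexp : ‖Complex.exp w‖ = Real.exp L := by
          rw [Complex.norm_exp, hwre]
        have hfb : ‖f (Complex.exp w)‖ ≤ M1 := by
          apply hM1
          rw [Metric.mem_closedBall, dist_zero_right, hnexp]
          exact hexpL1
        have hnexp2 : ‖Complex.exp ((1 - (ν:ℂ)) * w)‖ = Real.exp ((1-ν)*L) := by
          rw [Complex.norm_exp]
          congr 1
          simp [hwdef, Complex.mul_re]
        have hDlow : ω/2 ≤ ‖D w‖ := by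
          have htri := norm_add_le (D w) (-Complex.exp w)
          have : D w + -Complex.exp w = (ω:ℂ) := by simp only [hDdef]; ring
          rw [this] at htri
          rw [Complex.norm_real, Real.norm_eq_abs, abs_of_pos hω, norm_neg, hnexp] at htri
          linarith
        have hNb : ‖N w‖ ≤ M1 * Real.exp ((1-ν)*L) := by
          simp only [hNdef]
          rw [norm_mul, hnexp2]
          exact mul_le_mul_of_nonneg_right hfb (Real.exp_pos _).le
        rw [norm_div]
        apply div_le_div₀ (by positivity) hNb (by positivity) hDlow
      have := intervalIntegral.norm_integral_le_of_norm_le_const hCb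
      rw [sub_zero, abs_of_pos h2π] at this
      calc ‖∫ y : ℝ in (0:ℝ)..(2*Real.pi), N ((L:ℂ) + (y:ℂ)*I) / D ((L:ℂ) + (y:ℂ)*I)‖
          ≤ M1 * Real.exp ((1-ν)*L) / (ω/2) * (2*Real.pi) := this
        _ = 2*Real.pi * (M1 * Real.exp ((1-ν)*L) / (ω/2)) := by ring
    · have h5 : Tendsto (fun L : ℝ => (1-ν)*L) atBot atBot := by
        apply Tendsto.const_mul_atBot (by linarith : (0:ℝ) < 1 - ν) tendsto_id
      have h6 : Tendsto (fun L : ℝ => Real.exp ((1-ν)*L)) atBot (𝓝 0) :=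
        Real.tendsto_exp_atBot.comp h5
      have h7 := (h6.const_mul (2*Real.pi * M1 / (ω/2)))
      rw [mul_zero] at h7
      refine h7.congr fun L => ?_
      ring
  have hJ : (∫ θ in (0:ℝ)..(2 * Real.pi),
        f (a * Complex.exp (θ * Complex.I)) *
            Complex.exp (-(ν : ℂ) * ((R : ℂ) + θ * Complex.I)) /
            ((ω : ℂ) + a * Complex.exp (θ * Complex.I)) *
          (Complex.I * a * Complex.exp (θ * Complex.I)))
      = I • ∫ y : ℝ in (0:ℝ)..(2*Real.pi), N ((R:ℂ) + (y:ℂ)*I) / D ((R:ℂ) + (y:ℂ)*I) := by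
    rw [smul_eq_mul, ← intervalIntegral.integral_const_mul]
    refine intervalIntegral.integral_congr fun θ _ => ?_
    have e1 : Complex.exp ((R:ℂ) + (θ:ℂ)*I) = (a:ℂ) * Complex.exp ((θ:ℂ)*I) := by
      rw [Complex.exp_add, hexpR]
    have e2 : Complex.exp ((1-(ν:ℂ))*((R:ℂ)+(θ:ℂ)*I))
        = Complex.exp ((R:ℂ)+(θ:ℂ)*I) * Complex.exp (-(ν:ℂ)*((R:ℂ)+(θ:ℂ)*I)) := by
      rw [← Complex.exp_add]; congr 1; ring
    simp only [hNdef, hDdef]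
    rw [e2, e1]
    ring
  have hS0 : Real.sin (Real.pi * ν) ≠ 0 :=
    ne_of_gt (Real.sin_pos_of_pos_of_lt_pi (by positivity) (by nlinarith))
  have hrval : r = f (-(ω:ℂ)) * (((ω ^ ν : ℝ) : ℂ))⁻¹ * Complex.exp (-(↑(Real.pi * ν) : ℂ) * I) := by
    rw [hrdef]
    simp only [hΦdef, hNdef]
    rw [hdD0, hexpw0]
    have hsplit : Complex.exp ((1-(ν:ℂ)) * w0) * (-(ω:ℂ))⁻¹
        = (((ω ^ ν : ℝ) : ℂ))⁻¹ * Complex.exp (-(↑(Real.pi * ν) : ℂ) * I) := by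
      rw [← hexpw0, ← Complex.exp_neg, ← Complex.exp_add,
        show (1-(ν:ℂ)) * w0 + -w0 = -(ν:ℂ) * w0 by ring,
        show -(ν:ℂ) * w0 = ((-(ν * x0) : ℝ) : ℂ) + (-(↑(Real.pi * ν) : ℂ)) * I by
          rw [hw0def]; push_cast; ring,
        Complex.exp_add]
      congr 1
      rw [← Complex.ofReal_exp,
        show Real.exp (-(ν * x0)) = ((ω : ℝ) ^ ν)⁻¹ by
          rw [Real.rpow_def_of_pos hω, ← Real.exp_neg]; congr 1; rw [hx0def]; ring,
        Complex.ofReal_inv]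
    linear_combination f (-(ω:ℂ)) * hsplit
  have h2IS : (1:ℂ) - E
      = 2 * I * Complex.exp (-(↑(Real.pi * ν) : ℂ) * I) * ((Real.sin (Real.pi * ν) : ℝ) : ℂ) := by
    have hEu : E = Complex.exp (-(↑(Real.pi * ν):ℂ) * I) * Complex.exp (-(↑(Real.pi * ν):ℂ) * I) := by
      rw [hEdef, ← Complex.exp_add]; congr 1; push_cast; ring
    have hexpu : Complex.exp (-(↑(Real.pi * ν):ℂ) * I)
        = Complex.cos (↑(Real.pi * ν)) - Complex.sin (↑(Real.pi * ν)) * I := by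
      rw [show -(↑(Real.pi * ν):ℂ) * I = (-(↑(Real.pi * ν):ℂ)) * I by ring, Complex.exp_mul_I,
        Complex.cos_neg, Complex.sin_neg]
      ring
    rw [hEu, hexpu, Complex.ofReal_sin]
    linear_combination (Complex.sin ((Real.pi * ν : ℝ):ℂ))^2 * Complex.I_sq
      - Complex.sin_sq_add_cos_sq ((Real.pi * ν : ℝ):ℂ)
  have hSne : ((Real.sin (Real.pi * ν) : ℝ) : ℂ) ≠ 0 := Complex.ofReal_ne_zero.mpr hS0
  have h1E : (1:ℂ) - E ≠ 0 := by
    rw [h2IS]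
    exact mul_ne_zero (mul_ne_zero (mul_ne_zero two_ne_zero Complex.I_ne_zero)
      (Complex.exp_ne_zero _)) hSne
  have key : ∀ᶠ L in atBot,
      (1 - E) * (∫ x in Real.exp L..a, g x)
        = 2 * Real.pi * I * r
          - (I • ∫ y : ℝ in (0:ℝ)..(2*Real.pi), N ((R:ℂ) + (y:ℂ)*I) / D ((R:ℂ) + (y:ℂ)*I))
          + (I • ∫ y : ℝ in (0:ℝ)..(2*Real.pi), N ((L:ℂ) + (y:ℂ)*I) / D ((L:ℂ) + (y:ℂ)*I)) := by
    filter_upwards [eventually_lt_atBot x0] with L hL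
    have h := hrectG L hL
    rw [hchg L] at h
    simp only [smul_eq_mul] at h ⊢
    linear_combination h
  have t1 : Tendsto (fun L : ℝ => (1 - E) * (∫ x in Real.exp L..a, g x)) atBot
      (𝓝 ((1 - E) * (∫ x in (0:ℝ)..a, g x))) := hlimB.const_mul _
  have t2 : Tendsto (fun L : ℝ =>
        2 * Real.pi * I * r
          - (I • ∫ y : ℝ in (0:ℝ)..(2*Real.pi), N ((R:ℂ) + (y:ℂ)*I) / D ((R:ℂ) + (y:ℂ)*I))
          + (I • ∫ y : ℝ in (0:ℝ)..(2*Real.pi), N ((L:ℂ) + (y:ℂ)*I) / D ((L:ℂ) + (y:ℂ)*I)))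
      atBot (𝓝 ((2 * Real.pi * I * r
          - (I • ∫ y : ℝ in (0:ℝ)..(2*Real.pi), N ((R:ℂ) + (y:ℂ)*I) / D ((R:ℂ) + (y:ℂ)*I))) + 0)) :=
    tendsto_const_nhds.add hlimLeft
  have hEqn := tendsto_nhds_unique (Filter.Tendsto.congr' key t1) t2
  rw [add_zero] at hEqn
  rw [hJ]
  have hIstat : (∫ x in (0:ℝ)..a, g x)
      = (2 * Real.pi * I * r
          - (I • ∫ y : ℝ in (0:ℝ)..(2*Real.pi), N ((R:ℂ) + (y:ℂ)*I) / D ((R:ℂ) + (y:ℂ)*I))) / (1 - E) := by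
    rw [eq_div_iff h1E]
    linear_combination hEqn
  have hωpos : (((ω ^ ν : ℝ)):ℂ) ≠ 0 := Complex.ofReal_ne_zero.mpr (by positivity)
  rw [hIstat, hrval,
    show E - 1 = -((1:ℂ) - E) by ring, h2IS]
  set e1 : ℂ := Complex.exp (-(↑(Real.pi * ν) : ℂ) * I) with he1def
  set S : ℂ := ((Real.sin (Real.pi * ν) : ℝ) : ℂ) with hSdef
  set X : ℂ := I • ∫ y : ℝ in (0:ℝ)..(2*Real.pi), N ((R:ℂ) + (y:ℂ)*I) / D ((R:ℂ) + (y:ℂ)*I) with hXdef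
  have he1ne : e1 ≠ 0 := Complex.exp_ne_zero _
  have hd : (2:ℂ)*I*e1*S ≠ 0 :=
    mul_ne_zero (mul_ne_zero (mul_ne_zero two_ne_zero Complex.I_ne_zero) he1ne) hSne
  rw [div_eq_iff hd, div_neg, one_div]
  field_simp
  ring
end

section
/- For every a > 0 and every j ∈ ℕ, the finite part integral of ∫_0^a e^{−x}/x^{j+1} dx equals −Σ_{k=0}^{j−1} (−1)^k/(k! (j−k) a^{j−k}) + ((−1)^j/j!) ln a + Σ_{k=j+1}^∞ (−1)^k a^{k−j}/(k! (k−j)); that is, lim_{ε→0⁺} [ ∫_ε^a e^{−x}/x^{j+1} dx − Σ_{k=0}^{j−1} ((−1)^k/(k! (j−k))) ε^{−(j−k)} + ((−1)^j/j!) ln ε ] equals that expression (the infinite series over k ≥ j+1 being absolutely convergent). -/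
open MeasureTheory Filter Set

private lemma fpe_norm_term_le (j i : ℕ) (x : ℝ) (hx : 0 ≤ x) :
    ‖(-1 : ℝ) ^ (j + 1 + i) * x ^ (i + 1) / ((j + 1 + i).factorial * (i + 1))‖
      ≤ x * (x ^ i / i.factorial) := by
  have h1 : (i.factorial : ℝ) ≤ ((j + 1 + i).factorial : ℝ) := by
    exact_mod_cast Nat.factorial_le (by omega)
  have h2 : (i.factorial : ℝ) ≤ ((j + 1 + i).factorial : ℝ) * ((i : ℝ) + 1) := by
    have hp : (0:ℝ) < ((j + 1 + i).factorial : ℝ) := by exact_mod_cast Nat.factorial_pos _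
    have hi : (0:ℝ) ≤ (i : ℝ) := Nat.cast_nonneg i
    nlinarith
  have hfac : (0:ℝ) < (i.factorial : ℝ) := by exact_mod_cast Nat.factorial_pos i
  rw [Real.norm_eq_abs, abs_div, abs_mul, abs_pow, abs_neg, abs_one, one_pow, one_mul,
    abs_pow, abs_of_nonneg hx, abs_of_pos (by positivity : (0:ℝ) < ((j+1+i).factorial : ℝ) * ((i:ℝ)+1))]
  calc x ^ (i + 1) / (((j + 1 + i).factorial : ℝ) * ((i : ℝ) + 1))
      ≤ x ^ (i + 1) / (i.factorial : ℝ) := by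
        apply div_le_div_of_nonneg_left (by positivity) hfac h2
    _ = x * (x ^ i / i.factorial) := by rw [pow_succ]; ring

private lemma fpe_summable_norm (j : ℕ) (x : ℝ) (hx : 0 ≤ x) :
    Summable (fun i : ℕ =>
      ‖(-1 : ℝ) ^ (j + 1 + i) * x ^ (i + 1) / ((j + 1 + i).factorial * (i + 1))‖) := by
  have h : Summable (fun i : ℕ => x * (x ^ i / i.factorial)) :=
    (Real.summable_pow_div_factorial x).mul_left x
  exact h.of_nonneg_of_le (fun i => norm_nonneg _) (fun i => fpe_norm_term_le j i x hx)

private lemma fpe_summable (j : ℕ) (x : ℝ) (hx : 0 ≤ x) :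
    Summable (fun i : ℕ =>
      (-1 : ℝ) ^ (j + 1 + i) * x ^ (i + 1) / ((j + 1 + i).factorial * (i + 1))) :=
  (fpe_summable_norm j x hx).of_norm

private lemma fpe_exp_hasSum (t : ℝ) :
    HasSum (fun k : ℕ => (-1 : ℝ) ^ k * t ^ k / k.factorial) (Real.exp (-t)) := by
  have h := NormedSpace.expSeries_div_hasSum_exp (-t)
  rw [← Real.exp_eq_exp_ℝ] at h
  have h2 : HasSum (fun n : ℕ => (-t) ^ n / (n.factorial : ℝ)) (Real.exp (-t)) := h
  convert h2 using 2 with k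
  rw [neg_pow]
  ring

private lemma fpe_exp_tsum (t : ℝ) : ∑' i : ℕ, t ^ i / i.factorial = Real.exp t := by
  have h := NormedSpace.expSeries_div_hasSum_exp t
  rw [← Real.exp_eq_exp_ℝ] at h
  exact h.tsum_eq

-- the term-by-term integral swap
private lemma fpe_hasSum_integral (j : ℕ) {ε A : ℝ} (hε : 0 < ε) (hεA : ε ≤ A) :
    HasSum (fun k : ℕ => ∫ x in ε..A, (-1 : ℝ) ^ k * x ^ k / (k.factorial * x ^ (j + 1)))
      (∫ x in ε..A, Real.exp (-x) / x ^ (j + 1)) := by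
  apply intervalIntegral.hasSum_integral_of_dominated_convergence
    (bound := fun k _ => A ^ k / k.factorial / ε ^ (j + 1))
  · intro k
    apply Measurable.aestronglyMeasurable
    measurability
  · intro k
    filter_upwards with t ht
    rw [uIoc_of_le hεA] at ht
    have ht0 : 0 < t := lt_of_le_of_lt hε.le ht.1
    have hfk : (0:ℝ) < (k.factorial : ℝ) := by exact_mod_cast Nat.factorial_pos k
    have habs : ‖(-1 : ℝ) ^ k * t ^ k / (k.factorial * t ^ (j + 1))‖
        = t ^ k / (k.factorial * t ^ (j + 1)) := by
      rw [Real.norm_eq_abs]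
      simp [abs_div, abs_mul, abs_pow, abs_of_pos ht0, abs_of_pos hfk]
    rw [habs, div_div]
    apply div_le_div₀ (pow_nonneg (hε.le.trans hεA) k) (pow_le_pow_left₀ ht0.le ht.2 k) (by positivity)
    exact mul_le_mul_of_nonneg_left (pow_le_pow_left₀ hε.le ht.1.le _) hfk.le
  · filter_upwards with t ht
    exact ((Real.summable_pow_div_factorial A).div_const (ε ^ (j + 1)))
  · exact intervalIntegrable_const
  · filter_upwards with t ht
    rw [uIoc_of_le hεA] at ht
    have h := (fpe_exp_hasSum t).div_const (t ^ (j + 1))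
    simpa only [div_div] using h

private lemma fpe_int_lt (j k : ℕ) (hk : k < j) {ε A : ℝ} (hε : 0 < ε) (hεA : ε ≤ A) :
    (∫ x in ε..A, (-1 : ℝ) ^ k * x ^ k / (k.factorial * x ^ (j + 1)))
      = (-1 : ℝ) ^ k / ((k.factorial : ℝ) * ((j : ℝ) - k) * ε ^ (j - k))
        - (-1 : ℝ) ^ k / ((k.factorial : ℝ) * ((j : ℝ) - k) * A ^ (j - k)) := by
  have huIcc : uIcc ε A = Icc ε A := uIcc_of_le hεA
  have h0 : (0:ℝ) ∉ uIcc ε A := by rw [huIcc]; intro h; exact absurd h.1 (not_le.mpr hε)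
  have hcong : EqOn (fun x : ℝ => (-1 : ℝ) ^ k * x ^ k / (k.factorial * x ^ (j + 1)))
      (fun x : ℝ => ((-1 : ℝ) ^ k / k.factorial) * x ^ ((k : ℤ) - ((j : ℤ) + 1))) (uIcc ε A) := by
    intro x hx
    rw [huIcc] at hx
    have hx0 : 0 < x := lt_of_lt_of_le hε hx.1
    have hz : (x : ℝ) ^ ((k : ℤ) - ((j : ℤ) + 1)) = x ^ k / x ^ (j + 1) := by
      rw [zpow_sub₀ hx0.ne']
      norm_cast
    simp only [hz]
    field_simp
  rw [intervalIntegral.integral_congr hcong, intervalIntegral.integral_const_mul,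
    integral_zpow (Or.inr ⟨by omega, h0⟩)]
  have hn1 : (k : ℤ) - ((j : ℤ) + 1) + 1 = -((j - k : ℕ) : ℤ) := by omega
  rw [hn1, zpow_neg, zpow_neg, zpow_natCast, zpow_natCast]
  have hfk : ((k.factorial : ℝ)) ≠ 0 := by positivity
  have hjk : ((j : ℝ) - k) ≠ 0 := by
    have : (k : ℝ) < j := by exact_mod_cast hk
    linarith
  have hA : 0 < A := lt_of_lt_of_le hε hεA
  have hεm : (ε : ℝ) ^ (j - k) ≠ 0 := pow_ne_zero _ hε.ne'
  have hAm : (A : ℝ) ^ (j - k) ≠ 0 := pow_ne_zero _ hA.ne'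
  rw [show ((((k : ℤ) - ((j : ℤ) + 1)) : ℤ) : ℝ) + 1 = -((j : ℝ) - (k : ℝ)) from by
    push_cast; ring, div_neg]
  field_simp
  ring

private lemma fpe_int_eq (j : ℕ) {ε A : ℝ} (hε : 0 < ε) (hεA : ε ≤ A) :
    (∫ x in ε..A, (-1 : ℝ) ^ j * x ^ j / (j.factorial * x ^ (j + 1)))
      = (-1 : ℝ) ^ j / (j.factorial : ℝ) * (Real.log A - Real.log ε) := by
  have huIcc : uIcc ε A = Icc ε A := uIcc_of_le hεA
  have h0 : (0:ℝ) ∉ uIcc ε A := by rw [huIcc]; intro h; exact absurd h.1 (not_le.mpr hε)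
  have hcong : EqOn (fun x : ℝ => (-1 : ℝ) ^ j * x ^ j / (j.factorial * x ^ (j + 1)))
      (fun x : ℝ => ((-1 : ℝ) ^ j / j.factorial) * x⁻¹) (uIcc ε A) := by
    intro x hx
    rw [huIcc] at hx
    have hx0 : 0 < x := lt_of_lt_of_le hε hx.1
    have hxne : x ≠ 0 := hx0.ne'
    simp only
    rw [pow_succ]
    field_simp
  rw [intervalIntegral.integral_congr hcong, intervalIntegral.integral_const_mul,
    integral_inv h0, Real.log_div (by linarith : A ≠ 0) hε.ne']


private lemma fpe_int_gt (j i : ℕ) {ε A : ℝ} (hε : 0 < ε) (hεA : ε ≤ A) :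
    (∫ x in ε..A, (-1 : ℝ) ^ (j + 1 + i) * x ^ (j + 1 + i) /
        ((j + 1 + i).factorial * x ^ (j + 1)))
      = (-1 : ℝ) ^ (j + 1 + i) * A ^ (i + 1) / ((j + 1 + i).factorial * (i + 1))
        - (-1 : ℝ) ^ (j + 1 + i) * ε ^ (i + 1) / ((j + 1 + i).factorial * (i + 1)) := by
  have huIcc : uIcc ε A = Icc ε A := uIcc_of_le hεA
  have hcong : EqOn (fun x : ℝ => (-1 : ℝ) ^ (j + 1 + i) * x ^ (j + 1 + i) /
        ((j + 1 + i).factorial * x ^ (j + 1)))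
      (fun x : ℝ => ((-1 : ℝ) ^ (j + 1 + i) / (j + 1 + i).factorial) * x ^ i) (uIcc ε A) := by
    intro x hx
    rw [huIcc] at hx
    have hx0 : 0 < x := lt_of_lt_of_le hε hx.1
    have hxne : x ≠ 0 := hx0.ne'
    simp only
    rw [show j + 1 + i = i + (j + 1) by omega, pow_add]
    field_simp
    ring
  rw [intervalIntegral.integral_congr hcong, intervalIntegral.integral_const_mul, integral_pow]
  have hfk : (((j + 1 + i).factorial : ℝ)) ≠ 0 := by positivity
  have hi1 : ((i : ℝ) + 1) ≠ 0 := by positivity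
  field_simp

/-- For every `a > 0` and `j ∈ ℕ`, the finite part integral of
`∫_0^a e^{−x}/x^{j+1} dx` equals
`−Σ_{k<j} (−1)^k/(k!(j−k)a^{j−k}) + ((−1)^j/j!) ln a + Σ_{k≥j+1} (−1)^k a^{k−j}/(k!(k−j))`,
the infinite series (written with `k = j+1+i`) being absolutely convergent. -/
theorem finite_part_exp_integral (a : ℝ) (ha : 0 < a) (j : ℕ) :
    Summable (fun i : ℕ =>
      (-1 : ℝ) ^ (j + 1 + i) * a ^ (i + 1) / ((j + 1 + i).factorial * (i + 1))) ∧
    Tendsto (fun ε : ℝ =>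
        (∫ x in ε..a, Real.exp (-x) / x ^ (j + 1))
        - (∑ k ∈ Finset.range j,
            (-1 : ℝ) ^ k / ((k.factorial : ℝ) * ((j : ℝ) - k) * ε ^ (j - k)))
        + (-1 : ℝ) ^ j / (j.factorial : ℝ) * Real.log ε)
      (nhdsWithin 0 (Ioi 0))
      (nhds (-(∑ k ∈ Finset.range j,
          (-1 : ℝ) ^ k / ((k.factorial : ℝ) * ((j : ℝ) - k) * a ^ (j - k)))
        + (-1 : ℝ) ^ j / (j.factorial : ℝ) * Real.log a
        + ∑' i : ℕ,
            (-1 : ℝ) ^ (j + 1 + i) * a ^ (i + 1) /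
              ((j + 1 + i).factorial * (i + 1)))) := by
  refine ⟨fpe_summable j a ha.le, ?_⟩
  have hmain : ∀ ε : ℝ, ε ∈ Ioo (0:ℝ) a →
      (∫ x in ε..a, Real.exp (-x) / x ^ (j + 1))
        - (∑ k ∈ Finset.range j,
            (-1 : ℝ) ^ k / ((k.factorial : ℝ) * ((j : ℝ) - k) * ε ^ (j - k)))
        + (-1 : ℝ) ^ j / (j.factorial : ℝ) * Real.log ε
      = (-(∑ k ∈ Finset.range j,
            (-1 : ℝ) ^ k / ((k.factorial : ℝ) * ((j : ℝ) - k) * a ^ (j - k)))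
          + (-1 : ℝ) ^ j / (j.factorial : ℝ) * Real.log a
          + ∑' i : ℕ, (-1 : ℝ) ^ (j + 1 + i) * a ^ (i + 1) /
              ((j + 1 + i).factorial * (i + 1)))
        - ∑' i : ℕ, (-1 : ℝ) ^ (j + 1 + i) * ε ^ (i + 1) /
            ((j + 1 + i).factorial * (i + 1)) := by
    rintro ε ⟨hε0, hεa⟩
    have hsum := fpe_hasSum_integral j hε0 hεa.le
    rw [← hsum.tsum_eq, ← Summable.sum_add_tsum_nat_add (j + 1) hsum.summable,
      Finset.sum_range_succ,
      Finset.sum_congr rfl (fun k hk => fpe_int_lt j k (Finset.mem_range.mp hk) hε0 hεa.le),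
      fpe_int_eq j hε0 hεa.le]
    have ht : ∀ i : ℕ,
        (∫ x in ε..a, (-1 : ℝ) ^ (i + (j + 1)) * x ^ (i + (j + 1)) /
            ((i + (j + 1)).factorial * x ^ (j + 1)))
        = (-1 : ℝ) ^ (j + 1 + i) * a ^ (i + 1) / ((j + 1 + i).factorial * (i + 1))
          - (-1 : ℝ) ^ (j + 1 + i) * ε ^ (i + 1) / ((j + 1 + i).factorial * (i + 1)) := by
      intro i
      rw [show i + (j + 1) = j + 1 + i from by omega]
      exact fpe_int_gt j i hε0 hεa.le
    rw [tsum_congr ht, Summable.tsum_sub (fpe_summable j a ha.le) (fpe_summable j ε hε0.le),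
      Finset.sum_sub_distrib]
    ring
  have htail : Tendsto (fun ε : ℝ => ∑' i : ℕ,
      (-1 : ℝ) ^ (j + 1 + i) * ε ^ (i + 1) / ((j + 1 + i).factorial * (i + 1)))
      (nhdsWithin 0 (Ioi 0)) (nhds 0) := by
    apply squeeze_zero_norm' (a := fun ε : ℝ => ε * Real.exp ε)
    · filter_upwards [self_mem_nhdsWithin] with ε (hε : ε ∈ Ioi 0)
      calc ‖∑' i : ℕ, (-1 : ℝ) ^ (j + 1 + i) * ε ^ (i + 1) /
              ((j + 1 + i).factorial * (i + 1))‖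
          ≤ ∑' i : ℕ, ‖(-1 : ℝ) ^ (j + 1 + i) * ε ^ (i + 1) /
              ((j + 1 + i).factorial * (i + 1))‖ :=
            norm_tsum_le_tsum_norm (fpe_summable_norm j ε (le_of_lt hε))
        _ ≤ ∑' i : ℕ, ε * (ε ^ i / i.factorial) :=
            Summable.tsum_le_tsum (fun i => fpe_norm_term_le j i ε (le_of_lt hε))
              (fpe_summable_norm j ε (le_of_lt hε))
              ((Real.summable_pow_div_factorial ε).mul_left ε)
        _ = ε * ∑' i : ℕ, ε ^ i / i.factorial := tsum_mul_left
        _ = ε * Real.exp ε := by rw [fpe_exp_tsum]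
    · have hc : Continuous fun ε : ℝ => ε * Real.exp ε :=
        continuous_id.mul Real.continuous_exp
      have h0 := hc.tendsto 0
      simp only [Real.exp_zero, mul_one, id_eq] at h0
      exact h0.mono_left nhdsWithin_le_nhds
  have hT := (tendsto_const_nhds (x := (-(∑ k ∈ Finset.range j,
          (-1 : ℝ) ^ k / ((k.factorial : ℝ) * ((j : ℝ) - k) * a ^ (j - k)))
        + (-1 : ℝ) ^ j / (j.factorial : ℝ) * Real.log a
        + ∑' i : ℕ, (-1 : ℝ) ^ (j + 1 + i) * a ^ (i + 1) /
            ((j + 1 + i).factorial * (i + 1)))) (f := nhdsWithin (0:ℝ) (Ioi 0))).sub htail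
  rw [sub_zero] at hT
  apply hT.congr'
  filter_upwards [Ioo_mem_nhdsGT_of_mem (⟨le_refl 0, ha⟩ : (0:ℝ) ∈ Ico (0:ℝ) a)] with ε hε
  exact (hmain ε hε).symm
end

section
/- For every j ∈ ℕ and every ν with 0 < ν < 1, the finite part integral of ∫_0^a e^{−x}/x^{j+1+ν} dx tends, as a → ∞, to (−1)^{j+1} Γ(1−ν) Γ(ν) / Γ(j+ν+1); that is, lim_{a→∞} lim_{ε→0⁺} [ ∫_ε^a e^{−x}/x^{j+1+ν} dx − Σ_{k=0}^{j} ((−1)^k/(k! (j+ν−k))) ε^{−(j+ν−k)} ] = (−1)^{j+1} Γ(1−ν) Γ(ν) / Γ(j+ν+1), where Γ is the Gamma function. -/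
open MeasureTheory Filter Set Topology

noncomputable def fpP (j : ℕ) (x : ℝ) : ℝ := ∑ k ∈ Finset.range (j+1), (-x)^k / k.factorial
noncomputable def fpR (j : ℕ) (x : ℝ) : ℝ := Real.exp (-x) - fpP j x

lemma fpP_zero (x : ℝ) : fpP 0 x = 1 := by simp [fpP]

lemma fpR_zero_eval (j : ℕ) : fpR j 0 = 0 := by
  have : fpP j 0 = 1 := by
    rw [fpP, Finset.sum_eq_single 0]
    · simp
    · intro k _ hk; simp [zero_pow hk]
    · simp
  simp [fpR, this]

lemma hasDerivAt_fpP (j : ℕ) (x : ℝ) :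
    HasDerivAt (fun y => fpP (j+1) y) (-(fpP j x)) x := by
  have h : ∀ k ∈ Finset.range (j+2), HasDerivAt (fun y : ℝ => (-y)^k / k.factorial)
      ((k : ℝ) * (-x)^(k-1) * (-1) / k.factorial) x := fun k _ =>
    ((hasDerivAt_neg x).pow k).div_const _
  have hsum := HasDerivAt.fun_sum h
  have heq : (fun y : ℝ => ∑ k ∈ Finset.range (j+2), (-y)^k / k.factorial)
      = fun y => fpP (j+1) y := by funext y; rfl
  rw [heq] at hsum
  refine hsum.congr_deriv (Eq.symm ?_)
  rw [Finset.sum_range_succ']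
  rw [neg_eq_iff_eq_neg] at *
  simp only [Nat.cast_zero, zero_mul, zero_div, add_zero, mul_one, Nat.add_sub_cancel,
    Nat.cast_add, Nat.cast_one]
  rw [fpP, ← Finset.sum_neg_distrib]
  apply Finset.sum_congr rfl
  intro k _
  have hfac : ((k+1).factorial : ℝ) = (k+1) * k.factorial := by
    rw [Nat.factorial_succ]; push_cast; ring
  rw [hfac]
  have h1 : ((k:ℝ)+1) ≠ 0 := by positivity
  have h2 : (k.factorial : ℝ) ≠ 0 := Nat.cast_ne_zero.mpr k.factorial_ne_zero
  field_simp

lemma hasDerivAt_fpR (j : ℕ) (x : ℝ) :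
    HasDerivAt (fun y => fpR (j+1) y) (-(fpR j x)) x := by
  have he : HasDerivAt (fun y : ℝ => Real.exp (-y)) (-Real.exp (-x)) x := by
    simpa [Function.comp_def] using (Real.hasDerivAt_exp (-x)).comp x (hasDerivAt_neg x)
  have := he.sub (hasDerivAt_fpP j x)
  refine this.congr_deriv (Eq.symm ?_)
  simp [fpR]; ring

lemma hasDerivAt_fpR0 (x : ℝ) :
    HasDerivAt (fun y => fpR 0 y) (-Real.exp (-x)) x := by
  have he : HasDerivAt (fun y : ℝ => Real.exp (-y)) (-Real.exp (-x)) x := by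
    simpa [Function.comp_def] using (Real.hasDerivAt_exp (-x)).comp x (hasDerivAt_neg x)
  have : (fun y => fpR 0 y) = fun y => Real.exp (-y) - 1 := by
    funext y; simp [fpR, fpP_zero]
  rw [this]
  simpa using he.sub_const 1

lemma continuous_fpR (j : ℕ) : Continuous (fpR j) := by
  apply Continuous.sub
  · exact Real.continuous_exp.comp continuous_neg
  · unfold fpP; continuity

lemma fpR_bound_small (j : ℕ) {x : ℝ} (h0 : 0 ≤ x) (h1 : x ≤ 1) :
    |fpR j x| ≤ ((j:ℝ)+2) / ((j+1).factorial * ((j:ℝ)+1)) * x ^ (j+1) := by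
  have hx : |(-x)| ≤ 1 := by rw [abs_neg, abs_of_nonneg h0]; exact h1
  have hb := Real.exp_bound hx (n := j+1) (Nat.succ_pos j)
  have heq : fpR j x = Real.exp (-x) - ∑ m ∈ Finset.range (j+1), (-x) ^ m / m.factorial := rfl
  rw [heq]
  calc |Real.exp (-x) - ∑ m ∈ Finset.range (j+1), (-x) ^ m / m.factorial|
      ≤ |(-x)| ^ (j+1) * (((j+1).succ : ℝ) / ((j+1).factorial * ((j:ℕ)+1 : ℕ))) := hb
    _ = ((j:ℝ)+2) / ((j+1).factorial * ((j:ℝ)+1)) * x ^ (j+1) := by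
        rw [abs_neg, abs_of_nonneg h0]; push_cast; ring

lemma fpR_bound_large (j : ℕ) {x : ℝ} (h1 : 1 ≤ x) :
    |fpR j x| ≤ 4 * x ^ j := by
  have hx0 : (0:ℝ) ≤ x := le_trans zero_le_one h1
  have hxj : (1:ℝ) ≤ x ^ j := one_le_pow₀ h1
  have he : |Real.exp (-x)| ≤ 1 := by
    rw [abs_of_pos (Real.exp_pos _)]
    exact Real.exp_le_one_iff.mpr (by linarith)
  have hP : |fpP j x| ≤ 3 * x ^ j := by
    calc |fpP j x| ≤ ∑ k ∈ Finset.range (j+1), |(-x)^k / k.factorial| :=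
          Finset.abs_sum_le_sum_abs _ _
      _ ≤ ∑ k ∈ Finset.range (j+1), x ^ j * (1 / k.factorial) := by
          apply Finset.sum_le_sum
          intro k hk
          rw [abs_div, abs_pow, abs_neg, abs_of_nonneg hx0,
            abs_of_nonneg (by positivity : (0:ℝ) ≤ (k.factorial:ℝ))]
          rw [div_eq_mul_one_div]
          have hk' : x ^ k ≤ x ^ j :=
            pow_le_pow_right₀ h1 (Nat.lt_succ_iff.mp (Finset.mem_range.mp hk))
          exact mul_le_mul_of_nonneg_right hk' (by positivity)
      _ = x ^ j * (∑ k ∈ Finset.range (j+1), ((1:ℝ) / k.factorial)) := by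
          rw [Finset.mul_sum]
      _ ≤ x ^ j * 3 := by
          apply mul_le_mul_of_nonneg_left ?_ (by positivity)
          have hs : ∑ k ∈ Finset.range (j+1), ((1:ℝ)^k / k.factorial) ≤ Real.exp 1 :=
            Real.sum_le_exp_of_nonneg zero_le_one _
          simp only [one_pow] at hs
          have : Real.exp 1 ≤ 3 := by
            have := Real.exp_one_lt_d9
            linarith
          linarith
      _ = 3 * x ^ j := by ring
  calc |fpR j x| ≤ |Real.exp (-x)| + |fpP j x| := abs_sub _ _
    _ ≤ 1 + 3 * x ^ j := by linarith
    _ ≤ 4 * x ^ j := by linarith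

lemma integrableOn_fpR (j : ℕ) {ν : ℝ} (hν0 : 0 < ν) (hν1 : ν < 1) :
    IntegrableOn (fun x => fpR j x * x ^ (-((j:ℝ)+1+ν))) (Ioi (0:ℝ)) := by
  have hmeas : ∀ s : Set ℝ, AEStronglyMeasurable (fun x => fpR j x * x ^ (-((j:ℝ)+1+ν)))
      (volume.restrict s) := by
    intro s
    apply AEStronglyMeasurable.mul
    · exact (continuous_fpR j).aestronglyMeasurable.restrict
    · exact (Measurable.aestronglyMeasurable (by fun_prop)).restrict
  rw [← Ioc_union_Ioi_eq_Ioi (zero_le_one)]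
  apply IntegrableOn.union
  · -- on Ioc 0 1 : dominate by C * x ^ (-ν)
    set C : ℝ := ((j:ℝ)+2) / ((j+1).factorial * ((j:ℝ)+1)) with hC
    have hint : IntegrableOn (fun x : ℝ => C * x ^ (-ν)) (Ioc (0:ℝ) 1) := by
      have := (intervalIntegral.intervalIntegrable_rpow' (a := 0) (b := 1)
        (by linarith : (-1:ℝ) < -ν))
      rw [intervalIntegrable_iff_integrableOn_Ioc_of_le zero_le_one] at this
      exact this.const_mul C
    apply Integrable.mono hint (hmeas _)
    rw [ae_restrict_iff' measurableSet_Ioc]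
    filter_upwards with x hx
    have hx0 : 0 < x := hx.1
    have hCpos : 0 ≤ C := by positivity
    rw [Real.norm_eq_abs, Real.norm_eq_abs, abs_mul,
      abs_of_pos (Real.rpow_pos_of_pos hx0 _), abs_of_nonneg (by positivity : (0:ℝ) ≤ C * x ^ (-ν))]
    calc |fpR j x| * x ^ (-((j:ℝ)+1+ν)) ≤ (C * x ^ (j+1)) * x ^ (-((j:ℝ)+1+ν)) := by
          apply mul_le_mul_of_nonneg_right (fpR_bound_small j hx0.le hx.2)
            (Real.rpow_pos_of_pos hx0 _).le
      _ = C * x ^ (-ν) := by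
          rw [mul_assoc, ← Real.rpow_natCast x (j+1), ← Real.rpow_add hx0]
          congr 2
          push_cast; ring
  · -- on Ioi 1 : dominate by 4 * x ^ (-1-ν)
    have hint : IntegrableOn (fun x : ℝ => 4 * x ^ (-1-ν)) (Ioi (1:ℝ)) :=
      (integrableOn_Ioi_rpow_of_lt (by linarith) one_pos).const_mul 4
    apply Integrable.mono hint (hmeas _)
    rw [ae_restrict_iff' measurableSet_Ioi]
    filter_upwards with x hx
    have hx1 : (1:ℝ) ≤ x := le_of_lt hx
    have hx0 : 0 < x := lt_of_lt_of_le one_pos hx1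
    rw [Real.norm_eq_abs, Real.norm_eq_abs, abs_mul,
      abs_of_pos (Real.rpow_pos_of_pos hx0 _),
      abs_of_nonneg (by positivity : (0:ℝ) ≤ 4 * x ^ (-1-ν))]
    calc |fpR j x| * x ^ (-((j:ℝ)+1+ν)) ≤ (4 * x ^ j) * x ^ (-((j:ℝ)+1+ν)) := by
          apply mul_le_mul_of_nonneg_right (fpR_bound_large j hx1)
            (Real.rpow_pos_of_pos hx0 _).le
      _ = 4 * x ^ (-1-ν) := by
          rw [mul_assoc, ← Real.rpow_natCast x j, ← Real.rpow_add hx0]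
          congr 2
          ring

lemma fpR_tendsto_atTop (j : ℕ) {p : ℝ} (hp : (j:ℝ) < p) :
    Tendsto (fun x => fpR j x * x ^ (-p)) atTop (𝓝 0) := by
  apply squeeze_zero_norm' (a := fun x => 4 * x ^ ((j:ℝ) - p))
  · filter_upwards [Ioi_mem_atTop (1:ℝ)] with x hx
    have hx1 : (1:ℝ) ≤ x := le_of_lt hx
    have hx0 : 0 < x := lt_of_lt_of_le one_pos hx1
    rw [Real.norm_eq_abs, abs_mul, abs_of_pos (Real.rpow_pos_of_pos hx0 _)]
    calc |fpR j x| * x ^ (-p) ≤ (4 * x ^ j) * x ^ (-p) :=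
          mul_le_mul_of_nonneg_right (fpR_bound_large j hx1) (Real.rpow_pos_of_pos hx0 _).le
      _ = 4 * x ^ ((j:ℝ) - p) := by
          rw [mul_assoc, ← Real.rpow_natCast x j, ← Real.rpow_add hx0, sub_eq_add_neg]
  · have h := (tendsto_rpow_neg_atTop (by linarith : (0:ℝ) < p - (j:ℝ))).const_mul (4:ℝ)
    rw [mul_zero] at h
    have heq : (fun x:ℝ => 4 * x ^ (-(p - (j:ℝ)))) = fun x => 4 * x ^ ((j:ℝ) - p) := by
      funext x; rw [show -(p-(j:ℝ)) = (j:ℝ)-p by ring]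
    rwa [heq] at h

lemma fpR_tendsto_zero (j : ℕ) {p : ℝ} (hp : p < (j:ℝ)+1) :
    Tendsto (fun x => fpR j x * x ^ (-p)) (nhdsWithin 0 (Ici (0:ℝ))) (𝓝 0) := by
  set C : ℝ := ((j:ℝ)+2) / ((j+1).factorial * ((j:ℝ)+1)) with hC
  have hCpos : 0 ≤ C := by positivity
  apply squeeze_zero_norm' (a := fun x => C * x ^ ((j:ℝ)+1-p))
  · have hIcc : Icc (0:ℝ) 1 ∈ nhdsWithin 0 (Ici (0:ℝ)) := by
      apply mem_nhdsWithin.mpr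
      exact ⟨Iio 1, isOpen_Iio, by norm_num, fun x hx => ⟨hx.2, le_of_lt hx.1⟩⟩
    filter_upwards [hIcc] with x hx
    rcases eq_or_lt_of_le hx.1 with h | hx0
    · rw [← h]
      have h1 : fpR j 0 * (0:ℝ) ^ (-p) = 0 := by rw [fpR_zero_eval, zero_mul]
      rw [h1, norm_zero, Real.zero_rpow (by linarith : (j:ℝ)+1-p ≠ 0), mul_zero]
    · rw [Real.norm_eq_abs, abs_mul, abs_of_pos (Real.rpow_pos_of_pos hx0 _)]
      calc |fpR j x| * x ^ (-p) ≤ (C * x ^ (j+1)) * x ^ (-p) :=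
            mul_le_mul_of_nonneg_right (fpR_bound_small j hx0.le hx.2)
              (Real.rpow_pos_of_pos hx0 _).le
        _ = C * x ^ ((j:ℝ)+1-p) := by
            rw [mul_assoc, ← Real.rpow_natCast x (j+1), ← Real.rpow_add hx0]
            congr 2; push_cast; ring
  · have hcont : ContinuousAt (fun x : ℝ => x ^ ((j:ℝ)+1-p)) 0 :=
      Real.continuousAt_rpow_const 0 _ (Or.inr (by linarith))
    have h0 : (0:ℝ) ^ ((j:ℝ)+1-p) = 0 := Real.zero_rpow (by linarith)
    have h := (hcont.tendsto.mono_left (nhdsWithin_le_nhds (s := Ici (0:ℝ)))).const_mul C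
    rw [h0, mul_zero] at h
    exact h

lemma exp_rpow_integrable {ν : ℝ} (hν0 : 0 < ν) (hν1 : ν < 1) :
    IntegrableOn (fun x : ℝ => Real.exp (-x) * x ^ (-ν)) (Ioi (0:ℝ)) := by
  have h := Real.GammaIntegral_convergent (by linarith : (0:ℝ) < 1 - ν)
  simpa [show (1:ℝ) - ν - 1 = -ν by ring] using h

lemma exp_rpow_integral {ν : ℝ} (hν0 : 0 < ν) (hν1 : ν < 1) :
    ∫ x in Ioi (0:ℝ), Real.exp (-x) * x ^ (-ν) = Real.Gamma (1-ν) := by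
  rw [Real.Gamma_eq_integral (by linarith : (0:ℝ) < 1 - ν)]
  congr 1
  funext x
  rw [show (1:ℝ) - ν - 1 = -ν by ring]

lemma fpR_step {ν : ℝ} (hν0 : 0 < ν) (hν1 : ν < 1) (j : ℕ) (g : ℝ → ℝ)
    (hg : ∀ x : ℝ, HasDerivAt (fun y => fpR j y) (-(g x)) x)
    (hgint : IntegrableOn (fun x => g x * x ^ (-((j:ℝ)+ν))) (Ioi (0:ℝ))) :
    ∫ x in Ioi (0:ℝ), fpR j x * x ^ (-((j:ℝ)+1+ν)) =
      -(((j:ℝ)+ν)⁻¹) * ∫ x in Ioi (0:ℝ), g x * x ^ (-((j:ℝ)+ν)) := by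
  set q : ℝ := (j:ℝ) + ν with hqdef
  have hq : 0 < q := by positivity
  set c : ℝ := (-q)⁻¹ with hcdef
  set H : ℝ → ℝ := fun x => fpR j x * x ^ (-q) * c with hHdef
  set D : ℝ → ℝ := fun x => g x * x ^ (-q) * q⁻¹ + fpR j x * x ^ (-((j:ℝ)+1+ν)) with hDdef
  have hqne : q ≠ 0 := hq.ne'
  have hderiv : ∀ x ∈ Ioi (0:ℝ), HasDerivAt H (D x) x := by
    intro x hx
    have hx0 : (0:ℝ) < x := hx
    have h1 := hg x
    have h2 := Real.hasDerivAt_rpow_const (x := x) (p := -q) (Or.inl hx0.ne')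
    have h3 := (h1.mul h2).mul_const c
    refine h3.congr_deriv (Eq.symm ?_)
    simp only [hDdef, hcdef]
    rw [show -((j:ℝ)+1+ν) = -q - 1 by rw [hqdef]; ring, inv_neg]
    have hqq : q * q⁻¹ = 1 := mul_inv_cancel₀ hqne
    generalize x ^ (-q) = A
    generalize x ^ (-q-1) = B
    clear_value q
    field_simp
    ring
  have hcont : ContinuousWithinAt H (Ici (0:ℝ)) 0 := by
    have h0 : H 0 = 0 := by simp [hHdef, fpR_zero_eval]
    unfold ContinuousWithinAt
    rw [h0]
    have := (fpR_tendsto_zero j (p := q) (by rw [hqdef]; push_cast; linarith)).mul_const c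
    rwa [zero_mul] at this
  have htop : Tendsto H atTop (𝓝 0) := by
    have := (fpR_tendsto_atTop j (p := q) (by rw [hqdef]; linarith)).mul_const c
    rwa [zero_mul] at this
  have hint1 : IntegrableOn (fun x => g x * x ^ (-q) * q⁻¹) (Ioi (0:ℝ)) :=
    hgint.mul_const _
  have hint2 := integrableOn_fpR j hν0 hν1 (ν := ν)
  have hDint : IntegrableOn D (Ioi (0:ℝ)) := hint1.add hint2
  have key := integral_Ioi_of_hasDerivAt_of_tendsto hcont hderiv hDint htop
  have h0 : H 0 = 0 := by simp [hHdef, fpR_zero_eval]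
  rw [h0, sub_zero] at key
  have hsplit : ∫ x in Ioi (0:ℝ), D x =
      (∫ x in Ioi (0:ℝ), g x * x ^ (-q)) * q⁻¹ + ∫ x in Ioi (0:ℝ), fpR j x * x ^ (-((j:ℝ)+1+ν)) := by
    rw [hDdef]
    rw [integral_add hint1 hint2, integral_mul_const]
  rw [hsplit] at key
  have : ∫ x in Ioi (0:ℝ), fpR j x * x ^ (-((j:ℝ)+1+ν)) =
      -((∫ x in Ioi (0:ℝ), g x * x ^ (-q)) * q⁻¹) := by linarith
  rw [this]; ring

lemma fpR_integral_value {ν : ℝ} (hν0 : 0 < ν) (hν1 : ν < 1) (j : ℕ) :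
    ∫ x in Ioi (0:ℝ), fpR j x * x ^ (-((j:ℝ)+1+ν)) =
      (-1:ℝ)^(j+1) * Real.Gamma (1-ν) * Real.Gamma ν / Real.Gamma ((j:ℝ)+ν+1) := by
  have hΓν : Real.Gamma ν ≠ 0 := (Real.Gamma_pos_of_pos hν0).ne'
  induction j with
  | zero =>
    have hgint : IntegrableOn (fun x : ℝ => Real.exp (-x) * x ^ (-(((0:ℕ):ℝ)+ν))) (Ioi (0:ℝ)) := by
      simpa using exp_rpow_integrable hν0 hν1
    have hs := fpR_step hν0 hν1 0 (fun x => Real.exp (-x)) (fun x => hasDerivAt_fpR0 x) hgint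
    rw [hs]
    have hval : ∫ x in Ioi (0:ℝ), Real.exp (-x) * x ^ (-(((0:ℕ):ℝ)+ν)) = Real.Gamma (1-ν) := by
      rw [← exp_rpow_integral hν0 hν1]
      norm_num
    rw [hval]
    have hΓ : Real.Gamma (((0:ℕ):ℝ)+ν+1) = ν * Real.Gamma ν := by
      rw [show ((0:ℕ):ℝ)+ν+1 = ν + 1 by norm_num]
      exact Real.Gamma_add_one hν0.ne'
    rw [hΓ]
    norm_num
    field_simp
  | succ n ih =>
    have hgint : IntegrableOn (fun x => fpR n x * x ^ (-(((n+1:ℕ):ℝ)+ν))) (Ioi (0:ℝ)) := by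
      have h := integrableOn_fpR n hν0 hν1 (ν := ν)
      simpa [Nat.cast_add, Nat.cast_one] using h
    have hs := fpR_step hν0 hν1 (n+1) (fpR n) (fun x => hasDerivAt_fpR n x) hgint
    have hrw : ∫ x in Ioi (0:ℝ), fpR n x * x ^ (-(((n+1:ℕ):ℝ)+ν)) =
        (-1:ℝ)^(n+1) * Real.Gamma (1-ν) * Real.Gamma ν / Real.Gamma ((n:ℝ)+ν+1) := by
      rw [← ih]
      congr 2
      push_cast
      ring
    rw [hs, hrw]
    have hpos : (0:ℝ) < (n:ℝ) + 1 + ν := by positivity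
    have hΓ : Real.Gamma (((n+1:ℕ):ℝ)+ν+1) = ((n:ℝ)+1+ν) * Real.Gamma ((n:ℝ)+ν+1) := by
      rw [show ((n+1:ℕ):ℝ)+ν+1 = ((n:ℝ)+ν+1) + 1 by push_cast; ring]
      rw [Real.Gamma_add_one (by positivity : (0:ℝ) < (n:ℝ)+ν+1).ne']
      ring
    rw [hΓ]
    have hΓn : Real.Gamma ((n:ℝ)+ν+1) ≠ 0 := (Real.Gamma_pos_of_pos (by positivity)).ne'
    have hcast : (((n+1:ℕ):ℝ)+ν) = (n:ℝ)+1+ν := by push_cast; ring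
    rw [hcast, pow_succ, pow_succ]
    field_simp
    ring

lemma interval_decomp (j : ℕ) {ν : ℝ} (hν0 : 0 < ν) (hν1 : ν < 1) {ε a : ℝ}
    (hε : 0 < ε) (ha : 0 < a) :
    ∫ x in ε..a, Real.exp (-x) / x ^ ((j:ℝ)+1+ν) =
      (∑ k ∈ Finset.range (j+1), (-1:ℝ)^k / (k.factorial * ((k:ℝ) - ((j:ℝ)+ν))) *
        (a ^ ((k:ℝ) - ((j:ℝ)+ν)) - ε ^ ((k:ℝ) - ((j:ℝ)+ν))))
      + ∫ x in ε..a, fpR j x * x ^ (-((j:ℝ)+1+ν)) := by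
  set s : ℝ := (j:ℝ)+1+ν with hsdef
  have hsub : uIcc ε a ⊆ Ioi 0 := fun x hx => lt_of_lt_of_le (lt_min hε ha) hx.1
  have hrc : ∀ c : ℝ, ContinuousOn (fun x : ℝ => x ^ c) (uIcc ε a) := fun c x hx =>
    (Real.continuousAt_rpow_const x c (Or.inl (ne_of_gt (hsub hx)))).continuousWithinAt
  have hRi : IntervalIntegrable (fun x => fpR j x * x ^ (-s)) volume ε a :=
    (((continuous_fpR j).continuousOn).mul (hrc (-s))).intervalIntegrable
  have hki : ∀ k : ℕ, IntervalIntegrable (fun x : ℝ => (-x)^k / k.factorial * x ^ (-s)) volume ε a := by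
    intro k
    apply ContinuousOn.intervalIntegrable
    exact (((continuous_neg.pow k).div_const _).continuousOn).mul (hrc (-s))
  have hPi : IntervalIntegrable (fun x => fpP j x * x ^ (-s)) volume ε a := by
    apply ContinuousOn.intervalIntegrable
    apply ContinuousOn.mul ?_ (hrc (-s))
    exact Continuous.continuousOn (by unfold fpP; continuity)
  have step1 : ∫ x in ε..a, Real.exp (-x) / x ^ s =
      (∫ x in ε..a, fpP j x * x ^ (-s)) + ∫ x in ε..a, fpR j x * x ^ (-s) := by
    rw [← intervalIntegral.integral_add hPi hRi]
    apply intervalIntegral.integral_congr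
    intro x hx
    have hx0 : 0 < x := hsub hx
    show Real.exp (-x) / x ^ s = fpP j x * x ^ (-s) + fpR j x * x ^ (-s)
    rw [Real.rpow_neg hx0.le, div_eq_mul_inv, fpR]
    ring
  have step2 : ∫ x in ε..a, fpP j x * x ^ (-s) =
      ∑ k ∈ Finset.range (j+1), ∫ x in ε..a, (-x)^k / k.factorial * x ^ (-s) := by
    rw [← intervalIntegral.integral_finset_sum (fun k _ => hki k)]
    apply intervalIntegral.integral_congr
    intro x hx
    show fpP j x * x ^ (-s) = _
    rw [fpP, Finset.sum_mul]
  have step3 : ∀ k ∈ Finset.range (j+1),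
      ∫ x in ε..a, (-x)^k / k.factorial * x ^ (-s) =
        (-1:ℝ)^k / (k.factorial * ((k:ℝ) - ((j:ℝ)+ν))) *
          (a ^ ((k:ℝ) - ((j:ℝ)+ν)) - ε ^ ((k:ℝ) - ((j:ℝ)+ν))) := by
    intro k hk
    have hkj : (k:ℝ) ≤ (j:ℝ) := by
      exact_mod_cast Nat.lt_succ_iff.mp (Finset.mem_range.mp hk)
    have heq : EqOn (fun x : ℝ => (-x)^k / k.factorial * x ^ (-s))
        (fun x : ℝ => (-1:ℝ)^k / k.factorial * x ^ ((k:ℝ) - s)) (uIcc ε a) := by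
      intro x hx
      have hx0 : 0 < x := hsub hx
      show (-x)^k / k.factorial * x ^ (-s) = (-1:ℝ)^k / k.factorial * x ^ ((k:ℝ) - s)
      rw [neg_pow, show (k:ℝ) - s = (k:ℝ) + (-s) by ring, Real.rpow_add hx0,
        Real.rpow_natCast]
      ring
    rw [intervalIntegral.integral_congr heq, intervalIntegral.integral_const_mul]
    have hne : (k:ℝ) - s ≠ -1 := by
      rw [hsdef]
      intro h
      have : ν = (k:ℝ) - (j:ℝ) := by linarith
      have : ν ≤ 0 := by rw [this]; linarith
      linarith
    have hnmem : (0:ℝ) ∉ uIcc ε a := fun h => lt_irrefl 0 (mem_Ioi.mp (hsub h))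
    rw [integral_rpow (Or.inr ⟨hne, hnmem⟩)]
    have he1 : (k:ℝ) - s + 1 = (k:ℝ) - ((j:ℝ)+ν) := by rw [hsdef]; ring
    rw [he1]
    have hfact : (k.factorial : ℝ) ≠ 0 := Nat.cast_ne_zero.mpr k.factorial_ne_zero
    have hene : (k:ℝ) - ((j:ℝ)+ν) ≠ 0 := by
      intro h
      have : ν = (k:ℝ) - (j:ℝ) := by linarith
      have : ν ≤ 0 := by rw [this]; linarith
      linarith
    field_simp
  rw [step1, step2, Finset.sum_congr rfl step3]

/-- For every `j ∈ ℕ` and `0 < ν < 1`, the finite part integral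
`⨍_0^a e^{−x}/x^{j+1+ν} dx` (given as the function `G` of `a` by the inner limit `ε → 0⁺`)
tends, as `a → ∞`, to `(−1)^{j+1} Γ(1−ν) Γ(ν) / Γ(j+ν+1)`. -/
theorem finite_part_exp_branch_limit (j : ℕ) (ν : ℝ) (hν0 : 0 < ν) (hν1 : ν < 1)
    (G : ℝ → ℝ)
    (hG : ∀ a : ℝ, 0 < a → Tendsto (fun ε : ℝ =>
        (∫ x in ε..a, Real.exp (-x) / x ^ ((j : ℝ) + 1 + ν))
        - (∑ k ∈ Finset.range (j + 1),
            (-1 : ℝ) ^ k / ((k.factorial : ℝ) * ((j : ℝ) + ν - k)) *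
              ε ^ (-((j : ℝ) + ν - k))))
      (nhdsWithin 0 (Ioi 0)) (nhds (G a))) :
    Tendsto G atTop
      (nhds ((-1 : ℝ) ^ (j + 1) * Real.Gamma (1 - ν) * Real.Gamma ν /
        Real.Gamma ((j : ℝ) + ν + 1))) := by
  set A : ℝ → ℝ := fun a => ∑ k ∈ Finset.range (j+1),
    (-1:ℝ)^k / (k.factorial * ((k:ℝ) - ((j:ℝ)+ν))) * a ^ ((k:ℝ) - ((j:ℝ)+ν)) with hA
  set L : ℝ → ℝ := fun a => A a + ∫ x in (0:ℝ)..a, fpR j x * x ^ (-((j:ℝ)+1+ν)) with hL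
  have hene : ∀ k : ℕ, k ∈ Finset.range (j+1) → (0:ℝ) < (j:ℝ) + ν - k := by
    intro k hk
    have hkj : (k:ℝ) ≤ (j:ℝ) := by
      exact_mod_cast Nat.lt_succ_iff.mp (Finset.mem_range.mp hk)
    linarith
  have hGL : ∀ a : ℝ, 0 < a → G a = L a := by
    intro a ha
    refine tendsto_nhds_unique (hG a ha) ?_
    have hicc : IntegrableOn (fun x => fpR j x * x ^ (-((j:ℝ)+1+ν))) (uIcc 0 a) := by
      rw [uIcc_of_le ha.le, integrableOn_Icc_iff_integrableOn_Ioc]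
      exact (integrableOn_fpR j hν0 hν1).mono_set Ioc_subset_Ioi_self
    have hcw := intervalIntegral.continuousOn_primitive_interval_left hicc 0
      (by rw [uIcc_of_le ha.le]; exact ⟨le_rfl, ha.le⟩)
    have hmem : uIcc 0 a ∈ nhdsWithin (0:ℝ) (Ioi 0) :=
      mem_of_superset (Ioo_mem_nhdsGT_of_mem ⟨le_rfl, ha⟩)
        (by rw [uIcc_of_le ha.le]; exact Ioo_subset_Icc_self)
    have htend : Tendsto (fun ε => ∫ t in ε..a, fpR j t * t ^ (-((j:ℝ)+1+ν)))
        (nhdsWithin (0:ℝ) (Ioi 0)) (𝓝 (∫ t in (0:ℝ)..a, fpR j t * t ^ (-((j:ℝ)+1+ν)))) :=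
      hcw.mono_left (nhdsWithin_le_of_mem hmem)
    have hLtend : Tendsto (fun ε => A a + ∫ t in ε..a, fpR j t * t ^ (-((j:ℝ)+1+ν)))
        (nhdsWithin (0:ℝ) (Ioi 0)) (𝓝 (L a)) := tendsto_const_nhds.add htend
    apply hLtend.congr'
    filter_upwards [Ioo_mem_nhdsGT_of_mem (show (0:ℝ) ∈ Ico 0 a from ⟨le_rfl, ha⟩)] with ε hε
    have hdec := interval_decomp j hν0 hν1 hε.1 ha
    rw [hdec]
    have hd : ∑ k ∈ Finset.range (j+1),
        (-1:ℝ)^k / ((k.factorial : ℝ) * ((j:ℝ)+ν-k)) * ε ^ (-((j:ℝ)+ν-(k:ℝ))) =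
        -∑ k ∈ Finset.range (j+1),
          (-1:ℝ)^k / (k.factorial * ((k:ℝ) - ((j:ℝ)+ν))) * ε ^ ((k:ℝ) - ((j:ℝ)+ν)) := by
      rw [← Finset.sum_neg_distrib]
      apply Finset.sum_congr rfl
      intro k hk
      rw [show -((j:ℝ)+ν-(k:ℝ)) = (k:ℝ)-((j:ℝ)+ν) by ring,
        show (j:ℝ)+ν-(k:ℝ) = -((k:ℝ)-((j:ℝ)+ν)) by ring, mul_neg, div_neg, neg_mul]
    have hs2 : ∑ k ∈ Finset.range (j+1),
        (-1:ℝ)^k / (k.factorial * ((k:ℝ) - ((j:ℝ)+ν))) *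
          (a ^ ((k:ℝ) - ((j:ℝ)+ν)) - ε ^ ((k:ℝ) - ((j:ℝ)+ν))) =
        A a - ∑ k ∈ Finset.range (j+1),
          (-1:ℝ)^k / (k.factorial * ((k:ℝ) - ((j:ℝ)+ν))) * ε ^ ((k:ℝ) - ((j:ℝ)+ν)) := by
      rw [hA, ← Finset.sum_sub_distrib]
      apply Finset.sum_congr rfl
      intro k hk
      ring
    rw [hd, hs2]
    ring
  have hAlim : Tendsto A atTop (𝓝 0) := by
    rw [hA]
    have h0 : (0:ℝ) = ∑ k ∈ Finset.range (j+1), (0:ℝ) := by simp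
    rw [h0]
    apply tendsto_finset_sum
    intro k hk
    have hpos : (0:ℝ) < (j:ℝ) + ν - k := hene k hk
    have ht := (tendsto_rpow_neg_atTop hpos).const_mul
      ((-1:ℝ)^k / (k.factorial * ((k:ℝ) - ((j:ℝ)+ν))))
    rw [mul_zero] at ht
    have heq : (fun a : ℝ => (-1:ℝ)^k / (k.factorial * ((k:ℝ) - ((j:ℝ)+ν))) *
        a ^ (-((j:ℝ)+ν-(k:ℝ)))) = fun a : ℝ => (-1:ℝ)^k / (k.factorial * ((k:ℝ) - ((j:ℝ)+ν))) *
        a ^ ((k:ℝ) - ((j:ℝ)+ν)) := by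
      funext a
      rw [show -((j:ℝ)+ν-(k:ℝ)) = (k:ℝ)-((j:ℝ)+ν) by ring]
    rw [heq] at ht
    exact ht
  have hIlim : Tendsto (fun a => ∫ x in (0:ℝ)..a, fpR j x * x ^ (-((j:ℝ)+1+ν))) atTop
      (𝓝 (∫ x in Ioi (0:ℝ), fpR j x * x ^ (-((j:ℝ)+1+ν)))) :=
    intervalIntegral_tendsto_integral_Ioi 0 (integrableOn_fpR j hν0 hν1) tendsto_id
  have hLlim : Tendsto L atTop (𝓝 (0 + ∫ x in Ioi (0:ℝ), fpR j x * x ^ (-((j:ℝ)+1+ν)))) :=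
    hAlim.add hIlim
  rw [zero_add, fpR_integral_value hν0 hν1 j] at hLlim
  apply hLlim.congr'
  filter_upwards [Ioi_mem_atTop (0:ℝ)] with a ha
  exact (hGL a ha).symm
end
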